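/- arXiv:1507.05235 — 7 statements merged into one kernel-verified Lean document; each statement's English description precedes it below -/
import Mathlib

section
/- For every f : ℝ → ℝ, every n and every k with 0 ≤ k ≤ n, the k-th derivative of the n-th Bernstein polynomial satisfies B_n^{(k)}(f;x) = (n!/(n−k)!) · ∑_{j=0}^{n−k} Δ_{1/n}^k f(j/n) · C(n−k,j) · x^j (1−x)^{n−k−j}, where Δ_{1/n}^k denotes the k-fold iterate of the forward difference operator with step 1/n. -/
/-- The `n`-th Bernstein polynomial of `f`:
`B_n(f;x) = ∑_{j=0}^{n} f(j/n) C(n,j) x^j (1-x)^{n-j}`. -/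
noncomputable def bernsteinPoly (n : ℕ) (f : ℝ → ℝ) (x : ℝ) : ℝ :=
  ∑ j ∈ Finset.range (n + 1),
    f ((j : ℝ) / n) * (n.choose j : ℝ) * x ^ j * (1 - x) ^ (n - j)

/-- The forward difference operator with step `z`: `Δ_z f(y) = f(y+z) - f(y)`. -/
def fwdDiffOp (z : ℝ) (f : ℝ → ℝ) : ℝ → ℝ := fun y => f (y + z) - f y

lemma term_hasDerivAt (c : ℝ) (j e : ℕ) (x : ℝ) :
    HasDerivAt (fun x : ℝ => c * x ^ j * (1 - x) ^ e)
      (c * ((j : ℝ) * x ^ (j - 1)) * (1 - x) ^ e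
        - c * x ^ j * ((e : ℝ) * (1 - x) ^ (e - 1))) x := by
  have h1 : HasDerivAt (fun x : ℝ => c * x ^ j) (c * ((j : ℝ) * x ^ (j - 1))) x :=
    (hasDerivAt_pow j x).const_mul c
  have hinner : HasDerivAt (fun x : ℝ => 1 - x) (-1) x := by
    simpa using (hasDerivAt_const x (1 : ℝ)).fun_sub (hasDerivAt_id x)
  have h2 : HasDerivAt (fun x : ℝ => (1 - x) ^ e)
      (-( (e : ℝ) * (1 - x) ^ (e - 1))) x := by
    have := (hasDerivAt_pow e (1 - x)).comp x hinner
    simpa [mul_comm, Function.comp_def] using this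
  have := h1.fun_mul h2
  refine this.congr_deriv ?_
  ring

lemma S_hasDerivAt (n m : ℕ) (g : ℝ → ℝ) (x : ℝ) :
    HasDerivAt
      (fun x : ℝ => ∑ j ∈ Finset.range (m + 1 + 1),
        g ((j : ℝ) / n) * ((m + 1).choose j : ℝ) * x ^ j * (1 - x) ^ (m + 1 - j))
      (((m : ℝ) + 1) * ∑ j ∈ Finset.range (m + 1),
        fwdDiffOp (1 / n) g ((j : ℝ) / n) * (m.choose j : ℝ) * x ^ j * (1 - x) ^ (m - j)) x := by
  have H : HasDerivAt
      (fun x : ℝ => ∑ j ∈ Finset.range (m + 1 + 1),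
        g ((j : ℝ) / n) * ((m + 1).choose j : ℝ) * x ^ j * (1 - x) ^ (m + 1 - j))
      (∑ j ∈ Finset.range (m + 1 + 1),
        (g ((j : ℝ) / n) * ((m + 1).choose j : ℝ) * ((j : ℝ) * x ^ (j - 1)) * (1 - x) ^ (m + 1 - j)
          - g ((j : ℝ) / n) * ((m + 1).choose j : ℝ) * x ^ j
              * (((m + 1 - j : ℕ) : ℝ) * (1 - x) ^ (m + 1 - j - 1)))) x := by
    apply HasDerivAt.fun_sum
    intro j _
    exact term_hasDerivAt _ j (m + 1 - j) x
  convert H using 1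
  rw [eq_comm]
  rw [Finset.sum_sub_distrib]
  -- first sum: shift index; second sum: peel top term
  rw [Finset.sum_range_succ'
      (fun j => g ((j : ℝ) / n) * ((m + 1).choose j : ℝ) * ((j : ℝ) * x ^ (j - 1))
        * (1 - x) ^ (m + 1 - j)) (m + 1),
    Finset.sum_range_succ
      (fun j => g ((j : ℝ) / n) * ((m + 1).choose j : ℝ) * x ^ j
        * (((m + 1 - j : ℕ) : ℝ) * (1 - x) ^ (m + 1 - j - 1))) (m + 1)]
  rw [show (g (((0:ℕ):ℝ) / (n:ℝ)) * ((m + 1).choose 0 : ℝ) * (((0:ℕ) : ℝ) * x ^ (0 - 1)) * (1 - x) ^ (m + 1 - 0)) = 0 by simp]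
  rw [show (g (((m+1 : ℕ) : ℝ) / (n:ℝ)) * ((m + 1).choose (m+1) : ℝ) * x ^ (m+1)
        * (((m + 1 - (m+1) : ℕ) : ℝ) * (1 - x) ^ (m + 1 - (m+1) - 1))) = 0 by simp]
  rw [add_zero, add_zero, ← Finset.sum_sub_distrib, Finset.mul_sum]
  rw [eq_comm]
  apply Finset.sum_congr rfl
  intro j hj
  have hjm : j ≤ m := Nat.lt_succ_iff.mp (Finset.mem_range.mp hj)
  have hA : m + 1 - (j + 1) = m - j := by omega
  have hB : m + 1 - j - 1 = m - j := by omega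
  have hC : (j + 1) - 1 = j := by omega
  rw [hA, hB, hC]
  have h1 : ((j : ℝ) + 1) * (((m + 1).choose (j + 1) : ℕ) : ℝ)
      = ((m : ℝ) + 1) * ((m.choose j : ℕ) : ℝ) := by
    exact_mod_cast congrArg (Nat.cast (R := ℝ))
      (by rw [mul_comm]; exact (Nat.add_one_mul_choose_eq m j).symm :
        (j + 1) * (m + 1).choose (j + 1) = (m + 1) * m.choose j)
  have h2 : (((m + 1 - j : ℕ) : ℝ)) * (((m + 1).choose j : ℕ) : ℝ)
      = ((m : ℝ) + 1) * ((m.choose j : ℕ) : ℝ) := by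
    exact_mod_cast congrArg (Nat.cast (R := ℝ))
      (by rw [mul_comm, mul_comm ((m:ℕ)+1)]; exact (Nat.choose_mul_succ_eq m j).symm :
        (m + 1 - j) * (m + 1).choose j = (m + 1) * m.choose j)
  have hdiv : ((j : ℝ) + 1) / n = (j : ℝ) / n + 1 / n := by
    rw [add_div]
  simp only [fwdDiffOp, Nat.cast_add, Nat.cast_one]
  rw [← hdiv]
  linear_combination (g ((j:ℝ)/n) * x ^ j * (1 - x) ^ (m - j)) * h2
    - (g (((j:ℝ)+1)/n) * x ^ j * (1 - x) ^ (m - j)) * h1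

/-- For every `f : ℝ → ℝ` and `0 ≤ k ≤ n`,
`B_n^{(k)}(f;x) = (n!/(n-k)!) ∑_{j=0}^{n-k} Δ_{1/n}^k f(j/n) C(n-k,j) x^j (1-x)^{n-k-j}`,
where `Δ_{1/n}^k` is the `k`-fold iterate of the forward difference operator with step
`1/n`. -/
theorem bernstein_iteratedDeriv_eq (f : ℝ → ℝ) (n k : ℕ) (hk : k ≤ n) (x : ℝ) :
    iteratedDeriv k (bernsteinPoly n f) x =
      (n.factorial : ℝ) / ((n - k).factorial : ℝ) *
        ∑ j ∈ Finset.range (n - k + 1),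
          (fwdDiffOp (1 / n))^[k] f ((j : ℝ) / n) * ((n - k).choose j : ℝ) *
            x ^ j * (1 - x) ^ (n - k - j) := by
  induction k generalizing x with
  | zero =>
    simp [bernsteinPoly, div_self (Nat.cast_ne_zero.mpr n.factorial_ne_zero : (n.factorial : ℝ) ≠ 0)]
  | succ k ih =>
    have hk' : k ≤ n := by omega
    have hkn : k < n := by omega
    rw [iteratedDeriv_succ]
    have hfun : iteratedDeriv k (bernsteinPoly n f)
        = fun y => (n.factorial : ℝ) / ((n - k).factorial : ℝ) *
            ∑ j ∈ Finset.range (n - k + 1),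
              (fwdDiffOp (1 / n))^[k] f ((j : ℝ) / n) * ((n - k).choose j : ℝ) *
                y ^ j * (1 - y) ^ (n - k - j) := funext fun y => ih hk' y
    rw [hfun]
    set m := n - (k + 1) with hm
    have hnk : n - k = m + 1 := by omega
    rw [hnk]
    have hS := S_hasDerivAt n m ((fwdDiffOp (1 / n))^[k] f) x
    have hD := hS.const_mul ((n.factorial : ℝ) / ((m + 1).factorial : ℝ))
    rw [hD.deriv]
    have hiter : fwdDiffOp (1 / (n:ℝ)) ((fwdDiffOp (1 / (n:ℝ)))^[k] f)
        = (fwdDiffOp (1 / (n:ℝ)))^[k + 1] f := (Function.iterate_succ_apply' _ _ _).symm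
    have hfac : ((m + 1).factorial : ℝ) = ((m : ℝ) + 1) * (m.factorial : ℝ) := by
      rw [Nat.factorial_succ]; push_cast; ring
    have hsum : ∑ j ∈ Finset.range (m + 1),
        fwdDiffOp (1 / n) ((fwdDiffOp (1 / n))^[k] f) ((j : ℝ) / n) * (m.choose j : ℝ)
          * x ^ j * (1 - x) ^ (m - j)
        = ∑ j ∈ Finset.range (m + 1),
        (fwdDiffOp (1 / n))^[k + 1] f ((j : ℝ) / n) * (m.choose j : ℝ)
          * x ^ j * (1 - x) ^ (m - j) := by
      rw [hiter]
    rw [hsum, hfac]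
    have hm1 : ((m : ℝ) + 1) ≠ 0 := by positivity
    have hmf : (m.factorial : ℝ) ≠ 0 := Nat.cast_ne_zero.mpr m.factorial_ne_zero
    field_simp
end

section
/- Let d ≥ 1 and let f : ℝ^d → ℝ be continuous. Then the cube Bernstein polynomials B̃_n(f;x) converge to f(x) as n → ∞, uniformly on the cube K^d = [0,1]^d. -/
open Finset
private lemma wsum (n : ℕ) (x : ℝ) :
    ∑ j ∈ range (n + 1), (n.choose j : ℝ) * x ^ j * (1 - x) ^ (n - j) = 1 := by
  have h := bernsteinPolynomial.sum ℝ n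
  apply_fun (Polynomial.aeval x) at h
  simpa [bernsteinPolynomial, map_sum] using h

private lemma wvar (n : ℕ) (x : ℝ) :
    ∑ j ∈ range (n + 1),
      ((n : ℝ) * x - j) ^ 2 * ((n.choose j : ℝ) * x ^ j * (1 - x) ^ (n - j))
      = n * x * (1 - x) := by
  have h := bernsteinPolynomial.variance (R := ℝ) n
  apply_fun (Polynomial.aeval x) at h
  simpa [bernsteinPolynomial, map_sum, nsmul_eq_mul] using h

private lemma wvar' {n : ℕ} (hn : 0 < n) (x : ℝ) :
    ∑ j ∈ range (n + 1),
      ((j : ℝ) / n - x) ^ 2 * ((n.choose j : ℝ) * x ^ j * (1 - x) ^ (n - j))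
      = x * (1 - x) / n := by
  have hn' : (n : ℝ) ≠ 0 := Nat.cast_ne_zero.mpr hn.ne'
  have h : ∀ j : ℕ, ((j : ℝ) / n - x) ^ 2 = ((n : ℝ) * x - j) ^ 2 / (n : ℝ) ^ 2 := by
    intro j; field_simp; ring
  calc ∑ j ∈ range (n + 1),
      ((j : ℝ) / n - x) ^ 2 * ((n.choose j : ℝ) * x ^ j * (1 - x) ^ (n - j))
      = (∑ j ∈ range (n + 1),
          ((n : ℝ) * x - j) ^ 2 * ((n.choose j : ℝ) * x ^ j * (1 - x) ^ (n - j))) / (n : ℝ) ^ 2 := by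
        rw [Finset.sum_div]
        exact Finset.sum_congr rfl fun j _ => by rw [h j]; ring
    _ = x * (1 - x) / n := by rw [wvar]; field_simp

private lemma Wsum (d n : ℕ) (x : Fin d → ℝ) :
    ∑ j ∈ Fintype.piFinset (fun _ : Fin d => range (n + 1)),
      ∏ i, (n.choose (j i) : ℝ) * x i ^ (j i) * (1 - x i) ^ (n - j i) = 1 := by
  have h := Finset.prod_univ_sum (fun _ : Fin d => range (n + 1))
    (fun (i : Fin d) (m : ℕ) => (n.choose m : ℝ) * x i ^ m * (1 - x i) ^ (n - m))
  rw [← h]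
  simp [wsum]

private lemma Wvar (d : ℕ) {n : ℕ} (hn : 0 < n) (x : Fin d → ℝ) (i0 : Fin d) :
    ∑ j ∈ Fintype.piFinset (fun _ : Fin d => range (n + 1)),
      ((j i0 : ℝ) / n - x i0) ^ 2 *
        ∏ i, (n.choose (j i) : ℝ) * x i ^ (j i) * (1 - x i) ^ (n - j i)
      = x i0 * (1 - x i0) / n := by
  classical
  have key : ∀ j : Fin d → ℕ,
      ((j i0 : ℝ) / n - x i0) ^ 2 *
        ∏ i, (n.choose (j i) : ℝ) * x i ^ (j i) * (1 - x i) ^ (n - j i)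
      = ∏ i, (if i = i0 then ((j i : ℝ) / n - x i) ^ 2 else 1) *
          ((n.choose (j i) : ℝ) * x i ^ (j i) * (1 - x i) ^ (n - j i)) := by
    intro j
    conv_rhs => rw [Finset.prod_mul_distrib, Finset.prod_ite_eq' Finset.univ i0
      (fun i => ((j i : ℝ) / n - x i) ^ 2)]
    simp
  rw [Finset.sum_congr rfl fun j _ => key j]
  have h := Finset.prod_univ_sum (fun _ : Fin d => range (n + 1))
    (fun (i : Fin d) (m : ℕ) => (if i = i0 then ((m : ℝ) / n - x i) ^ 2 else 1) *
      ((n.choose m : ℝ) * x i ^ m * (1 - x i) ^ (n - m)))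
  rw [← h, Finset.prod_eq_single i0]
  · simpa using wvar' hn (x i0)
  · intro b _ hb
    simpa [hb] using wsum n (x b)
  · simp


/-- The `n`-th "cube" Bernstein polynomial of `f : ℝ^d → ℝ`:
`B̃_n(f;x) = ∑_{j_1,…,j_d=0}^{n} f(j_1/n,…,j_d/n) ∏_i C(n,j_i) x_i^{j_i} (1-x_i)^{n-j_i}`. -/
noncomputable def cubeBernstein (d n : ℕ) (f : (Fin d → ℝ) → ℝ) (x : Fin d → ℝ) : ℝ :=
  ∑ j ∈ Fintype.piFinset (fun _ : Fin d => Finset.range (n + 1)),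
    f (fun i => (j i : ℝ) / n) *
      ∏ i, (n.choose (j i) : ℝ) * x i ^ (j i) * (1 - x i) ^ (n - j i)

/-- If `d ≥ 1` and `f : ℝ^d → ℝ` is continuous, then the cube Bernstein polynomials
`B̃_n(f;·)` converge to `f` uniformly on the cube `K^d = [0,1]^d`. -/
theorem cubeBernstein_tendstoUniformlyOn (d : ℕ) (hd : 1 ≤ d)
    (f : (Fin d → ℝ) → ℝ) (hf : Continuous f) :
    TendstoUniformlyOn (fun n x => cubeBernstein d n f x) f Filter.atTop
      (Set.Icc (0 : Fin d → ℝ) 1) := by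
  classical
  set s : Set (Fin d → ℝ) := Set.Icc 0 1 with hs_def
  have hsc : IsCompact s := isCompact_Icc
  obtain ⟨M0, hM0⟩ := hsc.exists_bound_of_continuousOn hf.continuousOn
  set M := max M0 0 with hM_def
  have hM : ∀ y ∈ s, |f y| ≤ M := fun y hy =>
    le_trans (by simpa using hM0 y hy) (le_max_left _ _)
  have hMnn : 0 ≤ M := le_max_right _ _
  have hu := hsc.uniformContinuousOn_of_continuous hf.continuousOn
  rw [Metric.tendstoUniformlyOn_iff]
  intro ε hε
  obtain ⟨δ, hδ, hδ'⟩ := Metric.uniformContinuousOn_iff.mp hu (ε / 2) (by linarith)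
  set C : ℝ := 2 * M / δ ^ 2 with hC_def
  have hC0 : 0 ≤ C := by positivity
  have hlim : Filter.Tendsto (fun n : ℕ => C * d / 4 * (1 / n)) Filter.atTop (nhds 0) := by
    simpa using tendsto_one_div_atTop_nhds_zero_nat.const_mul (C * d / 4)
  have hev : ∀ᶠ n : ℕ in Filter.atTop, C * d / 4 * (1 / n) < ε / 2 :=
    hlim.eventually (gt_mem_nhds (by linarith))
  filter_upwards [hev, Filter.eventually_ge_atTop 1] with n hn1 hn2 x hx
  have hnpos : 0 < n := hn2
  have hnR : (0 : ℝ) < n := by exact_mod_cast hnpos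
  have hx' : ∀ i, 0 ≤ x i ∧ x i ≤ 1 := by
    rw [hs_def, Set.mem_Icc] at hx
    exact fun i => ⟨hx.1 i, hx.2 i⟩
  set J := Fintype.piFinset (fun _ : Fin d => range (n + 1)) with hJ_def
  set W : (Fin d → ℕ) → ℝ :=
    fun j => ∏ i, (n.choose (j i) : ℝ) * x i ^ (j i) * (1 - x i) ^ (n - j i) with hW_def
  have hW0 : ∀ j, 0 ≤ W j := fun j => Finset.prod_nonneg fun i _ => by
    have h1 := (hx' i).1
    have h2 := (hx' i).2
    have : (0:ℝ) ≤ 1 - x i := by linarith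
    positivity
  have hWsum1 : ∑ j ∈ J, W j = 1 := Wsum d n x
  have hmemJ : ∀ j ∈ J, ∀ i, (j i : ℕ) ≤ n := by
    intro j hj i
    have := (Fintype.mem_piFinset.mp hj) i
    simpa [Nat.lt_succ_iff] using this
  have hyJ : ∀ j ∈ J, (fun i => (j i : ℝ) / n) ∈ s := by
    intro j hj
    rw [hs_def, Set.mem_Icc]
    constructor
    · intro i; simp only [Pi.zero_apply]; positivity
    · intro i
      simp only [Pi.one_apply]
      rw [div_le_one hnR]
      exact_mod_cast hmemJ j hj i
  have hkey : ∀ j ∈ J,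
      |f (fun i => (j i : ℝ) / n) - f x| ≤ ε / 2 + C * ∑ i, ((j i : ℝ) / n - x i) ^ 2 := by
    intro j hj
    set y : Fin d → ℝ := fun i => (j i : ℝ) / n with hy_def
    have hsq0 : 0 ≤ ∑ i, (y i - x i) ^ 2 :=
      Finset.sum_nonneg fun i _ => sq_nonneg _
    by_cases hdist : dist y x < δ
    · have h := hδ' y (hyJ j hj) x hx hdist
      rw [Real.dist_eq] at h
      nlinarith
    · rw [not_lt] at hdist
      have hex : ∃ i, δ ≤ dist (y i) (x i) := by
        by_contra h
        push_neg at h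
        exact absurd ((dist_pi_lt_iff hδ).mpr h) (not_lt.mpr hdist)
      obtain ⟨i0, hi0⟩ := hex
      have hsq : δ ^ 2 ≤ (y i0 - x i0) ^ 2 := by
        rw [Real.dist_eq] at hi0
        nlinarith [sq_abs (y i0 - x i0)]
      have hsum : δ ^ 2 ≤ ∑ i, (y i - x i) ^ 2 :=
        hsq.trans (Finset.single_le_sum (fun i _ => sq_nonneg (y i - x i)) (Finset.mem_univ i0))
      have hfy := hM y (hyJ j hj)
      have hfx := hM x hx
      have habs : |f y - f x| ≤ 2 * M := by
        calc |f y - f x| ≤ |f y| + |f x| := abs_sub _ _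
          _ ≤ 2 * M := by linarith
      have hCeq : C * δ ^ 2 = 2 * M := by
        rw [hC_def]; field_simp
      have : 2 * M ≤ C * ∑ i, (y i - x i) ^ 2 := by
        rw [← hCeq]
        exact mul_le_mul_of_nonneg_left hsum hC0
      nlinarith
  have hBsub : cubeBernstein d n f x - f x
      = ∑ j ∈ J, (f (fun i => (j i : ℝ) / n) - f x) * W j := by
    have h1 : f x = ∑ j ∈ J, f x * W j := by rw [← Finset.mul_sum, hWsum1, mul_one]
    have h2 : cubeBernstein d n f x = ∑ j ∈ J, f (fun i => (j i : ℝ) / n) * W j := rfl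
    rw [h2]
    conv_lhs => rw [h1]
    rw [← Finset.sum_sub_distrib]
    exact Finset.sum_congr rfl fun j _ => by ring
  calc dist (f x) (cubeBernstein d n f x)
      = |cubeBernstein d n f x - f x| := by rw [Real.dist_eq, abs_sub_comm]
    _ = |∑ j ∈ J, (f (fun i => (j i : ℝ) / n) - f x) * W j| := by rw [hBsub]
    _ ≤ ∑ j ∈ J, |f (fun i => (j i : ℝ) / n) - f x| * W j := by
        refine (Finset.abs_sum_le_sum_abs _ _).trans (le_of_eq ?_)
        exact Finset.sum_congr rfl fun j _ => by rw [abs_mul, abs_of_nonneg (hW0 j)]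
    _ ≤ ∑ j ∈ J, (ε / 2 + C * ∑ i, ((j i : ℝ) / n - x i) ^ 2) * W j :=
        Finset.sum_le_sum fun j hj => mul_le_mul_of_nonneg_right (hkey j hj) (hW0 j)
    _ = ε / 2 + C * ∑ i, ∑ j ∈ J, ((j i : ℝ) / n - x i) ^ 2 * W j := by
        have hexp : ∀ j, (ε / 2 + C * ∑ i, ((j i : ℝ) / n - x i) ^ 2) * W j
            = ε / 2 * W j + C * ∑ i, ((j i : ℝ) / n - x i) ^ 2 * W j := by
          intro j
          rw [add_mul, mul_assoc, Finset.sum_mul]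
        rw [Finset.sum_congr rfl fun j _ => hexp j, Finset.sum_add_distrib,
          ← Finset.mul_sum, hWsum1, mul_one, ← Finset.mul_sum, Finset.sum_comm]
    _ = ε / 2 + C * ∑ i, x i * (1 - x i) / n := by
        rw [Finset.sum_congr rfl fun i _ => Wvar d hnpos x i]
    _ ≤ ε / 2 + C * (d * (1 / (4 * n))) := by
        have hbd : ∀ i : Fin d, x i * (1 - x i) / n ≤ 1 / (4 * n) := by
          intro i
          have h1 := (hx' i).1
          have h2 := (hx' i).2
          rw [div_le_div_iff₀ hnR (by positivity)]
          nlinarith [mul_nonneg (sq_nonneg (2 * x i - 1)) hnR.le]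
        have := Finset.sum_le_sum fun i (_ : i ∈ Finset.univ) => hbd i
        have hcard : ∑ _i : Fin d, (1 : ℝ) / (4 * n) = d * (1 / (4 * n)) := by
          rw [Finset.sum_const, Finset.card_univ, Fintype.card_fin, nsmul_eq_mul]
        nlinarith [mul_le_mul_of_nonneg_left (le_trans this (le_of_eq hcard)) hC0]
    _ < ε := by
        have heq : C * (↑d * (1 / (4 * ↑n))) = C * ↑d / 4 * (1 / ↑n) := by ring
        linarith [hn1, heq.le, heq.ge]
end

section
/- Let d ≥ 1, let k = (k_1,…,k_d) be a multi-index, and let f : ℝ^d → ℝ possess a continuous mixed partial derivative ∂^{|k|}f/∂x_1^{k_1}⋯∂x_d^{k_d}. Then the mixed partial derivatives ∂^{|k|}B̃_n(f;x)/∂x_1^{k_1}⋯∂x_d^{k_d} of the cube Bernstein polynomials converge to ∂^{|k|}f(x)/∂x_1^{k_1}⋯∂x_d^{k_d} as n → ∞, uniformly on the cube K^d = [0,1]^d. -/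
set_option maxHeartbeats 1600000
open Finset Function


/-- Partial derivative of `g : ℝ^d → ℝ` in the `i`-th coordinate. -/
noncomputable def partialDeriv' {d : ℕ} (i : Fin d) (g : (Fin d → ℝ) → ℝ) :
    (Fin d → ℝ) → ℝ :=
  fun x => deriv (fun t => g (Function.update x i t)) (x i)

/-- Mixed partial derivative `∂^{|k|}/∂x_1^{k_1}⋯∂x_d^{k_d}` of `g : ℝ^d → ℝ`
(the derivative in `x_1` is applied outermost). -/
noncomputable def mixedPartial {d : ℕ} (k : Fin d → ℕ) (g : (Fin d → ℝ) → ℝ) :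
    (Fin d → ℝ) → ℝ :=
  (List.finRange d).foldr (fun i h => (partialDeriv' i)^[k i] h) g

/-- `IsPartialAlong l f g` says that `g` is the iterated partial derivative of `f` taken
successively in the coordinates listed in `l` (head of the list is the outermost
differentiation), each single differentiation existing everywhere. -/
def IsPartialAlong {d : ℕ} : List (Fin d) → ((Fin d → ℝ) → ℝ) → ((Fin d → ℝ) → ℝ) → Prop
  | [], f, g => g = f
  | i :: l, f, g => ∃ h : (Fin d → ℝ) → ℝ, IsPartialAlong l f h ∧
      ∀ x, HasDerivAt (fun t => h (Function.update x i t)) (g x) (x i)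

/-- The list of coordinates `1^{k_1}, 2^{k_2}, …, d^{k_d}` encoding the multi-index `k`. -/
def multiIndexList {d : ℕ} (k : Fin d → ℕ) : List (Fin d) :=
  (List.finRange d).flatMap fun i => List.replicate (k i) i


noncomputable def bb (m j : ℕ) (t : ℝ) : ℝ := (m.choose j : ℝ) * t ^ j * (1 - t) ^ (m - j)

lemma bb_sum (m : ℕ) (t : ℝ) : ∑ j ∈ range (m + 1), bb m j t = 1 := by
  have h2 := congrArg (Polynomial.eval t) (bernsteinPolynomial.sum ℝ m)
  simpa [bernsteinPolynomial, bb, Polynomial.eval_finset_sum] using h2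

lemma hasDerivAt_bb_single (m j : ℕ) (hj : j ≤ m + 1) (t : ℝ) :
    HasDerivAt (fun t => bb (m + 1) j t)
      (((m+1).choose j : ℝ) * ((j : ℝ) * t ^ (j-1) * (1-t) ^ (m+1-j)
        - ((m+1-j : ℕ) : ℝ) * t ^ j * (1-t) ^ (m-j))) t := by
  have h1 : HasDerivAt (fun t : ℝ => t ^ j) ((j : ℝ) * t ^ (j-1)) t := by
    simpa using hasDerivAt_pow j t
  have h2 : HasDerivAt (fun t : ℝ => (1-t) ^ (m+1-j)) (-(((m+1-j : ℕ) : ℝ) * (1-t) ^ (m-j))) t := by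
    have h0 : HasDerivAt (fun t : ℝ => 1 - t) (-1) t := by
      simpa using (hasDerivAt_const t (1:ℝ)).fun_sub (hasDerivAt_id t)
    have := (hasDerivAt_pow (m+1-j) (1-t)).comp t h0
    have he : m + 1 - j - 1 = m - j := by omega
    rw [he] at this
    exact this.congr_deriv (by ring)
  have h3 := (h1.fun_mul h2).const_mul (((m+1).choose j : ℝ))
  have e : (fun t => bb (m + 1) j t) = fun y => ((m+1).choose j : ℝ) * (y ^ j * (1 - y) ^ (m + 1 - j)) := by
    funext u; simp only [bb]; ring
  rw [e]
  exact h3.congr_deriv (by ring)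
lemma hasDerivAt_bsum (m : ℕ) (c : ℕ → ℝ) (t : ℝ) :
    HasDerivAt (fun t => ∑ j ∈ range (m + 2), c j * bb (m + 1) j t)
      (((m : ℝ) + 1) * ∑ j ∈ range (m + 1), (c (j + 1) - c j) * bb m j t) t := by
  have H : HasDerivAt (fun t => ∑ j ∈ range (m + 2), c j * bb (m + 1) j t)
      (∑ j ∈ range (m + 2), c j * (((m+1).choose j : ℝ) * ((j : ℝ) * t ^ (j-1) * (1-t) ^ (m+1-j)
        - ((m+1-j : ℕ) : ℝ) * t ^ j * (1-t) ^ (m-j)))) t := by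
    apply HasDerivAt.fun_sum
    intro j hj
    exact (hasDerivAt_bb_single m j (by simp at hj; omega) t).const_mul (c j)
  convert H using 1
  have key : ∑ j ∈ range (m + 2), c j * (((m+1).choose j : ℝ) * ((j:ℝ) * t ^ (j-1) * (1-t) ^ (m+1-j)
        - ((m+1-j : ℕ) : ℝ) * t ^ j * (1-t) ^ (m-j)))
      = (∑ j ∈ range (m + 2), c j * (((m+1).choose j : ℝ) * (j:ℝ)) * (t ^ (j-1) * (1-t) ^ (m+1-j)))
        - ∑ j ∈ range (m + 2), c j * (((m+1).choose j : ℝ) * ((m+1-j : ℕ) : ℝ)) * (t ^ j * (1-t) ^ (m-j)) := by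
    rw [← Finset.sum_sub_distrib]
    apply Finset.sum_congr rfl
    intro j hj; ring
  rw [key]
  have hA : (∑ j ∈ range (m + 2), c j * (((m+1).choose j : ℝ) * (j:ℝ)) * (t ^ (j-1) * (1-t) ^ (m+1-j)))
      = ∑ j ∈ range (m + 1), ((m:ℝ)+1) * (c (j+1) * (m.choose j : ℝ) * (t ^ j * (1-t) ^ (m-j))) := by
    rw [Finset.sum_range_succ']
    simp only [Nat.cast_zero, mul_zero, zero_mul, add_zero]
    apply Finset.sum_congr rfl
    intro j hj
    simp only [Finset.mem_range] at hj
    have hc : ((m+1).choose (j+1) : ℝ) * ((j:ℝ)+1) = ((m:ℝ)+1) * (m.choose j : ℝ) := by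
      have h1 : ((m+1) * m.choose j : ℕ) = ((m+1).choose (j+1) * (j+1) : ℕ) := by
        simpa [Nat.succ_eq_add_one] using Nat.add_one_mul_choose_eq m j
      have := congrArg (Nat.cast (R := ℝ)) h1
      push_cast at this; linarith
    have he : m + 1 - (j + 1) = m - j := by omega
    rw [he]
    push_cast
    linear_combination (c (j+1) * (t ^ j * (1-t) ^ (m-j))) * hc
  have hB : (∑ j ∈ range (m + 2), c j * (((m+1).choose j : ℝ) * ((m+1-j : ℕ) : ℝ)) * (t ^ j * (1-t) ^ (m-j)))
      = ∑ j ∈ range (m + 1), ((m:ℝ)+1) * (c j * (m.choose j : ℝ) * (t ^ j * (1-t) ^ (m-j))) := by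
    rw [Finset.sum_range_succ]
    simp only [Nat.sub_self, Nat.cast_zero, mul_zero, zero_mul, add_zero]
    apply Finset.sum_congr rfl
    intro j hj
    simp only [Finset.mem_range] at hj
    have hc : ((m+1).choose j : ℝ) * ((m+1-j : ℕ) : ℝ) = ((m:ℝ)+1) * (m.choose j : ℝ) := by
      have h1 : ((m+1).choose j * (m+1-j) : ℕ) = ((m+1) * m.choose j : ℕ) := by
        rw [← Nat.choose_mul_succ_eq m j]; ring
      have := congrArg (Nat.cast (R := ℝ)) h1
      push_cast [Nat.cast_sub (by omega : j ≤ m + 1)] at this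
      push_cast [Nat.cast_sub (by omega : j ≤ m + 1)]
      linarith
    linear_combination (c j * (t ^ j * (1-t) ^ (m-j))) * hc
  rw [hA, hB, ← Finset.sum_sub_distrib, Finset.mul_sum]
  apply Finset.sum_congr rfl
  intro j hj
  simp only [bb]; ring




/-- Multivariate Bernstein-type sum with per-coordinate degrees. -/
noncomputable def TB {d : ℕ} (m : Fin d → ℕ) (c : (Fin d → ℕ) → ℝ) (x : Fin d → ℝ) : ℝ :=
  ∑ j ∈ Fintype.piFinset (fun i => range (m i + 1)), c j * ∏ i, bb (m i) (j i) (x i)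

/-- Forward difference in the `i`-th index. -/
def Didx {d : ℕ} (i : Fin d) (c : (Fin d → ℕ) → ℝ) : (Fin d → ℕ) → ℝ :=
  fun j => c (update j i (j i + 1)) - c j

lemma piFinset_split {d : ℕ} (i : Fin d) (M : Fin d → ℕ) (F : (Fin d → ℕ) → ℝ) :
    ∑ j ∈ Fintype.piFinset (fun i' => range (M i' + 1)), F j
      = ∑ a ∈ range (M i + 1), ∑ j ∈ Fintype.piFinset (fun i' => range (update M i 0 i' + 1)),
          F (update j i a) := by
  rw [← Finset.sum_product']
  apply Finset.sum_nbij' (i := fun j => (j i, update j i 0)) (j := fun p => update p.2 i p.1)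
  · intro j hj
    simp only [Fintype.mem_piFinset, Finset.mem_range] at hj
    simp only [Finset.mem_product, Fintype.mem_piFinset, Finset.mem_range]
    refine ⟨hj i, fun a => ?_⟩
    rcases eq_or_ne a i with rfl | h
    · simp
    · simp [update_of_ne h, hj a]
  · intro p hp
    simp only [Finset.mem_product, Fintype.mem_piFinset, Finset.mem_range] at hp
    simp only [Fintype.mem_piFinset, Finset.mem_range]
    intro a
    rcases eq_or_ne a i with rfl | h
    · simpa using hp.1
    · have := hp.2 a
      simpa [update_of_ne h] using this
  · intro j hj
    simp only []
    rw [update_idem]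
    exact update_eq_self _ _
  · intro p hp
    simp only [Finset.mem_product, Fintype.mem_piFinset, Finset.mem_range] at hp
    have h2 : update (update p.2 i p.1) i 0 = p.2 := by
      rw [update_idem]
      have : p.2 i = 0 := by have := hp.2 i; simp at this; omega
      rw [← this]; exact update_eq_self _ _
    simp [h2]
  · intro j hj
    rw [update_idem]
    rw [update_eq_self]

lemma prod_update_point {d : ℕ} (i : Fin d) (m : Fin d → ℕ) (j : Fin d → ℕ) (x : Fin d → ℝ)
    (t : ℝ) :
    ∏ i', bb (m i') (j i') (update x i t i')
      = bb (m i) (j i) t * ∏ i' ∈ univ.erase i, bb (m i') (j i') (x i') := by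
  rw [← Finset.mul_prod_erase univ _ (Finset.mem_univ i)]
  congr 1
  · simp
  · apply Finset.prod_congr rfl
    intro i' hi'
    rw [update_of_ne (Finset.ne_of_mem_erase hi')]

lemma partialDeriv_TB {d : ℕ} (i : Fin d) (m : Fin d → ℕ) (c : (Fin d → ℕ) → ℝ)
    (x : Fin d → ℝ) (hm : 1 ≤ m i) :
    partialDeriv' i (TB m c) x = (m i : ℝ) * TB (update m i (m i - 1)) (Didx i c) x := by
  obtain ⟨M, hM⟩ : ∃ M, m i = M + 1 := ⟨m i - 1, by omega⟩
  set R : (Fin d → ℕ) → ℝ := fun j => ∏ i' ∈ univ.erase i, bb (m i') (j i') (x i') with hR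
  set Cf : ℕ → ℝ := fun a => ∑ j ∈ Fintype.piFinset (fun i' => range (update m i 0 i' + 1)),
      c (update j i a) * R j with hCf
  have hfun : ∀ t, TB m c (update x i t) = ∑ a ∈ range (M + 2), Cf a * bb (M + 1) a t := by
    intro t
    rw [TB]
    rw [piFinset_split i (fun i' => m i') (fun j => c j * ∏ i', bb (m i') (j i') (update x i t i'))]
    rw [show M + 2 = m i + 1 by omega]
    apply Finset.sum_congr rfl
    intro a ha
    simp only [hCf]
    rw [Finset.sum_mul]
    apply Finset.sum_congr rfl
    intro j hj
    rw [prod_update_point]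
    have h1 : update j i a i = a := by simp
    have h2 : (∏ i' ∈ univ.erase i, bb (m i') (update j i a i') (x i')) = R j := by
      rw [hR]
      apply Finset.prod_congr rfl
      intro i' hi'
      rw [update_of_ne (Finset.ne_of_mem_erase hi')]
    rw [h1, h2, ← hM]
    ring
  have hD : partialDeriv' i (TB m c) x
      = ((M : ℝ) + 1) * ∑ a ∈ range (M + 1), (Cf (a+1) - Cf a) * bb M a (x i) := by
    rw [partialDeriv']
    have : (fun t => TB m c (update x i t)) = fun t => ∑ a ∈ range (M + 2), Cf a * bb (M + 1) a t :=
      funext hfun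
    rw [this]
    exact (hasDerivAt_bsum M Cf (x i)).deriv
  rw [hD]
  have hTB : TB (update m i (m i - 1)) (Didx i c) x
      = ∑ a ∈ range (M + 1), (Cf (a+1) - Cf a) * bb M a (x i) := by
    rw [TB]
    rw [piFinset_split i (fun i' => update m i (m i - 1) i')
      (fun j => Didx i c j * ∏ i', bb (update m i (m i - 1) i') (j i') (x i'))]
    have e0 : update m i (m i - 1) i = M := by simp [hM]
    rw [show update m i (m i - 1) i + 1 = M + 1 by omega]
    apply Finset.sum_congr rfl
    intro a ha
    have e1 : (fun i' => range (update (fun i' => update m i (m i - 1) i') i 0 i' + 1))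
        = fun i' => range (update m i 0 i' + 1) := by
      funext i'
      rcases eq_or_ne i' i with rfl | h
      · simp
      · simp [update_of_ne h]
    rw [show (fun i' => update m i (m i - 1) i') = update m i (m i - 1) from rfl] at e1 ⊢
    rw [e1]
    simp only [hCf]
    rw [← Finset.sum_sub_distrib, Finset.sum_mul]
    apply Finset.sum_congr rfl
    intro j hj
    have hprod : ∏ i', bb (update m i (m i - 1) i') (update j i a i') (x i')
        = bb M a (x i) * R j := by
      rw [← Finset.mul_prod_erase univ _ (Finset.mem_univ i)]
      congr 1
      · simp only [update_self]
        rw [show m i - 1 = M by omega]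
      · apply Finset.prod_congr rfl
        intro i' hi'
        have h := Finset.ne_of_mem_erase hi'
        rw [update_of_ne h, update_of_ne h]
    rw [hprod]
    have hDidx : Didx i c (update j i a) = c (update j i (a + 1)) - c (update j i a) := by
      simp only [Didx]
      congr 2
      rw [update_idem, update_self]
    rw [hDidx]
    simp only [hR]
    ring
  rw [hTB, hM]
  push_cast
  ring


/-- iterated partial derivatives along a list, head outermost -/
noncomputable def Dlist {d : ℕ} (l : List (Fin d)) (g : (Fin d → ℝ) → ℝ) : (Fin d → ℝ) → ℝ :=
  l.foldr (fun i h => partialDeriv' i h) g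

/-- iterated index differences along a list -/
def Dil {d : ℕ} (l : List (Fin d)) (c : (Fin d → ℕ) → ℝ) : (Fin d → ℕ) → ℝ :=
  l.foldr (fun i c => Didx i c) c

lemma foldr_replicate {α β : Type*} (P : β → α → α) (i : β) :
    ∀ (K : ℕ) (z : α), (List.replicate K i).foldr (fun i h => P i h) z = (P i)^[K] z := by
  intro K
  induction K with
  | zero => intro z; rfl
  | succ K ih =>
    intro z
    rw [List.replicate_succ, List.foldr_cons, ih, ← Function.iterate_succ_apply' (P i)]

lemma mixedPartial_eq_Dlist {d : ℕ} (k : Fin d → ℕ) (g : (Fin d → ℝ) → ℝ) :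
    mixedPartial k g = Dlist (multiIndexList k) g := by
  rw [mixedPartial, multiIndexList, Dlist]
  induction (List.finRange d) with
  | nil => rfl
  | cons i L ih =>
    rw [List.foldr_cons, List.flatMap_cons, List.foldr_append, ← ih, foldr_replicate]

lemma count_flatMap_replicate_of_not_mem {d : ℕ} (k : Fin d → ℕ) (i : Fin d) :
    ∀ (L : List (Fin d)), i ∉ L →
      ((L.flatMap fun i' => List.replicate (k i') i').count i) = 0 := by
  intro L
  induction L with
  | nil => intro _; rfl
  | cons a L ih =>
    intro hi
    rw [List.flatMap_cons, List.count_append, List.count_replicate]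
    have h1 : i ≠ a := fun h => hi (h ▸ List.mem_cons_self (a := a) (l := L))
    rw [ih (fun h => hi (List.mem_cons_of_mem a h))]
    simp [Ne.symm h1]

lemma count_multiIndexList {d : ℕ} (k : Fin d → ℕ) (i : Fin d) :
    (multiIndexList k).count i = k i := by
  rw [multiIndexList]
  have key : ∀ (L : List (Fin d)), L.Nodup → i ∈ L →
      ((L.flatMap fun i' => List.replicate (k i') i').count i) = k i := by
    intro L
    induction L with
    | nil => intro _ h; simp at h
    | cons a L ih =>
      intro hnd hmem
      rw [List.flatMap_cons, List.count_append, List.count_replicate]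
      rcases eq_or_ne i a with rfl | h
      · rw [count_flatMap_replicate_of_not_mem k i L (List.nodup_cons.mp hnd).1]
        simp
      · rw [ih (List.nodup_cons.mp hnd).2 ((List.mem_cons.mp hmem).resolve_left h)]
        simp [Ne.symm h]
  exact key _ (List.nodup_finRange d) (List.mem_finRange i)

lemma partialDeriv_const_mul {d : ℕ} (i : Fin d) (K : ℝ) (F : (Fin d → ℝ) → ℝ) (x : Fin d → ℝ) :
    partialDeriv' i (fun y => K * F y) x = K * partialDeriv' i F x := by
  rw [partialDeriv', partialDeriv']
  exact deriv_const_mul_field K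

lemma Dlist_TB {d : ℕ} : ∀ (l : List (Fin d)) (m : Fin d → ℕ) (c : (Fin d → ℕ) → ℝ),
    (∀ i, l.count i ≤ m i) →
    Dlist l (TB m c) = fun x =>
      (∏ i, ((m i).descFactorial (l.count i) : ℝ)) * TB (fun i => m i - l.count i) (Dil l c) x := by
  intro l
  induction l with
  | nil =>
    intro m c _
    simp only [Dlist, List.foldr_nil, List.count_nil, Nat.descFactorial_zero, Nat.cast_one,
      Finset.prod_const_one, one_mul, Nat.sub_zero, Dil]
  | cons i l ih =>
    intro m c hcount
    have hcnt_le : ∀ i', l.count i' ≤ m i' := by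
      intro i'
      refine le_trans ?_ (hcount i')
      rw [List.count_cons]
      omega
    have hmi : l.count i + 1 ≤ m i := by
      have := hcount i
      rwa [List.count_cons_self] at this
    have hstep : Dlist (i :: l) (TB m c) = partialDeriv' i (Dlist l (TB m c)) := rfl
    rw [hstep, ih m c hcnt_le]
    funext x
    rw [partialDeriv_const_mul]
    rw [partialDeriv_TB i _ _ x (by omega)]
    have hm2 : update (fun i' => m i' - l.count i') i (m i - l.count i - 1)
        = fun i' => m i' - (i :: l).count i' := by
      funext i'
      rcases eq_or_ne i' i with rfl | h
      · rw [update_self, List.count_cons_self]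
        omega
      · rw [update_of_ne h, List.count_cons_of_ne h.symm]
    have hDil : Didx i (Dil l c) = Dil (i :: l) c := rfl
    rw [hm2, hDil]
    have hcoef : (∏ i', ((m i').descFactorial ((i :: l).count i') : ℝ))
        = (∏ i', ((m i').descFactorial (l.count i') : ℝ)) * ((m i - l.count i : ℕ) : ℝ) := by
      rw [← Finset.mul_prod_erase univ _ (Finset.mem_univ i),
          ← Finset.mul_prod_erase univ (fun i' => ((m i').descFactorial (l.count i') : ℝ))
            (Finset.mem_univ i)]
      have h1 : ∏ i' ∈ univ.erase i, ((m i').descFactorial ((i :: l).count i') : ℝ)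
          = ∏ i' ∈ univ.erase i, ((m i').descFactorial (l.count i') : ℝ) := by
        apply Finset.prod_congr rfl
        intro i' hi'
        rw [List.count_cons_of_ne (Finset.ne_of_mem_erase hi').symm]
      rw [h1, List.count_cons_self, Nat.descFactorial_succ]
      push_cast
      ring
    rw [hcoef]
    push_cast
    ring


/-- spatial forward difference with step `s` in coordinate `i` -/
def Dsp {d : ℕ} (s : ℝ) (i : Fin d) (u : (Fin d → ℝ) → ℝ) : (Fin d → ℝ) → ℝ :=
  fun y => u (update y i (y i + s)) - u y

def DspList {d : ℕ} (s : ℝ) (l : List (Fin d)) (u : (Fin d → ℝ) → ℝ) : (Fin d → ℝ) → ℝ :=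
  l.foldr (fun i u => Dsp s i u) u

lemma foldr_replicate' {α β : Type*} (P : β → α → α) (i : β) :
    ∀ (K : ℕ) (z : α), (List.replicate K i).foldr (fun i h => P i h) z = (P i)^[K] z := by
  intro K
  induction K with
  | zero => intro z; rfl
  | succ K ih =>
    intro z
    rw [List.replicate_succ, List.foldr_cons, ih, ← Function.iterate_succ_apply' (P i)]

lemma Dsp_comm {d : ℕ} (s : ℝ) (i j : Fin d) (u : (Fin d → ℝ) → ℝ) :
    Dsp s i (Dsp s j u) = Dsp s j (Dsp s i u) := by
  rcases eq_or_ne i j with rfl | h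
  · rfl
  · funext y
    simp only [Dsp, update_of_ne h, update_of_ne h.symm]
    rw [update_comm h]
    ring

lemma DspList_comm {d : ℕ} (s : ℝ) (i : Fin d) (M : List (Fin d)) (u : (Fin d → ℝ) → ℝ) :
    DspList s M (Dsp s i u) = Dsp s i (DspList s M u) := by
  induction M with
  | nil => rfl
  | cons a M ih =>
    show Dsp s a (DspList s M (Dsp s i u)) = _
    rw [ih, Dsp_comm]
    rfl

lemma DspList_iter {d : ℕ} (s : ℝ) (i : Fin d) (M : List (Fin d)) (K : ℕ)
    (u : (Fin d → ℝ) → ℝ) :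
    DspList s M ((Dsp s i)^[K] u) = (Dsp s i)^[K] (DspList s M u) := by
  induction K with
  | zero => rfl
  | succ K ih =>
    rw [Function.iterate_succ_apply' , Function.iterate_succ_apply', ← ih, DspList_comm]

/-- the difference operator commutes with partial differentiation -/
lemma hasDerivAt_Dsp {d : ℕ} (s : ℝ) (i j : Fin d) (u u' : (Fin d → ℝ) → ℝ)
    (h : ∀ x, HasDerivAt (fun t => u (update x i t)) (u' x) (x i)) :
    ∀ x, HasDerivAt (fun t => Dsp s j u (update x i t)) (Dsp s j u' x) (x i) := by
  intro x
  rcases eq_or_ne j i with rfl | hji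
  · have hφ : ∀ τ : ℝ, HasDerivAt (fun t => u (update x j t)) (u' (update x j τ)) τ := by
      intro τ
      have := h (update x j τ)
      simpa [update_idem] using this
    have h1 : HasDerivAt (fun t : ℝ => u (update x j (t + s)))
        (u' (update x j (x j + s))) (x j) := by
      have hcomp := (hφ (x j + s)).comp (x j) ((hasDerivAt_id (x j)).add_const s)
      rw [mul_one] at hcomp
      exact hcomp
    have h2 := h1.sub (hφ (x j))
    have heq : (fun t : ℝ => Dsp s j u (update x j t))
        = fun t => u (update x j (t + s)) - u (update x j t) := by
      funext t
      simp only [Dsp, update_idem, update_self]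
    rw [heq]
    have : u' (update x j (x j + s)) - u' (update x j (x j)) = Dsp s j u' x := by
      simp only [Dsp, update_eq_self]
    rw [← this]
    exact h2
  · have heq : (fun t : ℝ => Dsp s j u (update x i t))
        = fun t => u (update (update x j (x j + s)) i t) - u (update x i t) := by
      funext t
      simp only [Dsp, update_of_ne hji]
      rw [update_comm hji.symm]
    rw [heq]
    have h1 := h (update x j (x j + s))
    rw [update_of_ne hji.symm] at h1
    have h2 := h1.sub (h x)
    exact h2

lemma hasDerivAt_DspIter {d : ℕ} (s : ℝ) (i : Fin d) (K : ℕ) (u u' : (Fin d → ℝ) → ℝ)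
    (h : ∀ x, HasDerivAt (fun t => u (update x i t)) (u' x) (x i)) :
    ∀ x, HasDerivAt (fun t => (Dsp s i)^[K] u (update x i t)) ((Dsp s i)^[K] u' x) (x i) := by
  induction K with
  | zero => exact h
  | succ K ih =>
    intro x
    rw [Function.iterate_succ_apply', Function.iterate_succ_apply']
    exact hasDerivAt_Dsp s i i _ _ ih x

lemma isPartialAlong_append_extract {d : ℕ} :
    ∀ (l₁ l₂ : List (Fin d)) (f g : (Fin d → ℝ) → ℝ),
    IsPartialAlong (l₁ ++ l₂) f g → ∃ h, IsPartialAlong l₂ f h ∧ IsPartialAlong l₁ h g := by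
  intro l₁
  induction l₁ with
  | nil =>
    intro l₂ f g hg
    exact ⟨g, hg, rfl⟩
  | cons a l₁ ih =>
    intro l₂ f g hg
    obtain ⟨h', hh'1, hh'2⟩ := hg
    obtain ⟨h, hh1, hh2⟩ := ih l₂ f h' hh'1
    exact ⟨h, hh1, ⟨h', hh2, hh'2⟩⟩

lemma isPartialAlong_extract_bottom {d : ℕ} (i : Fin d) :
    ∀ (l : List (Fin d)) (f g : (Fin d → ℝ) → ℝ),
    IsPartialAlong (l ++ [i]) f g →
    ∃ f₁, (∀ x, HasDerivAt (fun t => f (update x i t)) (f₁ x) (x i)) ∧ IsPartialAlong l f₁ g := by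
  intro l
  induction l with
  | nil =>
    intro f g hg
    obtain ⟨h, hh1, hh2⟩ := hg
    subst hh1
    exact ⟨g, hh2, rfl⟩
  | cons a l ih =>
    intro f g hg
    obtain ⟨h', hh'1, hh'2⟩ := hg
    obtain ⟨f₁, h1, h2⟩ := ih f h' hh'1
    exact ⟨f₁, h1, ⟨h', h2, hh'2⟩⟩

lemma isPartialAlong_Dsp {d : ℕ} (s : ℝ) (j : Fin d) :
    ∀ (l : List (Fin d)) (f h : (Fin d → ℝ) → ℝ), IsPartialAlong l f h →
      IsPartialAlong l (Dsp s j f) (Dsp s j h) := by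
  intro l
  induction l with
  | nil => intro f h hfh; exact congrArg (Dsp s j) hfh
  | cons a l ih =>
    intro f h hfh
    obtain ⟨h', hh'1, hh'2⟩ := hfh
    exact ⟨Dsp s j h', ih f h' hh'1, hasDerivAt_Dsp s a j h' h hh'2⟩

lemma isPartialAlong_DspList {d : ℕ} (s : ℝ) (M : List (Fin d))
    (l : List (Fin d)) (f h : (Fin d → ℝ) → ℝ) (hfh : IsPartialAlong l f h) :
    IsPartialAlong l (DspList s M f) (DspList s M h) := by
  induction M with
  | nil => exact hfh
  | cons a M ih => exact isPartialAlong_Dsp s a l _ _ ih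

/-- iterated one-coordinate mean value theorem -/
lemma repMVT {d : ℕ} (i : Fin d) (s : ℝ) (hs : 0 < s) :
    ∀ (K : ℕ) (f h : (Fin d → ℝ) → ℝ), IsPartialAlong (List.replicate K i) f h →
    ∀ x, ∃ τ, τ ∈ Set.Icc (x i) (x i + K * s) ∧
      (Dsp s i)^[K] f x = s ^ K * h (update x i τ) := by
  intro K
  induction K with
  | zero =>
    intro f h hfh x
    refine ⟨x i, by simp, ?_⟩
    have : h = f := hfh
    simp [this, update_eq_self]
  | succ K ih =>
    intro f h hfh x
    rw [List.replicate_succ'] at hfh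
    obtain ⟨f₁, hf₁, hchain⟩ := isPartialAlong_extract_bottom i (List.replicate K i) f h hfh
    set W := (Dsp s i)^[K] f with hW
    have hWd : ∀ y, HasDerivAt (fun t => W (update y i t)) ((Dsp s i)^[K] f₁ y) (y i) :=
      hasDerivAt_DspIter s i K f f₁ hf₁
    have hφ : ∀ τ : ℝ, HasDerivAt (fun t => W (update x i t))
        ((Dsp s i)^[K] f₁ (update x i τ)) τ := by
      intro τ
      have := hWd (update x i τ)
      simpa [update_idem] using this
    have hab : x i < x i + s := by linarith
    obtain ⟨c, hc, hceq⟩ := exists_hasDerivAt_eq_slope (fun t => W (update x i t))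
      (fun τ => (Dsp s i)^[K] f₁ (update x i τ)) hab
      (fun t _ => (hφ t).continuousAt.continuousWithinAt)
      (fun t _ => hφ t)
    obtain ⟨τ, hτmem, hτeq⟩ := ih f₁ h hchain (update x i c)
    refine ⟨τ, ?_, ?_⟩
    · simp only [update_self] at hτmem
      obtain ⟨h1, h2⟩ := hτmem
      obtain ⟨hc1, hc2⟩ := hc
      constructor
      · linarith
      · push_cast
        linarith
    · rw [Function.iterate_succ_apply']
      have hDW : Dsp s i W x = W (update x i (x i + s)) - W (update x i (x i)) := by
        simp only [Dsp, update_eq_self]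
      have hslope : W (update x i (x i + s)) - W (update x i (x i))
          = s * ((Dsp s i)^[K] f₁ (update x i c)) := by
        rw [hceq, show x i + s - x i = s by ring]
        field_simp
      rw [hDW, hslope, hτeq]
      rw [update_idem]
      push_cast
      ring

lemma mvt_main {d : ℕ} (k : Fin d → ℕ) (s : ℝ) (hs : 0 < s) :
    ∀ (L : List (Fin d)), L.Nodup → ∀ (f g : (Fin d → ℝ) → ℝ),
    IsPartialAlong (L.flatMap fun i => List.replicate (k i) i) f g →
    ∀ y, ∃ ξ : Fin d → ℝ,
      (∀ i, i ∈ L → ξ i ∈ Set.Icc (y i) (y i + k i * s)) ∧ (∀ i, i ∉ L → ξ i = y i) ∧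
      DspList s (L.flatMap fun i => List.replicate (k i) i) f y
        = s ^ ((L.map k).sum) * g ξ := by
  intro L
  induction L using List.reverseRecOn with
  | nil =>
    intro _ f g hfg y
    refine ⟨y, by simp, fun _ _ => rfl, ?_⟩
    have : g = f := hfg
    simp [DspList, this]
  | append_singleton L i ih =>
    intro hnd f g hfg y
    have hndL : L.Nodup := (List.nodup_append.mp hnd).1
    have hiL : i ∉ L := by
      have := List.nodup_append.mp hnd
      intro hmem
      exact this.2.2 i hmem i (List.mem_singleton_self i) rfl
    rw [List.flatMap_append] at hfg ⊢
    have hsingle : ([i].flatMap fun i' => List.replicate (k i') i') = List.replicate (k i) i := by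
      simp
    rw [hsingle] at hfg ⊢
    obtain ⟨h, hh1, hh2⟩ := isPartialAlong_append_extract _ _ f g hfg
    -- difference rearrangement
    have hd1 : DspList s ((L.flatMap fun i' => List.replicate (k i') i') ++ List.replicate (k i) i) f
        = (Dsp s i)^[k i] (DspList s (L.flatMap fun i' => List.replicate (k i') i') f) := by
      rw [DspList, List.foldr_append]
      rw [show (List.replicate (k i) i).foldr (fun i u => Dsp s i u) f = (Dsp s i)^[k i] f from
        foldr_replicate' _ _ _ _]
      exact DspList_iter s i _ (k i) f
    have hrep : IsPartialAlong (List.replicate (k i) i)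
        (DspList s (L.flatMap fun i' => List.replicate (k i') i') f)
        (DspList s (L.flatMap fun i' => List.replicate (k i') i') h) :=
      isPartialAlong_DspList s _ _ _ _ hh1
    obtain ⟨τ, hτmem, hτeq⟩ := repMVT i s hs (k i) _ _ hrep y
    obtain ⟨ξ, hξ1, hξ2, hξ3⟩ := ih hndL h g hh2 (update y i τ)
    refine ⟨ξ, ?_, ?_, ?_⟩
    · intro i' hi'
      rw [List.mem_append] at hi'
      rcases hi' with hi' | hi'
      · have := hξ1 i' hi'
        have hne : i' ≠ i := fun he => hiL (he ▸ hi')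
        rwa [update_of_ne hne] at this
      · rw [List.mem_singleton] at hi'
        subst hi'
        have := hξ2 i' hiL
        rw [update_self] at this
        rw [this]
        exact hτmem
    · intro i' hi'
      rw [List.mem_append, List.mem_singleton] at hi'
      push_neg at hi'
      have := hξ2 i' hi'.1
      rwa [update_of_ne hi'.2] at this
    · rw [hd1, hτeq, hξ3]
      rw [List.map_append, List.sum_append]
      simp only [List.map_cons, List.map_nil, List.sum_cons, List.sum_nil, add_zero]
      rw [pow_add]
      ring



lemma bb_eval (m a : ℕ) (t : ℝ) : bb m a t = (bernsteinPolynomial ℝ m a).eval t := by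
  simp [bb, bernsteinPolynomial]

lemma bb_nonneg (m a : ℕ) {t : ℝ} (h0 : 0 ≤ t) (h1 : t ≤ 1) : 0 ≤ bb m a t := by
  apply mul_nonneg
  apply mul_nonneg
  · positivity
  · positivity
  · have : (0:ℝ) ≤ 1 - t := by linarith
    positivity

lemma bb_variance (m : ℕ) (hm : 0 < m) (t : ℝ) :
    ∑ a ∈ range (m + 1), ((a : ℝ)/m - t)^2 * bb m a t = t * (1 - t) / m := by
  have h := congrArg (Polynomial.eval t) (bernsteinPolynomial.variance ℝ m)
  simp only [Polynomial.eval_finset_sum, Polynomial.eval_mul, Polynomial.eval_pow,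
    Polynomial.eval_sub, Polynomial.eval_smul, Polynomial.eval_natCast, Polynomial.eval_X,
    Polynomial.eval_one, smul_eq_mul, nsmul_eq_mul] at h
  have hm' : (m:ℝ) ≠ 0 := Nat.cast_ne_zero.mpr hm.ne'
  have key : ∀ a ∈ range (m + 1), ((a : ℝ)/m - t)^2 * bb m a t
      = ((m:ℝ) * t - a)^2 * (bernsteinPolynomial ℝ m a).eval t / m^2 := by
    intro a _
    rw [← bb_eval]
    have : ((a : ℝ)/m - t)^2 = ((m:ℝ) * t - a)^2 / m^2 := by
      field_simp
      ring
    rw [this]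
    ring
  rw [Finset.sum_congr rfl key, ← Finset.sum_div, h]
  field_simp

lemma TB_factor {d : ℕ} (m : Fin d → ℕ) (x : Fin d → ℝ) (i : Fin d) (G : ℕ → ℝ)
    (hsum1 : ∀ i', ∑ a ∈ range (m i' + 1), bb (m i') a (x i') = 1) :
    ∑ j ∈ Fintype.piFinset (fun i' => range (m i' + 1)),
        G (j i) * ∏ i', bb (m i') (j i') (x i')
      = ∑ a ∈ range (m i + 1), G a * bb (m i) a (x i) := by
  classical
  have key := Finset.prod_univ_sum (fun i' => range (m i' + 1))
    (fun i' a => (if i' = i then G a else 1) * bb (m i') a (x i'))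
  have lhs_eq : ∏ i', ∑ a ∈ range (m i' + 1), (if i' = i then G a else 1) * bb (m i') a (x i')
      = ∑ a ∈ range (m i + 1), G a * bb (m i) a (x i) := by
    rw [Finset.prod_eq_single i]
    · simp
    · intro b _ hb
      simp only [if_neg hb, one_mul]
      exact hsum1 b
    · intro h; exact absurd (Finset.mem_univ i) h
  have rhs_eq : ∀ j : Fin d → ℕ,
      (∏ i', (if i' = i then G (j i') else 1) * bb (m i') (j i') (x i'))
        = G (j i) * ∏ i', bb (m i') (j i') (x i') := by
    intro j
    rw [Finset.prod_mul_distrib]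
    congr 1
    rw [Finset.prod_ite_eq' univ i (fun i' => G (j i'))]
    simp
  rw [← lhs_eq, key]
  apply Finset.sum_congr rfl
  intro j _
  exact (rhs_eq j).symm


lemma cubeBernstein_eq {d : ℕ} (n : ℕ) (f : (Fin d → ℝ) → ℝ) :
    cubeBernstein d n f = TB (fun _ => n) (fun j => f (fun i => (j i : ℝ) / n)) := rfl

lemma Dil_eq_DspList {d : ℕ} (n : ℕ) (f : (Fin d → ℝ) → ℝ) :
    ∀ (l : List (Fin d)) (j : Fin d → ℕ),
      Dil l (fun j' => f (fun i => (j' i : ℝ) / n)) j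
        = DspList (1/(n:ℝ)) l f (fun i => (j i : ℝ) / n) := by
  intro l
  induction l with
  | nil => intro j; rfl
  | cons i l ih =>
    intro j
    have h1 : Dil (i :: l) (fun j' => f (fun i => (j' i : ℝ) / n)) j
        = Dil l (fun j' => f (fun i => (j' i : ℝ) / n)) (Function.update j i (j i + 1))
          - Dil l (fun j' => f (fun i => (j' i : ℝ) / n)) j := rfl
    rw [h1, ih, ih]
    have h2 : (fun i' => ((Function.update j i (j i + 1)) i' : ℝ) / n)
        = Function.update (fun i' => (j i' : ℝ) / n) i ((j i : ℝ) / n + 1 / n) := by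
      funext i'
      rcases eq_or_ne i' i with rfl | h
      · simp [add_div]
      · simp [Function.update_of_ne h]
    rw [h2]
    rfl

lemma cubeBernstein_representation {d : ℕ} (k : Fin d → ℕ) (f g : (Fin d → ℝ) → ℝ)
    (hg : IsPartialAlong (multiIndexList k) f g) (n : ℕ) (hn0 : 0 < n) (hn : ∀ i, k i ≤ n) :
    ∃ ξ : (Fin d → ℕ) → (Fin d → ℝ),
      (∀ j i, (j i : ℝ)/n ≤ ξ j i ∧ ξ j i ≤ (j i : ℝ)/n + k i * (1/n)) ∧
      ∀ x, mixedPartial k (cubeBernstein d n f) x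
        = ((∏ i, (n.descFactorial (k i) : ℝ)) * (1/(n:ℝ))^(∑ i, k i)) *
          ∑ j ∈ Fintype.piFinset (fun i => Finset.range ((n - k i) + 1)),
            g (ξ j) * ∏ i, bb (n - k i) (j i) (x i) := by
  have hs : (0:ℝ) < 1/n := by positivity
  have hg' : IsPartialAlong ((List.finRange d).flatMap fun i => List.replicate (k i) i) f g := hg
  have hmvt := fun j : (Fin d → ℕ) =>
    mvt_main k (1/(n:ℝ)) hs (List.finRange d) (List.nodup_finRange d) f g hg'
      (fun i => (j i : ℝ)/n)
  choose ξ hξmem hξ0 hξval using hmvt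
  refine ⟨ξ, ?_, ?_⟩
  · intro j i
    exact hξmem j i (List.mem_finRange i)
  · intro x
    have hcount : ∀ i, (multiIndexList k).count i ≤ (fun _ => n : Fin d → ℕ) i := by
      intro i; rw [count_multiIndexList]; exact hn i
    rw [mixedPartial_eq_Dlist, cubeBernstein_eq, Dlist_TB _ _ _ hcount]
    simp only [count_multiIndexList]
    have hTB : TB (fun i => n - k i) (Dil (multiIndexList k) (fun j => f (fun i => (j i : ℝ) / n))) x
        = (1/(n:ℝ))^(∑ i, k i) *
          ∑ j ∈ Fintype.piFinset (fun i => Finset.range ((n - k i) + 1)),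
            g (ξ j) * ∏ i, bb (n - k i) (j i) (x i) := by
      rw [TB, Finset.mul_sum]
      apply Finset.sum_congr rfl
      intro j _
      rw [Dil_eq_DspList]
      have hv := hξval j
      have : DspList (1/(n:ℝ)) (multiIndexList k) f (fun i => (j i : ℝ)/n)
          = (1/(n:ℝ))^(∑ i, k i) * g (ξ j) := hv
      rw [this]
      ring
    rw [hTB]
    ring

/-- If `d ≥ 1`, `k` is a multi-index and `f : ℝ^d → ℝ` possesses a continuous mixed
partial derivative `g = ∂^{|k|}f/∂x_1^{k_1}⋯∂x_d^{k_d}`, then the corresponding mixed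
partial derivatives of the cube Bernstein polynomials `B̃_n(f;·)` converge to `g`
uniformly on the cube `K^d = [0,1]^d`. -/
theorem cubeBernstein_mixedPartial_tendstoUniformlyOn (d : ℕ) (hd : 1 ≤ d)
    (k : Fin d → ℕ) (f g : (Fin d → ℝ) → ℝ)
    (hg : IsPartialAlong (multiIndexList k) f g) (hgc : Continuous g) :
    TendstoUniformlyOn (fun n x => mixedPartial k (cubeBernstein d n f) x) g
      Filter.atTop (Set.Icc (0 : Fin d → ℝ) 1) := by
  classical
  have hcpt : IsCompact (Set.Icc (0 : Fin d → ℝ) 1) := isCompact_Icc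
  obtain ⟨C, hC⟩ := hcpt.exists_bound_of_continuousOn hgc.continuousOn
  set M : ℝ := max C 1 with hMdef
  have hM1 : (1:ℝ) ≤ M := le_max_right _ _
  have hM0 : (0:ℝ) < M := lt_of_lt_of_le one_pos hM1
  have hMb : ∀ y ∈ Set.Icc (0 : Fin d → ℝ) 1, |g y| ≤ M := by
    intro y hy
    calc |g y| = ‖g y‖ := (Real.norm_eq_abs _).symm
    _ ≤ C := hC y hy
    _ ≤ M := le_max_left _ _
  rw [Metric.tendstoUniformlyOn_iff]
  intro ε hε
  have huc := hcpt.uniformContinuousOn_of_continuous hgc.continuousOn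
  rw [Metric.uniformContinuousOn_iff] at huc
  obtain ⟨δ, hδ0, hδ⟩ := huc (ε/4) (by linarith)
  set κ : ℕ := ∑ i, k i with hκdef
  have hkκ : ∀ i, k i ≤ κ := fun i =>
    Finset.single_le_sum (f := k) (fun _ _ => Nat.zero_le _) (Finset.mem_univ i)
  clear_value κ
  set Cst : ℝ := 2*M/(δ/2)^2 with hCstdef
  have hCst0 : 0 < Cst := by positivity
  obtain ⟨N, hN⟩ := exists_nat_gt
    (max (max ((4*(κ:ℝ))/δ) (Cst * d / ε + κ)) ((4*(κ:ℝ)^2*M)/ε))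
  rw [Filter.eventually_atTop]
  refine ⟨N + κ + 1, ?_⟩
  intro n hn
  have hnκ : κ + 1 ≤ n := by omega
  have hn0 : 0 < n := by omega
  have hnR0 : (0:ℝ) < n := by exact_mod_cast hn0
  have hnN : (N:ℝ) ≤ (n:ℝ) := by exact_mod_cast (by omega : N ≤ n)
  have hκn : (κ:ℝ) < (n:ℝ) := by exact_mod_cast (by omega : κ < n)
  have hb1 : 2*(κ:ℝ)/n ≤ δ/2 := by
    have h1 : (4*(κ:ℝ))/δ < n :=
      lt_of_le_of_lt (le_trans (le_max_left _ _) (le_max_left _ _)) (lt_of_lt_of_le hN hnN)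
    rw [div_lt_iff₀ hδ0] at h1
    rw [div_le_iff₀ hnR0]
    nlinarith
  have hb2 : Cst * d / ε < (n:ℝ) - κ := by
    have h1 : Cst * d / ε + κ < n :=
      lt_of_le_of_lt (le_trans (le_max_right _ _) (le_max_left _ _)) (lt_of_lt_of_le hN hnN)
    linarith
  have hb3 : (4*(κ:ℝ)^2*M)/ε < n :=
    lt_of_le_of_lt (le_max_right _ _) (lt_of_lt_of_le hN hnN)
  obtain ⟨ξ, hξb, hξval⟩ := cubeBernstein_representation k f g hg n hn0
    (fun i => by have := hkκ i; omega)
  intro x hx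
  have hx' : ∀ i, 0 ≤ x i ∧ x i ≤ 1 := by
    intro i
    rw [Set.mem_Icc] at hx
    exact ⟨hx.1 i, hx.2 i⟩
  have hmv1 : ∀ i, 1 ≤ n - k i := fun i => by have := hkκ i; omega
  have hmvcast : ∀ i, ((n - k i : ℕ) : ℝ) = (n:ℝ) - (k i : ℝ) := by
    intro i
    rw [Nat.cast_sub (by have := hkκ i; omega)]
  have hmvR : ∀ i, ((n:ℝ) - κ) ≤ ((n - k i : ℕ) : ℝ) := by
    intro i
    rw [hmvcast i]
    have : (k i : ℝ) ≤ κ := by exact_mod_cast hkκ i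
    linarith
  have hmvpos : ∀ i, (0:ℝ) < ((n - k i : ℕ) : ℝ) := by
    intro i
    have := hmvR i
    linarith
  have hsum1 : ∀ i', ∑ a ∈ range ((n - k i') + 1), bb (n - k i') a (x i') = 1 :=
    fun i' => bb_sum _ _
  set B : (Fin d → ℕ) → ℝ := fun j => ∏ i, bb (n - k i) (j i) (x i) with hB
  set JS := Fintype.piFinset (fun i => Finset.range ((n - k i) + 1)) with hJS
  set P : ℝ := ∑ j ∈ JS, g (ξ j) * B j with hP
  set α : ℝ := (∏ i, (n.descFactorial (k i) : ℝ)) * (1/(n:ℝ))^κ with hα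
  have hform : mixedPartial k (cubeBernstein d n f) x = α * P := by
    have h0 := hξval x
    rw [← hκdef] at h0
    exact h0
  have hBnn : ∀ j, 0 ≤ B j := by
    intro j
    apply Finset.prod_nonneg
    intro i _
    exact bb_nonneg _ _ (hx' i).1 (hx' i).2
  have hB1 : ∑ j ∈ JS, B j = 1 := by
    have h1 := TB_factor (fun i => n - k i) x ⟨0, hd⟩ (fun _ => (1:ℝ)) hsum1
    simp only [one_mul] at h1
    exact h1.trans (hsum1 ⟨0, hd⟩)
  -- α bounds
  have hαfac : α = ∏ i, ((n.descFactorial (k i) : ℝ) * (1/(n:ℝ))^(k i)) := by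
    rw [hα, hκdef, Finset.prod_mul_distrib, Finset.prod_pow_eq_pow_sum]
  have hα0 : 0 ≤ α := by
    rw [hαfac]
    apply Finset.prod_nonneg
    intro i _
    positivity
  have hα1 : α ≤ 1 := by
    rw [hαfac]
    apply Finset.prod_le_one
    · intro i _; positivity
    · intro i _
      have hd1 : (n.descFactorial (k i) : ℝ) ≤ (n:ℝ)^(k i) := by
        exact_mod_cast Nat.descFactorial_le_pow n (k i)
      have hpow : (0:ℝ) < (n:ℝ)^(k i) := by positivity
      rw [one_div, inv_pow]
      rw [mul_inv_le_iff₀ hpow]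
      simpa using hd1
  have hαlow : 1 - (κ:ℝ)^2/n ≤ α := by
    have hstep : ∀ i, (((n - κ:ℕ):ℝ)/(n:ℝ))^(k i)
        ≤ (n.descFactorial (k i) : ℝ) * (1/(n:ℝ))^(k i) := by
      intro i
      have h1 : ((n - κ:ℕ))^(k i) ≤ n.descFactorial (k i) := by
        refine le_trans (Nat.pow_le_pow_left ?_ _) (Nat.pow_sub_le_descFactorial n (k i))
        have := hkκ i; omega
      have h2 : (((n-κ:ℕ):ℝ))^(k i) ≤ (n.descFactorial (k i):ℝ) := by exact_mod_cast h1
      have h3 : (((n-κ:ℕ):ℝ)/(n:ℝ))^(k i) = ((n-κ:ℕ):ℝ)^(k i) * (1/(n:ℝ))^(k i) := by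
        rw [div_pow, one_div, inv_pow, div_eq_mul_inv]
      rw [h3]
      apply mul_le_mul_of_nonneg_right h2 (by positivity)
    have hprod : (((n-κ:ℕ):ℝ)/(n:ℝ))^κ ≤ α := by
      rw [hαfac]
      have hpp := Finset.prod_pow_eq_pow_sum Finset.univ k (((n-κ:ℕ):ℝ)/(n:ℝ))
      rw [← hκdef] at hpp
      rw [← hpp]
      apply Finset.prod_le_prod
      · intro i _; positivity
      · intro i _; exact hstep i
    have hcast : ((n-κ:ℕ):ℝ) = (n:ℝ) - κ := by
      rw [Nat.cast_sub (by omega)]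
    have hbern : 1 + (κ:ℝ) * (-((κ:ℝ)/n)) ≤ (1 + (-((κ:ℝ)/n)))^κ := by
      apply one_add_mul_le_pow
      have h4 : (κ:ℝ)/n ≤ 1 := by
        rw [div_le_one hnR0]
        linarith
      linarith
    have hfr : ((n:ℝ) - κ)/(n:ℝ) = 1 + (-((κ:ℝ)/n)) := by
      field_simp <;> ring
    calc 1 - (κ:ℝ)^2/n = 1 + (κ:ℝ) * (-((κ:ℝ)/n)) := by ring
    _ ≤ (1 + (-((κ:ℝ)/n)))^κ := hbern
    _ = (((n-κ:ℕ):ℝ)/(n:ℝ))^κ := by rw [hcast, hfr]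
    _ ≤ α := hprod
  -- pointwise estimate
  have hξIcc : ∀ j ∈ JS, ξ j ∈ Set.Icc (0:Fin d → ℝ) 1 := by
    intro j hj
    rw [Set.mem_Icc]
    constructor
    · intro i
      have h1 := (hξb j i).1
      have h2 : (0:ℝ) ≤ (j i : ℝ)/n := by positivity
      show (0:ℝ) ≤ ξ j i
      linarith
    · intro i
      have h2 := (hξb j i).2
      have hji : j i ≤ n - k i := by
        have := Fintype.mem_piFinset.mp hj i
        rw [Finset.mem_range] at this
        omega
      have h3 : (j i : ℝ) + (k i : ℝ) ≤ (n:ℝ) := by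
        have : j i + k i ≤ n := by have := hkκ i; omega
        exact_mod_cast this
      show ξ j i ≤ 1
      calc ξ j i ≤ (j i : ℝ)/n + (k i : ℝ) * (1/n) := h2
      _ = ((j i : ℝ) + (k i : ℝ))/n := by ring
      _ ≤ 1 := by rw [div_le_one hnR0]; exact h3
  have hptw : ∀ j ∈ JS, |g (ξ j) - g x|
      ≤ ε/4 + Cst * ∑ i, ((j i:ℝ)/((n - k i : ℕ):ℝ) - x i)^2 := by
    intro j hj
    have hξIccj := hξIcc j hj
    by_cases hcase : dist (ξ j) x < δ
    · have h1 := hδ (ξ j) hξIccj x hx hcase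
      rw [Real.dist_eq] at h1
      have h2 : (0:ℝ) ≤ Cst * ∑ i, ((j i:ℝ)/((n - k i : ℕ):ℝ) - x i)^2 := by positivity
      linarith
    · push_neg at hcase
      obtain ⟨i₀, hi₀⟩ : ∃ i₀, δ ≤ dist (ξ j i₀) (x i₀) := by
        by_contra hcon
        push_neg at hcon
        exact absurd ((dist_pi_lt_iff hδ0).mpr hcon) (not_lt.mpr hcase)
      have hji : j i₀ ≤ n - k i₀ := by
        have := Fintype.mem_piFinset.mp hj i₀
        rw [Finset.mem_range] at this
        omega
      have hjiR : (j i₀ : ℝ) ≤ ((n - k i₀ : ℕ):ℝ) := by exact_mod_cast hji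
      have hkκR : (k i₀ : ℝ) ≤ (κ:ℝ) := by exact_mod_cast hkκ i₀
      have hnode : |(j i₀:ℝ)/((n - k i₀:ℕ):ℝ) - ξ j i₀| ≤ 2*(κ:ℝ)/n := by
        have hb := hξb j i₀
        have hmp := hmvpos i₀
        have t1 : |(j i₀:ℝ)/((n - k i₀:ℕ):ℝ) - (j i₀:ℝ)/n| ≤ (κ:ℝ)/n := by
          have e1 : (j i₀:ℝ)/((n - k i₀:ℕ):ℝ) - (j i₀:ℝ)/n
              = (j i₀:ℝ) * ((n:ℝ) - ((n - k i₀:ℕ):ℝ))/(((n - k i₀:ℕ):ℝ) * n) := by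
            field_simp
          have e2 : (n:ℝ) - ((n - k i₀:ℕ):ℝ) = (k i₀ : ℝ) := by
            rw [hmvcast i₀]; ring
          have hnn1 : (0:ℝ) ≤ (j i₀:ℝ) * (k i₀:ℝ)/(((n - k i₀:ℕ):ℝ) * n) := by positivity
          rw [e1, e2, abs_of_nonneg hnn1,
            div_le_div_iff₀ (by positivity : (0:ℝ) < ((n - k i₀:ℕ):ℝ) * (n:ℝ)) hnR0]
          have h9 := hmvpos i₀
          nlinarith [mul_le_mul hjiR hkκR (by positivity : (0:ℝ) ≤ (k i₀:ℝ)) (by positivity : (0:ℝ) ≤ ((n - k i₀:ℕ):ℝ))]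
        have t2 : |(j i₀:ℝ)/n - ξ j i₀| ≤ (κ:ℝ)/n := by
          have hnn2 : (0:ℝ) ≤ ξ j i₀ - (j i₀:ℝ)/n := by linarith [hb.1]
          rw [abs_sub_comm, abs_of_nonneg hnn2]
          have := hb.2
          have h5 : (k i₀ : ℝ) * (1/n) ≤ (κ:ℝ)/n := by
            rw [show (k i₀ : ℝ) * (1/n) = (k i₀:ℝ)/n by ring]
            gcongr
          linarith
        calc |(j i₀:ℝ)/((n - k i₀:ℕ):ℝ) - ξ j i₀|
            ≤ |(j i₀:ℝ)/((n - k i₀:ℕ):ℝ) - (j i₀:ℝ)/n| + |(j i₀:ℝ)/n - ξ j i₀| :=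
              abs_sub_le _ _ _
        _ ≤ (κ:ℝ)/n + (κ:ℝ)/n := add_le_add t1 t2
        _ = 2*(κ:ℝ)/n := by ring
      have hfar : δ/2 ≤ |(j i₀:ℝ)/((n - k i₀:ℕ):ℝ) - x i₀| := by
        rw [Real.dist_eq] at hi₀
        have habs : |ξ j i₀ - x i₀|
            ≤ |ξ j i₀ - (j i₀:ℝ)/((n - k i₀:ℕ):ℝ)| + |(j i₀:ℝ)/((n - k i₀:ℕ):ℝ) - x i₀| :=
          abs_sub_le _ _ _
        rw [abs_sub_comm] at hnode
        linarith
      have hsq : (δ/2)^2 ≤ ((j i₀:ℝ)/((n - k i₀:ℕ):ℝ) - x i₀)^2 := by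
        have h6 := sq_abs ((j i₀:ℝ)/((n - k i₀:ℕ):ℝ) - x i₀)
        nlinarith [abs_nonneg ((j i₀:ℝ)/((n - k i₀:ℕ):ℝ) - x i₀)]
      have hsum_ge : (δ/2)^2 ≤ ∑ i, ((j i:ℝ)/((n - k i:ℕ):ℝ) - x i)^2 :=
        le_trans hsq (Finset.single_le_sum (f := fun i => ((j i:ℝ)/((n - k i:ℕ):ℝ) - x i)^2)
          (fun i _ => sq_nonneg _) (Finset.mem_univ i₀))
      have hgg : |g (ξ j) - g x| ≤ 2*M := by
        have h1 := hMb (ξ j) hξIccj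
        have h2 := hMb x hx
        have h3 : |g (ξ j) - g x| ≤ |g (ξ j)| + |g x| := by
          have := abs_add_le (g (ξ j)) (-(g x))
          simpa [sub_eq_add_neg] using this
        linarith
      have hC2 : 2*M ≤ Cst * ∑ i, ((j i:ℝ)/((n - k i:ℕ):ℝ) - x i)^2 := by
        have e3 : 2*M = Cst * (δ/2)^2 := by
          rw [hCstdef]
          field_simp
        rw [e3]
        exact mul_le_mul_of_nonneg_left hsum_ge (le_of_lt hCst0)
      linarith
  -- sum estimate
  have hPsub : |P - g x| ≤ ε/4 + Cst * ((d:ℝ) * (1/(4*((n:ℝ) - κ)))) := by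
    have e1 : P - g x = ∑ j ∈ JS, (g (ξ j) - g x) * B j := by
      rw [hP]
      have : ∑ j ∈ JS, (g (ξ j) - g x) * B j
          = (∑ j ∈ JS, g (ξ j) * B j) - ∑ j ∈ JS, g x * B j := by
        rw [← Finset.sum_sub_distrib]
        apply Finset.sum_congr rfl
        intro j _
        ring
      rw [this, ← Finset.mul_sum, hB1, mul_one]
    have e2 : |P - g x| ≤ ∑ j ∈ JS, |g (ξ j) - g x| * B j := by
      rw [e1]
      refine le_trans (Finset.abs_sum_le_sum_abs _ _) ?_
      apply Finset.sum_le_sum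
      intro j hj
      rw [abs_mul, abs_of_nonneg (hBnn j)]
    have e3 : ∑ j ∈ JS, |g (ξ j) - g x| * B j
        ≤ ∑ j ∈ JS, (ε/4 + Cst * ∑ i, ((j i:ℝ)/((n - k i:ℕ):ℝ) - x i)^2) * B j := by
      apply Finset.sum_le_sum
      intro j hj
      exact mul_le_mul_of_nonneg_right (hptw j hj) (hBnn j)
    have e4 : ∑ j ∈ JS, (ε/4 + Cst * ∑ i, ((j i:ℝ)/((n - k i:ℕ):ℝ) - x i)^2) * B j
        = ε/4 + Cst * ∑ i, ∑ j ∈ JS, ((j i:ℝ)/((n - k i:ℕ):ℝ) - x i)^2 * B j := by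
      have e41 : ∀ j ∈ JS, (ε/4 + Cst * ∑ i, ((j i:ℝ)/((n - k i:ℕ):ℝ) - x i)^2) * B j
          = ε/4 * B j + Cst * ∑ i, (((j i:ℝ)/((n - k i:ℕ):ℝ) - x i)^2 * B j) := by
        intro j _
        rw [show ∑ i, (((j i:ℝ)/((n - k i:ℕ):ℝ) - x i)^2 * B j)
          = (∑ i, ((j i:ℝ)/((n - k i:ℕ):ℝ) - x i)^2) * B j from (Finset.sum_mul _ _ _).symm]
        ring
      rw [Finset.sum_congr rfl e41, Finset.sum_add_distrib, ← Finset.mul_sum, hB1, mul_one,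
        ← Finset.mul_sum, Finset.sum_comm]
    have e5 : ∀ i, ∑ j ∈ JS, ((j i:ℝ)/((n - k i:ℕ):ℝ) - x i)^2 * B j
        = x i * (1 - x i) / ((n - k i : ℕ):ℝ) := by
      intro i
      have h1 := TB_factor (fun i' => n - k i') x i (fun a => ((a:ℝ)/((n - k i:ℕ):ℝ) - x i)^2) hsum1
      exact h1.trans (bb_variance (n - k i) (hmv1 i) (x i))
    have e6 : ∀ i, x i * (1 - x i) / ((n - k i : ℕ):ℝ) ≤ 1/(4*((n:ℝ) - κ)) := by
      intro i
      have h1 : x i * (1 - x i) ≤ 1/4 := by nlinarith [sq_nonneg (x i - 1/2)]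
      have h2 : (0:ℝ) < (n:ℝ) - κ := by linarith
      have h3 := hmvR i
      rw [show (1:ℝ)/(4*((n:ℝ) - κ)) = (1/4)/((n:ℝ) - κ) from (div_div 1 4 ((n:ℝ) - κ)).symm]
      exact div_le_div₀ (by norm_num) h1 h2 h3
    calc |P - g x| ≤ ∑ j ∈ JS, |g (ξ j) - g x| * B j := e2
    _ ≤ _ := e3
    _ = ε/4 + Cst * ∑ i, ∑ j ∈ JS, ((j i:ℝ)/((n - k i:ℕ):ℝ) - x i)^2 * B j := e4
    _ ≤ ε/4 + Cst * ∑ _i : Fin d, 1/(4*((n:ℝ) - κ)) := by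
        have h7 : ∑ i, ∑ j ∈ JS, ((j i:ℝ)/((n - k i:ℕ):ℝ) - x i)^2 * B j
            ≤ ∑ _i : Fin d, 1/(4*((n:ℝ) - κ)) := by
          apply Finset.sum_le_sum
          intro i _
          rw [e5 i]
          exact e6 i
        exact add_le_add_right (mul_le_mul_of_nonneg_left h7 hCst0.le) _
    _ = ε/4 + Cst * ((d:ℝ) * (1/(4*((n:ℝ) - κ)))) := by
        rw [Finset.sum_const, Finset.card_univ, Fintype.card_fin, nsmul_eq_mul]
  -- final assembly
  rw [Real.dist_eq, hform]
  have hsplit : g x - α * P = α * (g x - P) + (1 - α) * g x := by ring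
  have habs1 : |g x - α * P| ≤ α * |g x - P| + (1 - α) * |g x| := by
    rw [hsplit]
    have ha1 : |α * (g x - P) + (1 - α) * g x| ≤ |α * (g x - P)| + |(1 - α) * g x| := abs_add_le _ _
    have ha2 : |α * (g x - P)| = α * |g x - P| := by rw [abs_mul, abs_of_nonneg hα0]
    have ha3 : |(1 - α) * g x| = (1 - α) * |g x| := by
      rw [abs_mul, abs_of_nonneg (by linarith : (0:ℝ) ≤ 1 - α)]
    linarith
  have hq2 : Cst * ((d:ℝ) * (1/(4*((n:ℝ) - κ)))) ≤ ε/4 := by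
    have h2 : (0:ℝ) < (n:ℝ) - κ := by linarith
    rw [div_lt_iff₀ hε] at hb2
    rw [show Cst * ((d:ℝ) * (1/(4*((n:ℝ) - κ)))) = (Cst * d)/(4*((n:ℝ) - κ)) by ring]
    rw [div_le_iff₀ (by positivity)]
    have hd0 : (0:ℝ) ≤ (d:ℝ) := by positivity
    nlinarith
  have hq3 : (1 - α) * M ≤ ε/4 := by
    have h1 : 1 - α ≤ (κ:ℝ)^2/n := by linarith
    have h2 : (1 - α) * M ≤ ((κ:ℝ)^2/n) * M := by
      apply mul_le_mul_of_nonneg_right h1 hM0.le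
    rw [div_lt_iff₀ hε] at hb3
    have h3 : ((κ:ℝ)^2/n) * M ≤ ε/4 := by
      rw [show ((κ:ℝ)^2/n) * M = ((κ:ℝ)^2*M)/n by ring]
      rw [div_le_iff₀ hnR0]
      nlinarith
    linarith
  have habs2 : |g x - P| = |P - g x| := abs_sub_comm _ _
  have hPg0 : (0:ℝ) ≤ |P - g x| := abs_nonneg _
  calc |g x - α * P| ≤ α * |g x - P| + (1 - α) * |g x| := habs1
  _ ≤ 1 * |P - g x| + (1 - α) * M := by
      have t1 : α * |g x - P| ≤ 1 * |P - g x| := by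
        rw [habs2]
        exact mul_le_mul_of_nonneg_right hα1 hPg0
      have t2 : (1 - α) * |g x| ≤ (1 - α) * M :=
        mul_le_mul_of_nonneg_left (hMb x hx) (by linarith)
      linarith
  _ ≤ (ε/4 + Cst * ((d:ℝ) * (1/(4*((n:ℝ) - κ))))) + (1 - α) * M := by
      rw [one_mul]
      linarith
  _ ≤ ε/4 + ε/4 + ε/4 := by linarith
  _ < ε := by linarith
end

section
/- Let d ≥ 1, let k = (k_1,…,k_d) be a multi-index, and let f : ℝ^d → ℝ possess a continuous mixed partial derivative ∂^{|k|}f/∂x_1^{k_1}⋯∂x_d^{k_d}. Then the mixed partial derivatives ∂^{|k|}B_n(f;x)/∂x_1^{k_1}⋯∂x_d^{k_d} of the simplex Bernstein polynomials converge to ∂^{|k|}f(x)/∂x_1^{k_1}⋯∂x_d^{k_d} as n → ∞, uniformly on the simplex S^d = {x ∈ ℝ^d : x_1,…,x_d ≥ 0 and x_1+⋯+x_d ≤ 1}. -/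
/-- The `n`-th "simplex" Bernstein polynomial of `f : ℝ^d → ℝ`. -/
noncomputable def simplexBernstein (d n : ℕ) (f : (Fin d → ℝ) → ℝ) (x : Fin d → ℝ) : ℝ :=
  ∑ j ∈ (Fintype.piFinset (fun _ : Fin d => Finset.range (n + 1))).filter
      (fun j => ∑ i, j i ≤ n),
    f (fun i => (j i : ℝ) / n) *
      ((n.factorial : ℝ) / (((∏ i, (j i).factorial) * (n - ∑ i, j i).factorial : ℕ) : ℝ)) *
      (∏ i, x i ^ (j i)) * (1 - ∑ i, x i) ^ (n - ∑ i, j i)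

/-- The standard simplex `S^d = {x : x_i ≥ 0, x_1+⋯+x_d ≤ 1}`. -/
def stdSimplex' (d : ℕ) : Set (Fin d → ℝ) := {x | (∀ i, 0 ≤ x i) ∧ ∑ i, x i ≤ 1}

namespace SB
open Finset

variable {d : ℕ}

def idx (d m : ℕ) : Finset (Fin d → ℕ) :=
  (Fintype.piFinset (fun _ : Fin d => Finset.range (m + 1))).filter (fun j => ∑ i, j i ≤ m)

lemma mem_idx {m : ℕ} {j : Fin d → ℕ} : j ∈ idx d m ↔ ∑ i, j i ≤ m := by
  constructor
  · exact fun h => (Finset.mem_filter.1 h).2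
  · intro h
    refine Finset.mem_filter.2 ⟨Fintype.mem_piFinset.2 fun i => ?_, h⟩
    exact Finset.mem_range.2 (Nat.lt_succ_of_le (le_trans (Finset.single_le_sum (f := fun i => j i) (fun _ _ => Nat.zero_le _) (Finset.mem_univ i)) h))

lemma mem_idx_le {m : ℕ} {j : Fin d → ℕ} (h : j ∈ idx d m) (i : Fin d) : j i ≤ m :=
  le_trans (Finset.single_le_sum (f := fun i => j i) (fun _ _ => Nat.zero_le _) (Finset.mem_univ i)) (mem_idx.1 h)

/-- multinomial coefficient as a real number -/
noncomputable def cc (d m : ℕ) (j : Fin d → ℕ) : ℝ :=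
  (m.factorial : ℝ) / (((∏ i, (j i).factorial) * (m - ∑ i, j i).factorial : ℕ) : ℝ)

noncomputable def wt (d m : ℕ) (j : Fin d → ℕ) (x : Fin d → ℝ) : ℝ :=
  cc d m j * (∏ i, x i ^ (j i)) * (1 - ∑ i, x i) ^ (m - ∑ i, j i)

noncomputable def bsum (d m : ℕ) (F : (Fin d → ℕ) → ℝ) (x : Fin d → ℝ) : ℝ :=
  ∑ j ∈ idx d m, F j * wt d m j x

lemma simplexBernstein_eq (n : ℕ) (f : (Fin d → ℝ) → ℝ) (x : Fin d → ℝ) :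
    simplexBernstein d n f x = bsum d n (fun j => f (fun i => (j i : ℝ) / n)) x := by
  unfold simplexBernstein bsum idx wt cc
  refine Finset.sum_congr rfl fun j _ => by ring

lemma cc_nonneg (m : ℕ) (j : Fin d → ℕ) : 0 ≤ cc d m j :=
  div_nonneg (Nat.cast_nonneg _) (Nat.cast_nonneg _)

lemma wt_nonneg {m : ℕ} {j : Fin d → ℕ} {x : Fin d → ℝ} (hx : ∀ i, 0 ≤ x i)
    (hs : ∑ i, x i ≤ 1) : 0 ≤ wt d m j x := by
  refine mul_nonneg (mul_nonneg (cc_nonneg m j) (Finset.prod_nonneg fun i _ => pow_nonneg (hx i) _)) (pow_nonneg (by linarith) _)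


lemma sum_add_single (a : Fin d → ℕ) (i : Fin d) :
    ∑ r, (a + Pi.single i 1 : Fin d → ℕ) r = (∑ r, a r) + 1 := by
  classical
  simp only [Pi.add_apply, Finset.sum_add_distrib]
  congr 1
  simp [Finset.sum_pi_single']

lemma sub_add_single (a : Fin d → ℕ) (i : Fin d) (h : a i ≠ 0) :
    a - Pi.single i 1 + Pi.single i 1 = a := by
  funext r
  by_cases hr : r = i
  · subst hr
    simp only [Pi.add_apply, Pi.sub_apply, Pi.single_eq_same]
    omega
  · simp [Pi.sub_apply, Pi.single_eq_of_ne hr]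

lemma add_sub_single (a : Fin d → ℕ) (i : Fin d) :
    a + Pi.single i 1 - Pi.single i 1 = a := by
  funext r
  by_cases hr : r = i
  · subst hr; simp
  · simp [Pi.single_eq_of_ne hr]

lemma sum_sub_single (a : Fin d → ℕ) (i : Fin d) (h : a i ≠ 0) :
    ∑ r, (a - Pi.single i 1 : Fin d → ℕ) r = (∑ r, a r) - 1 := by
  classical
  have hle : ∀ r ∈ Finset.univ, (Pi.single i 1 : Fin d → ℕ) r ≤ a r := by
    intro r _
    by_cases hr : r = i
    · subst hr; simpa [Pi.single_eq_same] using Nat.one_le_iff_ne_zero.2 h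
    · simp [Pi.single_eq_of_ne hr]
  simp only [Pi.sub_apply]
  rw [Finset.sum_tsub_distrib _ hle]
  congr 1
  simp [Finset.sum_pi_single']

/-- Key reindexing lemma 1. -/
lemma sum_shift (m : ℕ) (i : Fin d) (F : (Fin d → ℕ) → ℝ) (x : Fin d → ℝ) :
    ∑ j ∈ idx d (m+1), (j i : ℝ) * F j *
      (cc d (m+1) j * ((x i ^ (j i - 1) * ∏ r ∈ Finset.univ.erase i, x r ^ j r) *
        (1 - ∑ r, x r) ^ (m + 1 - ∑ r, j r)))
    = (m+1) * bsum d m (fun j => F (j + Pi.single i 1)) x := by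
  classical
  rw [← Finset.sum_filter_of_ne (p := fun j => j i ≠ 0)
    (fun j _ hne h0 => hne (by simp [h0]))]
  rw [bsum, Finset.mul_sum]
  refine Eq.symm (Finset.sum_nbij' (fun a => a + Pi.single i 1) (fun a => a - Pi.single i 1)
    ?_ ?_ ?_ ?_ ?_)
  · -- maps into filter
    intro a ha
    refine Finset.mem_filter.2 ⟨mem_idx.2 ?_, ?_⟩
    · rw [sum_add_single]
      exact Nat.succ_le_succ (mem_idx.1 ha)
    · simp
  · -- maps back
    intro a ha
    obtain ⟨ha1, ha2⟩ := Finset.mem_filter.1 ha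
    refine mem_idx.2 ?_
    rw [sum_sub_single a i ha2]
    have := mem_idx.1 ha1
    omega
  · intro a _; exact add_sub_single a i
  · intro a ha; exact sub_add_single a i (Finset.mem_filter.1 ha).2
  · -- term equality
    intro a ha
    have hai : (a + Pi.single i 1 : Fin d → ℕ) i = a i + 1 := by simp
    have hsum : ∑ r, (a + Pi.single i 1 : Fin d → ℕ) r = (∑ r, a r) + 1 := sum_add_single a i
    have hprod : ∏ r ∈ Finset.univ.erase i, x r ^ (a + Pi.single i 1 : Fin d → ℕ) r
        = ∏ r ∈ Finset.univ.erase i, x r ^ a r := by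
      refine Finset.prod_congr rfl fun r hr => ?_
      rw [Pi.add_apply, Pi.single_eq_of_ne (Finset.mem_erase.1 hr).1, add_zero]
    have hfull : ∏ r, x r ^ a r = x i ^ a i * ∏ r ∈ Finset.univ.erase i, x r ^ a r :=
      (Finset.mul_prod_erase Finset.univ (fun r => x r ^ a r) (Finset.mem_univ i)).symm
    have hexp : m + 1 - ((∑ r, a r) + 1) = m - ∑ r, a r := by omega
    -- coefficient identity
    have hcoef : ((a i : ℝ) + 1) * cc d (m+1) (a + Pi.single i 1) = (m+1) * cc d m a := by
      unfold cc
      have hprodfac : ∏ r, ((a + Pi.single i 1 : Fin d → ℕ) r).factorial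
          = (a i + 1) * ∏ r, (a r).factorial := by
        have hfe : ∀ r ∈ Finset.univ.erase i, ((a + Pi.single i 1 : Fin d → ℕ) r).factorial = (a r).factorial := by
          intro r hr
          rw [Pi.add_apply, Pi.single_eq_of_ne (Finset.mem_erase.1 hr).1, add_zero]
        have k1 := Finset.mul_prod_erase Finset.univ (fun r => ((a + Pi.single i 1 : Fin d → ℕ) r).factorial) (Finset.mem_univ i)
        have k2 := Finset.mul_prod_erase Finset.univ (fun r => (a r).factorial) (Finset.mem_univ i)
        rw [← k1, ← k2, hai, Nat.factorial_succ, Finset.prod_congr rfl hfe]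
        ring
      rw [hsum, hexp, hprodfac]
      have h1 : ((a i).factorial : ℝ) ≠ 0 := Nat.cast_ne_zero.2 (Nat.factorial_ne_zero _)
      have h2 : ((∏ r, (a r).factorial : ℕ) : ℝ) ≠ 0 := Nat.cast_ne_zero.2 (Finset.prod_ne_zero_iff.2 fun r _ => Nat.factorial_ne_zero _)
      have h3 : (((m - ∑ r, a r).factorial : ℕ) : ℝ) ≠ 0 := Nat.cast_ne_zero.2 (Nat.factorial_ne_zero _)
      push_cast [Nat.factorial_succ]
      field_simp
    -- final per-term computation
    beta_reduce
    rw [hai, hsum, hexp, hprod, wt, hfull]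
    push_cast
    linear_combination (-F (a + Pi.single i 1) *
      ((x i ^ a i * ∏ r ∈ Finset.univ.erase i, x r ^ a r) * (1 - ∑ r, x r) ^ (m - ∑ r, a r))) * hcoef

/-- Key reindexing lemma 2. -/
lemma sum_drop (m : ℕ) (F : (Fin d → ℕ) → ℝ) (x : Fin d → ℝ) :
    ∑ j ∈ idx d (m+1), ((m + 1 - ∑ r, j r : ℕ) : ℝ) * F j *
      (cc d (m+1) j * ((∏ r, x r ^ j r) * (1 - ∑ r, x r) ^ (m + 1 - ∑ r, j r - 1)))
    = (m+1) * bsum d m F x := by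
  classical
  rw [bsum, Finset.mul_sum]
  rw [← Finset.sum_subset (Finset.filter_subset (fun j => ∑ r, j r ≤ m) (idx d (m+1)))
    (fun j hj hnj => ?_)]
  · have hset : (idx d (m+1)).filter (fun j => ∑ r, j r ≤ m) = idx d m := by
      ext j
      simp only [Finset.mem_filter, mem_idx]
      constructor
      · exact fun h => h.2
      · exact fun h => ⟨by omega, h⟩
    rw [hset]
    refine Finset.sum_congr rfl fun j hj => ?_
    have hjm : ∑ r, j r ≤ m := mem_idx.1 hj
    have hexp : m + 1 - ∑ r, j r - 1 = m - ∑ r, j r := by omega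
    have hcoef : ((m + 1 - ∑ r, j r : ℕ) : ℝ) * cc d (m+1) j = (m+1) * cc d m j := by
      unfold cc
      have hfac : (m + 1 - ∑ r, j r).factorial
          = (m + 1 - ∑ r, j r) * (m - ∑ r, j r).factorial := by
        have : m + 1 - ∑ r, j r = (m - ∑ r, j r) + 1 := by omega
        rw [this, Nat.factorial_succ]
      rw [hfac]
      have h2 : ((∏ r, (j r).factorial : ℕ) : ℝ) ≠ 0 :=
        Nat.cast_ne_zero.2 (Finset.prod_ne_zero_iff.2 fun r _ => Nat.factorial_ne_zero _)
      have h3 : (((m - ∑ r, j r).factorial : ℕ) : ℝ) ≠ 0 := Nat.cast_ne_zero.2 (Nat.factorial_ne_zero _)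
      have h4 : ((m + 1 - ∑ r, j r : ℕ) : ℝ) ≠ 0 := by
        have : 0 < m + 1 - ∑ r, j r := by omega
        exact Nat.cast_ne_zero.2 (by omega)
      push_cast [Nat.factorial_succ]
      field_simp
    rw [hexp, wt]
    linear_combination (F j * ((∏ r, x r ^ j r) * (1 - ∑ r, x r) ^ (m - ∑ r, j r))) * hcoef
  · -- vanishing terms
    have h1 := mem_idx.1 hj
    simp only [Finset.mem_filter, not_and, not_le] at hnj
    have h2 := hnj hj
    have hj1 : ∑ r, j r = m + 1 := by omega
    rw [hj1]
    simp

lemma bsum_congr {m : ℕ} {F G : (Fin d → ℕ) → ℝ} {x : Fin d → ℝ}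
    (h : ∀ j ∈ idx d m, F j = G j) : bsum d m F x = bsum d m G x :=
  Finset.sum_congr rfl fun j hj => by rw [h j hj]

lemma sum_shift_full (m : ℕ) (i : Fin d) (F : (Fin d → ℕ) → ℝ) (x : Fin d → ℝ) :
    ∑ j ∈ idx d (m+1), (j i : ℝ) * F j * wt d (m+1) j x
    = (m+1) * x i * bsum d m (fun j => F (j + Pi.single i 1)) x := by
  classical
  have step : ∀ j ∈ idx d (m+1), (j i : ℝ) * F j * wt d (m+1) j x
      = x i * ((j i : ℝ) * F j * (cc d (m+1) j * ((x i ^ (j i - 1) *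
          ∏ r ∈ Finset.univ.erase i, x r ^ j r) * (1 - ∑ r, x r) ^ (m + 1 - ∑ r, j r)))) := by
    intro j _
    rw [wt, ← Finset.mul_prod_erase Finset.univ (fun r => x r ^ j r) (Finset.mem_univ i)]
    rcases Nat.eq_zero_or_pos (j i) with h0 | hpos
    · simp [h0]
    · have : x i ^ j i = x i * x i ^ (j i - 1) := by
        conv_lhs => rw [show j i = (j i - 1) + 1 by omega]
        rw [pow_succ]
        ring
      rw [this]; ring
  rw [Finset.sum_congr rfl step, ← Finset.mul_sum, sum_shift]
  ring

lemma sum_drop_full (m : ℕ) (F : (Fin d → ℕ) → ℝ) (x : Fin d → ℝ) :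
    ∑ j ∈ idx d (m+1), ((m + 1 - ∑ r, j r : ℕ) : ℝ) * F j * wt d (m+1) j x
    = (m+1) * (1 - ∑ r, x r) * bsum d m F x := by
  classical
  have step : ∀ j ∈ idx d (m+1), ((m + 1 - ∑ r, j r : ℕ) : ℝ) * F j * wt d (m+1) j x
      = (1 - ∑ r, x r) * (((m + 1 - ∑ r, j r : ℕ) : ℝ) * F j *
          (cc d (m+1) j * ((∏ r, x r ^ j r) * (1 - ∑ r, x r) ^ (m + 1 - ∑ r, j r - 1)))) := by
    intro j hj
    have hle : ∑ r, j r ≤ m + 1 := mem_idx.1 hj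
    rw [wt]
    rcases Nat.lt_or_ge (∑ r, j r) (m+1) with hlt | hge
    · have : (1 - ∑ r, x r) ^ (m + 1 - ∑ r, j r)
          = (1 - ∑ r, x r) * (1 - ∑ r, x r) ^ (m + 1 - ∑ r, j r - 1) := by
        conv_lhs => rw [show m + 1 - ∑ r, j r = (m + 1 - ∑ r, j r - 1) + 1 by omega]
        rw [pow_succ]; ring
      rw [this]; ring
    · have heq : ∑ r, j r = m + 1 := le_antisymm hle hge
      rw [heq]
      simp
  rw [Finset.sum_congr rfl step, ← Finset.mul_sum, sum_drop]
  ring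

lemma idx_zero : idx d 0 = {fun _ => 0} := by
  ext j
  simp only [mem_idx, Finset.mem_singleton]
  constructor
  · intro h
    have h0 := Finset.sum_eq_zero_iff.1 (Nat.le_zero.1 h)
    funext i
    exact h0 i (Finset.mem_univ i)
  · intro h; subst h; simp

lemma bsum_one (m : ℕ) (x : Fin d → ℝ) : bsum d m (fun _ => (1:ℝ)) x = 1 := by
  classical
  induction m with
  | zero =>
    rw [bsum, idx_zero, Finset.sum_singleton, wt, cc]
    simp [Nat.factorial]
  | succ m ih =>
    have key : ((m:ℝ)+1) * bsum d (m+1) (fun _ => (1:ℝ)) x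
        = ((m:ℝ)+1) * bsum d m (fun _ => (1:ℝ)) x := by
      rw [bsum, Finset.mul_sum]
      have split : ∀ j ∈ idx d (m+1), ((m:ℝ)+1) * ((1:ℝ) * wt d (m+1) j x)
          = (∑ i, (j i : ℝ) * (1:ℝ) * wt d (m+1) j x)
            + ((m + 1 - ∑ r, j r : ℕ) : ℝ) * (1:ℝ) * wt d (m+1) j x := by
        intro j hj
        have hle : ∑ r, j r ≤ m + 1 := mem_idx.1 hj
        have hc : ((m + 1 - ∑ r, j r : ℕ) : ℝ) = (m:ℝ) + 1 - (∑ r, (j r : ℝ)) := by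
          push_cast [Nat.cast_sub hle]
          ring
        rw [← Finset.sum_mul, ← Finset.sum_mul, hc]
        push_cast
        ring
      rw [Finset.sum_congr rfl split, Finset.sum_add_distrib, Finset.sum_comm]
      have hi : ∀ i ∈ (Finset.univ : Finset (Fin d)),
          ∑ j ∈ idx d (m+1), (j i : ℝ) * (1:ℝ) * wt d (m+1) j x
          = ((m:ℝ)+1) * x i * bsum d m (fun _ => (1:ℝ)) x := fun i _ => sum_shift_full m i _ x
      rw [Finset.sum_congr rfl hi, sum_drop_full]
      have hpull : ∑ i : Fin d, ((m:ℝ)+1) * x i * bsum d m (fun _ => (1:ℝ)) x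
          = ((m:ℝ)+1) * (∑ i, x i) * bsum d m (fun _ => (1:ℝ)) x := by
        rw [← Finset.sum_mul, ← Finset.mul_sum]
      rw [hpull]
      ring
    have hmne : ((m:ℝ)+1) ≠ 0 := by positivity
    have := mul_left_cancel₀ hmne key
    rw [this, ih]

lemma bsum_coord (m : ℕ) (i : Fin d) (x : Fin d → ℝ) :
    bsum d m (fun j => (j i : ℝ)) x = m * x i := by
  classical
  cases m with
  | zero => rw [bsum, idx_zero, Finset.sum_singleton]; simp
  | succ m =>
    have : bsum d (m+1) (fun j => (j i : ℝ)) x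
        = ∑ j ∈ idx d (m+1), (j i : ℝ) * (1:ℝ) * wt d (m+1) j x := by
      exact Finset.sum_congr rfl fun j _ => by ring
    rw [this, sum_shift_full, bsum_one]
    push_cast
    ring

lemma bsum_coord_sq (m : ℕ) (i : Fin d) (x : Fin d → ℝ) :
    bsum d m (fun j => (j i : ℝ) * ((j i : ℝ) - 1)) x = m * ((m:ℝ) - 1) * (x i)^2 := by
  classical
  cases m with
  | zero => rw [bsum, idx_zero, Finset.sum_singleton]; simp
  | succ m =>
    have : bsum d (m+1) (fun j => (j i : ℝ) * ((j i : ℝ) - 1)) x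
        = ∑ j ∈ idx d (m+1), (j i : ℝ) * ((j i : ℝ) - 1) * wt d (m+1) j x := rfl
    rw [this, sum_shift_full]
    have : bsum d m (fun j => (((j + Pi.single i 1 : Fin d → ℕ) i : ℝ) - 1)) x
        = bsum d m (fun j => (j i : ℝ)) x := by
      refine bsum_congr fun j _ => ?_
      simp
    rw [this, bsum_coord]
    push_cast
    ring

lemma bsum_variance (m : ℕ) (hm : 1 ≤ m) (i : Fin d) (x : Fin d → ℝ) :
    bsum d m (fun j => ((j i : ℝ) / m - x i)^2) x = (x i - (x i)^2) / m := by
  classical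
  have hmne : (m:ℝ) ≠ 0 := Nat.cast_ne_zero.2 (by omega)
  have expand : bsum d m (fun j => ((j i : ℝ) / m - x i)^2) x
      = (1/(m:ℝ)^2) * bsum d m (fun j => (j i : ℝ) * ((j i : ℝ) - 1)) x
        + (1/(m:ℝ)^2 - 2 * x i / m) * bsum d m (fun j => (j i : ℝ)) x
        + (x i)^2 * bsum d m (fun _ => (1:ℝ)) x := by
    unfold bsum
    rw [Finset.mul_sum, Finset.mul_sum, Finset.mul_sum, ← Finset.sum_add_distrib,
      ← Finset.sum_add_distrib]
    refine Finset.sum_congr rfl fun j _ => ?_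
    field_simp
    ring
  rw [expand, bsum_one, bsum_coord, bsum_coord_sq]
  field_simp
  ring

lemma hasDerivAt_bsum (m : ℕ) (i : Fin d) (F : (Fin d → ℕ) → ℝ) (x : Fin d → ℝ) :
    HasDerivAt (fun t => bsum d (m+1) F (Function.update x i t))
      (((m:ℝ)+1) * bsum d m (fun j => F (j + Pi.single i 1) - F j) x) (x i) := by
  classical
  set E := ∑ r ∈ Finset.univ.erase i, x r with hE
  have hxiE : x i + E = ∑ r, x r := Finset.add_sum_erase _ x (Finset.mem_univ i)
  -- rewrite the function
  have hfun : (fun t => bsum d (m+1) F (Function.update x i t))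
      = fun t => ∑ j ∈ idx d (m+1), F j * (cc d (m+1) j *
          ((t ^ j i * ∏ r ∈ Finset.univ.erase i, x r ^ j r) *
            (1 - (t + E)) ^ (m + 1 - ∑ r, j r))) := by
    funext t
    rw [bsum]
    refine Finset.sum_congr rfl fun j _ => ?_
    have hprod : ∏ r, (Function.update x i t r) ^ j r
        = t ^ j i * ∏ r ∈ Finset.univ.erase i, x r ^ j r := by
      have h1 : (fun r => (Function.update x i t r) ^ j r)
          = Function.update (fun r => x r ^ j r) i (t ^ j i) := by
        funext r
        by_cases hr : r = i
        · subst hr; simp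
        · simp [Function.update_of_ne hr]
      rw [h1, Finset.prod_update_of_mem (Finset.mem_univ i), Finset.sdiff_singleton_eq_erase]
    have hsum : ∑ r, Function.update x i t r = t + E := by
      rw [Finset.sum_update_of_mem (Finset.mem_univ i), Finset.sdiff_singleton_eq_erase]
    rw [wt, hprod, hsum]
    ring
  rw [hfun]
  -- per-term derivatives
  have hterm : ∀ j ∈ idx d (m+1), HasDerivAt (fun t : ℝ => F j * (cc d (m+1) j *
      ((t ^ j i * ∏ r ∈ Finset.univ.erase i, x r ^ j r) *
        (1 - (t + E)) ^ (m + 1 - ∑ r, j r))))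
      (F j * (cc d (m+1) j *
        ((((j i : ℝ) * x i ^ (j i - 1)) * ∏ r ∈ Finset.univ.erase i, x r ^ j r) *
            (1 - (x i + E)) ^ (m + 1 - ∑ r, j r)
          + (x i ^ j i * ∏ r ∈ Finset.univ.erase i, x r ^ j r) *
            (((m + 1 - ∑ r, j r : ℕ) : ℝ) * (1 - (x i + E)) ^ (m + 1 - ∑ r, j r - 1) * (-1)))))
      (x i) := by
    intro j _
    have hA : HasDerivAt (fun t : ℝ => t ^ j i) ((j i : ℝ) * x i ^ (j i - 1)) (x i) := by
      simpa using hasDerivAt_pow (j i) (x i)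
    have hinner : HasDerivAt (fun t : ℝ => 1 - (t + E)) (-1) (x i) := by
      simpa using ((hasDerivAt_id (x i)).add_const E).const_sub 1
    have hB : HasDerivAt (fun t : ℝ => (1 - (t + E)) ^ (m + 1 - ∑ r, j r))
        (((m + 1 - ∑ r, j r : ℕ) : ℝ) * (1 - (x i + E)) ^ (m + 1 - ∑ r, j r - 1) * (-1))
        (x i) := by
      have := (hasDerivAt_pow (m + 1 - ∑ r, j r) (1 - (x i + E))).comp (x i) hinner
      simpa [Function.comp_def] using this
    exact (((hA.mul_const _).mul hB).const_mul _).const_mul _ |>.congr_deriv (by ring) |>.congr_deriv rfl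
  refine (HasDerivAt.fun_sum hterm).congr_deriv ?_
  have step : ∀ j ∈ idx d (m+1),
      F j * (cc d (m+1) j *
        ((((j i : ℝ) * x i ^ (j i - 1)) * ∏ r ∈ Finset.univ.erase i, x r ^ j r) *
            (1 - (x i + E)) ^ (m + 1 - ∑ r, j r)
          + (x i ^ j i * ∏ r ∈ Finset.univ.erase i, x r ^ j r) *
            (((m + 1 - ∑ r, j r : ℕ) : ℝ) * (1 - (x i + E)) ^ (m + 1 - ∑ r, j r - 1) * (-1))))
      = (j i : ℝ) * F j * (cc d (m+1) j * ((x i ^ (j i - 1) *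
            ∏ r ∈ Finset.univ.erase i, x r ^ j r) * (1 - ∑ r, x r) ^ (m + 1 - ∑ r, j r)))
        - ((m + 1 - ∑ r, j r : ℕ) : ℝ) * F j * (cc d (m+1) j * ((∏ r, x r ^ j r) *
            (1 - ∑ r, x r) ^ (m + 1 - ∑ r, j r - 1))) := by
    intro j _
    rw [hxiE, ← Finset.mul_prod_erase Finset.univ (fun r => x r ^ j r) (Finset.mem_univ i)]
    ring
  rw [Finset.sum_congr rfl step, Finset.sum_sub_distrib, sum_shift, sum_drop]
  unfold bsum
  rw [← mul_sub, ← Finset.sum_sub_distrib]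
  congr 1
  exact Finset.sum_congr rfl fun j _ => by ring

/-! ### List machinery -/

noncomputable def applyList (l : List (Fin d)) (g : (Fin d → ℝ) → ℝ) : (Fin d → ℝ) → ℝ :=
  l.foldr partialDeriv' g

lemma applyList_replicate (n : ℕ) (i : Fin d) (g : (Fin d → ℝ) → ℝ) :
    applyList (List.replicate n i) g = (partialDeriv' i)^[n] g := by
  induction n with
  | zero => rfl
  | succ n ih =>
    rw [List.replicate_succ, Function.iterate_succ']
    show partialDeriv' i (applyList (List.replicate n i) g) = _
    rw [ih]; rfl

lemma mixedPartial_eq_applyList (k : Fin d → ℕ) (g : (Fin d → ℝ) → ℝ) :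
    mixedPartial k g = applyList (multiIndexList k) g := by
  unfold mixedPartial multiIndexList
  induction (List.finRange d) with
  | nil => rfl
  | cons a L ih =>
    rw [List.foldr_cons, List.flatMap_cons]
    show (partialDeriv' a)^[k a] (L.foldr (fun i h => (partialDeriv' i)^[k i] h) g)
      = applyList (List.replicate (k a) a ++ L.flatMap fun i => List.replicate (k i) i) g
    rw [ih]
    rw [show applyList (List.replicate (k a) a ++ L.flatMap fun i => List.replicate (k i) i) g
      = applyList (List.replicate (k a) a) (applyList (L.flatMap fun i => List.replicate (k i) i) g)
      from List.foldr_append]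
    rw [applyList_replicate]

def diffOp (l : List (Fin d)) (F : (Fin d → ℕ) → ℝ) : (Fin d → ℕ) → ℝ :=
  l.foldr (fun i G => fun j => G (j + Pi.single i 1) - G j) F

lemma applyList_bsum (l : List (Fin d)) : ∀ (m : ℕ) (F : (Fin d → ℕ) → ℝ),
    applyList l (bsum d (m + l.length) F)
      = fun x => (((m + l.length).descFactorial l.length : ℕ) : ℝ) * bsum d m (diffOp l F) x := by
  induction l with
  | nil =>
    intro m F
    funext x
    simp [applyList, diffOp]
  | cons a l ih =>
    intro m F
    have hlen : m + (a :: l).length = (m + 1) + l.length := by simp [List.length_cons]; ring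
    rw [hlen]
    show partialDeriv' a (applyList l (bsum d ((m+1) + l.length) F)) = _
    rw [ih (m+1) F]
    funext x
    show deriv (fun t => (((m + 1 + l.length).descFactorial l.length : ℕ) : ℝ) *
        bsum d (m+1) (diffOp l F) (Function.update x a t)) (x a) = _
    have hder := (hasDerivAt_bsum m a (diffOp l F) x).const_mul
      ((((m + 1 + l.length).descFactorial l.length : ℕ) : ℝ))
    rw [hder.deriv]
    have hdf : (m + 1 + l.length).descFactorial (l.length + 1)
        = (m + 1) * (m + 1 + l.length).descFactorial l.length := by
      have := Nat.descFactorial_succ (m + 1 + l.length) l.length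
      rw [this]
      congr 1
      omega
    have : diffOp (a :: l) F = fun j => diffOp l F (j + Pi.single a 1) - diffOp l F j := rfl
    rw [this]
    show _ = (((m + 1 + l.length).descFactorial (l.length + 1) : ℕ) : ℝ) * _
    rw [hdf]
    push_cast
    ring

/-! ### Finite differences of real functions and the mean value theorem -/

def sh (i : Fin d) (δ : ℝ) (x : Fin d → ℝ) : Fin d → ℝ := Function.update x i (x i + δ)

lemma sh_apply (i : Fin d) (δ : ℝ) (x : Fin d → ℝ) (r : Fin d) :
    sh i δ x r = if r = i then x i + δ else x r := by
  simp [sh, Function.update_apply]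

lemma sh_comm (i a : Fin d) (δ : ℝ) (x : Fin d → ℝ) :
    sh i δ (sh a δ x) = sh a δ (sh i δ x) := by
  by_cases h : i = a
  · subst h; rfl
  · funext r
    simp only [sh_apply]
    rw [if_neg h, if_neg (Ne.symm h)]
    split_ifs <;> simp_all

lemma sh_update (i a : Fin d) (hia : a ≠ i) (δ : ℝ) (x : Fin d → ℝ) (t : ℝ) :
    sh i δ (Function.update x a t) = Function.update (sh i δ x) a t := by
  funext r
  simp only [sh_apply, Function.update_apply]
  split_ifs <;> simp_all

lemma sh_update_self (a : Fin d) (δ : ℝ) (x : Fin d → ℝ) (t : ℝ) :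
    sh a δ (Function.update x a t) = Function.update x a (t + δ) := by
  funext r
  simp only [sh_apply, Function.update_apply]
  split_ifs <;> simp_all

noncomputable def diffReal (l : List (Fin d)) (δ : ℝ) (f : (Fin d → ℝ) → ℝ) :
    (Fin d → ℝ) → ℝ :=
  l.foldr (fun i G => fun x => G (sh i δ x) - G x) f

lemma diffReal_comm (l : List (Fin d)) (i : Fin d) (δ : ℝ) (f : (Fin d → ℝ) → ℝ) :
    diffReal l δ (fun x => f (sh i δ x) - f x)
      = fun x => diffReal l δ f (sh i δ x) - diffReal l δ f x := by
  induction l with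
  | nil => rfl
  | cons a l ih =>
    funext x
    show diffReal l δ (fun x => f (sh i δ x) - f x) (sh a δ x)
        - diffReal l δ (fun x => f (sh i δ x) - f x) x = _
    rw [ih]
    show diffReal l δ f (sh i δ (sh a δ x)) - diffReal l δ f (sh a δ x)
        - (diffReal l δ f (sh i δ x) - diffReal l δ f x) = _
    rw [sh_comm]
    show _ = diffReal l δ f (sh a δ (sh i δ x)) - diffReal l δ f (sh i δ x)
        - (diffReal l δ f (sh a δ x) - diffReal l δ f x)
    ring

lemma isPartialAlong_diff (l : List (Fin d)) (i : Fin d) (δ : ℝ) :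
    ∀ (f h : (Fin d → ℝ) → ℝ), IsPartialAlong l f h →
    IsPartialAlong l (fun x => f (sh i δ x) - f x) (fun x => h (sh i δ x) - h x) := by
  induction l with
  | nil =>
    intro f h hfh
    have : h = f := hfh
    subst this
    rfl
  | cons a l ih =>
    intro f h hfh
    obtain ⟨p, hp, hder⟩ := hfh
    refine ⟨fun x => p (sh i δ x) - p x, ih f p hp, fun x => ?_⟩
    show HasDerivAt (fun t => p (sh i δ (Function.update x a t)) - p (Function.update x a t))
      (h (sh i δ x) - h x) (x a)
    by_cases hia : a = i
    · subst hia
      have h1 : HasDerivAt (fun t => p (Function.update x a (t + δ))) (h (sh a δ x)) (x a) := by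
        have hq := hder (sh a δ x)
        have hup : ∀ t, Function.update (sh a δ x) a t = Function.update x a t := by
          intro t; unfold sh; rw [Function.update_idem]
        have hpt : (sh a δ x) a = x a + δ := by simp [sh_apply]
        rw [hpt] at hq
        simp only [hup] at hq
        have hshift : HasDerivAt (fun t : ℝ => t + δ) 1 (x a) := (hasDerivAt_id (x a)).add_const δ
        have := hq.comp (x a) hshift
        simpa [Function.comp_def] using this
      simp only [sh_update_self]
      exact h1.sub (hder x)
    · have h1 : HasDerivAt (fun t => p (Function.update (sh i δ x) a t)) (h (sh i δ x)) (x a) := by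
        have hq := hder (sh i δ x)
        have hpt : (sh i δ x) a = x a := by
          rw [sh_apply]
          simp [hia]
        rw [hpt] at hq
        exact hq
      simp only [sh_update i a hia δ]
      exact h1.sub (hder x)

lemma diffReal_mvt (l : List (Fin d)) : ∀ (f g : (Fin d → ℝ) → ℝ),
    IsPartialAlong l f g → ∀ (δ : ℝ), 0 < δ → ∀ (x : Fin d → ℝ),
    ∃ ξ : Fin d → ℝ, (∀ r, x r ≤ ξ r ∧ ξ r ≤ x r + δ * l.length)
      ∧ diffReal l δ f x = δ ^ l.length * g ξ := by
  induction l with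
  | nil =>
    intro f g hfg δ hδ x
    have : g = f := hfg
    subst this
    exact ⟨x, fun r => ⟨le_refl _, by simp⟩, by simp [diffReal]⟩
  | cons a l ih =>
    intro f g hfg δ hδ x
    obtain ⟨p, hp, hder⟩ := hfg
    have hPA := isPartialAlong_diff l a δ f p hp
    obtain ⟨ξ, hξ, heq⟩ := ih _ _ hPA δ hδ x
    have h_all : ∀ u : ℝ, HasDerivAt (fun t => p (Function.update ξ a t))
        (g (Function.update ξ a u)) u := by
      intro u
      have hq := hder (Function.update ξ a u)
      simp only [Function.update_idem, Function.update_self] at hq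
      exact hq
    have hab : ξ a < ξ a + δ := by linarith
    obtain ⟨c, hc, hslope⟩ := exists_hasDerivAt_eq_slope (fun t => p (Function.update ξ a t))
      (fun u => g (Function.update ξ a u)) hab
      (fun t _ => (h_all t).continuousAt.continuousWithinAt)
      (fun t _ => h_all t)
    have hδne : δ ≠ 0 := ne_of_gt hδ
    have hpdiff : p (sh a δ ξ) - p ξ = δ * g (Function.update ξ a c) := by
      have h2 : p (Function.update ξ a (ξ a)) = p ξ := by rw [Function.update_eq_self]
      have hd : (ξ a + δ) - ξ a = δ := by ring
      rw [hd, h2] at hslope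
      have : p (Function.update ξ a (ξ a + δ)) - p ξ = δ * g (Function.update ξ a c) := by
        field_simp at hslope
        linarith [hslope]
      exact this
    obtain ⟨hc1, hc2⟩ := Set.mem_Ioo.1 hc
    refine ⟨Function.update ξ a c, fun r => ?_, ?_⟩
    · have hb := hξ r
      have hlen : ((a :: l).length : ℝ) = (l.length : ℝ) + 1 := by simp
      by_cases hr : r = a
      · subst hr
        rw [Function.update_self, hlen]
        constructor
        · linarith [hb.1]
        · linarith [hb.2]
      · rw [Function.update_of_ne hr, hlen]
        constructor
        · exact hb.1
        · nlinarith [hb.2, hδ.le]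
    · have hcomm : diffReal (a :: l) δ f x = diffReal l δ (fun y => f (sh a δ y) - f y) x := by
        rw [diffReal_comm]
        rfl
      rw [hcomm, heq]
      show δ ^ l.length * (p (sh a δ ξ) - p ξ) = _
      rw [hpdiff, show ((a :: l).length) = l.length + 1 by simp, pow_succ]
      ring

/-! ### Bridge and estimates -/

lemma diffOp_eq_diffReal (l : List (Fin d)) (n : ℕ) (hn : n ≠ 0) (f : (Fin d → ℝ) → ℝ) :
    diffOp l (fun j => f (fun i => (j i : ℝ) / n))
      = fun j => diffReal l (1/(n:ℝ)) f (fun i => (j i : ℝ) / n) := by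
  have hn' : (n:ℝ) ≠ 0 := Nat.cast_ne_zero.2 hn
  induction l with
  | nil => rfl
  | cons a l ih =>
    funext j
    show diffOp l (fun j => f (fun i => (j i : ℝ) / n)) (j + Pi.single a 1)
        - diffOp l (fun j => f (fun i => (j i : ℝ) / n)) j = _
    rw [ih]
    have hshift : (fun i => (((j + Pi.single a 1 : Fin d → ℕ) i : ℕ) : ℝ) / n)
        = sh a (1/(n:ℝ)) (fun i => (j i : ℝ) / n) := by
      funext r
      rw [sh_apply]
      by_cases hr : r = a
      · subst hr
        rw [if_pos rfl]
        push_cast [Pi.add_apply, Pi.single_eq_same]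
        field_simp
      · rw [if_neg hr, Pi.add_apply, Pi.single_eq_of_ne hr]
        norm_num
    show diffReal l (1/(n:ℝ)) f (fun i => (((j + Pi.single a 1 : Fin d → ℕ) i : ℕ) : ℝ) / n)
        - diffReal l (1/(n:ℝ)) f (fun i => (j i : ℝ) / n) = _
    rw [hshift]
    rfl

lemma bsum_smul (m : ℕ) (c : ℝ) (F : (Fin d → ℕ) → ℝ) (x : Fin d → ℝ) :
    bsum d m (fun j => c * F j) x = c * bsum d m F x := by
  unfold bsum
  rw [Finset.mul_sum]
  exact Finset.sum_congr rfl fun j _ => by ring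

lemma stdSimplex'_coord_le_one {x : Fin d → ℝ} (hx : x ∈ stdSimplex' d) (i : Fin d) :
    x i ≤ 1 := by
  obtain ⟨h1, h2⟩ := hx
  have := Finset.single_le_sum (f := fun i => x i) (fun r _ => h1 r) (Finset.mem_univ i)
  linarith

lemma bsum_bound {m : ℕ} {F : (Fin d → ℕ) → ℝ} {x : Fin d → ℝ} {M : ℝ}
    (hx : x ∈ stdSimplex' d) (hM : ∀ j ∈ idx d m, |F j| ≤ M) :
    |bsum d m F x| ≤ M := by
  obtain ⟨h1, h2⟩ := hx
  have hw : ∀ j, 0 ≤ wt d m j x := fun j => wt_nonneg h1 h2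
  calc |bsum d m F x| ≤ ∑ j ∈ idx d m, |F j * wt d m j x| := Finset.abs_sum_le_sum_abs _ _
    _ ≤ ∑ j ∈ idx d m, M * wt d m j x := by
        refine Finset.sum_le_sum fun j hj => ?_
        rw [abs_mul, abs_of_nonneg (hw j)]
        exact mul_le_mul_of_nonneg_right (hM j hj) (hw j)
    _ = M * bsum d m (fun _ => (1:ℝ)) x := by
        unfold bsum; rw [Finset.mul_sum]; exact Finset.sum_congr rfl fun j _ => by ring
    _ = M := by rw [bsum_one]; ring

lemma bsum_estimate {m : ℕ} (hm : 1 ≤ m) {a : (Fin d → ℕ) → ℝ} {G ε C : ℝ} (hC : 0 ≤ C)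
    {x : Fin d → ℝ} (hx : x ∈ stdSimplex' d)
    (hb : ∀ j ∈ idx d m, |a j - G| ≤ ε + C * ∑ i, ((j i : ℝ)/m - x i)^2) :
    |bsum d m a x - G| ≤ ε + C * d / m := by
  obtain ⟨h1, h2⟩ := hx
  have hw : ∀ j, 0 ≤ wt d m j x := fun j => wt_nonneg h1 h2
  have key : bsum d m a x - G = ∑ j ∈ idx d m, (a j - G) * wt d m j x := by
    have h0 : (∑ j ∈ idx d m, (a j - G) * wt d m j x)
        = bsum d m a x - G * bsum d m (fun _ => (1:ℝ)) x := by
      unfold bsum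
      rw [Finset.mul_sum, ← Finset.sum_sub_distrib]
      exact Finset.sum_congr rfl fun j _ => by ring
    rw [h0, bsum_one]
    ring
  rw [key]
  have hm0 : (0:ℝ) < m := by
    have : (1:ℝ) ≤ m := by exact_mod_cast hm
    linarith
  have e1 : ∑ j ∈ idx d m, (a j - G) * wt d m j x
      ≤ ∑ j ∈ idx d m, (ε + C * ∑ i, ((j i : ℝ)/m - x i)^2) * wt d m j x := by
    refine Finset.sum_le_sum fun j hj => ?_
    refine le_trans (le_abs_self _) ?_
    rw [abs_mul, abs_of_nonneg (hw j)]
    exact mul_le_mul_of_nonneg_right (hb j hj) (hw j)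
  have e1' : |∑ j ∈ idx d m, (a j - G) * wt d m j x|
      ≤ ∑ j ∈ idx d m, (ε + C * ∑ i, ((j i : ℝ)/m - x i)^2) * wt d m j x := by
    refine le_trans (Finset.abs_sum_le_sum_abs _ _) ?_
    refine Finset.sum_le_sum fun j hj => ?_
    rw [abs_mul, abs_of_nonneg (hw j)]
    exact mul_le_mul_of_nonneg_right (hb j hj) (hw j)
  have e2 : ∑ j ∈ idx d m, (ε + C * ∑ i, ((j i : ℝ)/m - x i)^2) * wt d m j x
      = ε * bsum d m (fun _ => (1:ℝ)) x
        + C * ∑ j ∈ idx d m, (∑ i, ((j i : ℝ)/m - x i)^2) * wt d m j x := by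
    unfold bsum
    rw [Finset.mul_sum, Finset.mul_sum, ← Finset.sum_add_distrib]
    exact Finset.sum_congr rfl fun j _ => by ring
  have e3 : ∑ j ∈ idx d m, (∑ i, ((j i : ℝ)/m - x i)^2) * wt d m j x
      = ∑ i : Fin d, bsum d m (fun j => ((j i : ℝ)/m - x i)^2) x := by
    have e3a : ∀ j ∈ idx d m, (∑ i, ((j i : ℝ)/m - x i)^2) * wt d m j x
        = ∑ i : Fin d, ((j i : ℝ)/m - x i)^2 * wt d m j x := fun j _ => Finset.sum_mul _ _ _
    rw [Finset.sum_congr rfl e3a, Finset.sum_comm]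
    rfl
  have e4 : ∑ i : Fin d, bsum d m (fun j => ((j i : ℝ)/m - x i)^2) x ≤ d / m := by
    rw [Finset.sum_congr rfl fun i _ => bsum_variance m hm i x]
    have hper : ∀ i ∈ (Finset.univ : Finset (Fin d)), (x i - (x i)^2)/m ≤ 1/m := by
      intro i _
      have hx1 : x i ≤ 1 := stdSimplex'_coord_le_one ⟨h1, h2⟩ i
      have hx0 := h1 i
      have hnum : x i - (x i)^2 ≤ 1 := by nlinarith
      gcongr
    refine le_trans (Finset.sum_le_sum hper) ?_
    rw [Finset.sum_const, Finset.card_univ, Fintype.card_fin]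
    simp [nsmul_eq_mul]
    rw [div_eq_mul_inv]
  calc |∑ j ∈ idx d m, (a j - G) * wt d m j x|
      ≤ ε * bsum d m (fun _ => (1:ℝ)) x
        + C * ∑ j ∈ idx d m, (∑ i, ((j i : ℝ)/m - x i)^2) * wt d m j x := by rw [← e2]; exact e1'
    _ ≤ ε + C * d / m := by
        rw [bsum_one, mul_one, e3]
        have := mul_le_mul_of_nonneg_left e4 hC
        calc ε + C * ∑ i : Fin d, bsum d m (fun j => ((j i : ℝ)/m - x i)^2) x
            ≤ ε + C * (d / m) := by linarith
          _ = ε + C * d / m := by ring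

lemma tendsto_coeff (K : ℕ) :
    Filter.Tendsto (fun n : ℕ => ((n.descFactorial K : ℕ) : ℝ) / (n:ℝ)^K)
      Filter.atTop (nhds 1) := by
  have h1 : ∀ᶠ n : ℕ in Filter.atTop, ((n.descFactorial K : ℕ) : ℝ) / (n:ℝ)^K
      = ∏ r ∈ Finset.range K, (1 - (r:ℝ)/n) := by
    filter_upwards [Filter.eventually_ge_atTop (max K 1)] with n hn
    have hK : K ≤ n := le_trans (le_max_left _ _) hn
    have hn1 : 1 ≤ n := le_trans (le_max_right _ _) hn
    have hn0 : (n:ℝ) ≠ 0 := Nat.cast_ne_zero.2 (by omega)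
    rw [Nat.descFactorial_eq_prod_range]
    push_cast [Nat.cast_prod]
    have hcast : ∀ r ∈ Finset.range K, ((n - r : ℕ) : ℝ) = (n:ℝ) - r := by
      intro r hr
      have := Finset.mem_range.1 hr
      rw [Nat.cast_sub (by omega)]
    rw [Finset.prod_congr rfl hcast]
    rw [show (n:ℝ)^K = ∏ _r ∈ Finset.range K, (n:ℝ) by
      rw [Finset.prod_const, Finset.card_range]]
    rw [← Finset.prod_div_distrib]
    refine Finset.prod_congr rfl fun r _ => ?_
    field_simp
  have h2 : Filter.Tendsto (fun n : ℕ => ∏ r ∈ Finset.range K, (1 - (r:ℝ)/n))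
      Filter.atTop (nhds 1) := by
    have := tendsto_finset_prod (Finset.range K)
      (fun r _ => (tendsto_const_nhds (x := (1:ℝ))).sub
        (tendsto_const_div_atTop_nhds_zero_nat (r:ℝ)))
    simpa using this
  exact Filter.Tendsto.congr' (Filter.EventuallyEq.symm h1) h2

end SB

set_option maxHeartbeats 2000000

/-- If `d ≥ 1`, `k` is a multi-index and `f : ℝ^d → ℝ` possesses a continuous mixed
partial derivative `g = ∂^{|k|}f/∂x_1^{k_1}⋯∂x_d^{k_d}`, then the corresponding mixed
partial derivatives of the simplex Bernstein polynomials `B_n(f;·)` converge to `g`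
uniformly on the simplex `S^d`. -/
theorem simplexBernstein_mixedPartial_tendstoUniformlyOn (d : ℕ) (hd : 1 ≤ d)
    (k : Fin d → ℕ) (f g : (Fin d → ℝ) → ℝ)
    (hg : IsPartialAlong (multiIndexList k) f g) (hgc : Continuous g) :
    TendstoUniformlyOn (fun n x => mixedPartial k (simplexBernstein d n f) x) g
      Filter.atTop (stdSimplex' d) := by
  classical
  set l := multiIndexList k with hl
  -- compact box
  set Q : Set (Fin d → ℝ) := Set.Icc (fun _ => (-1:ℝ)) (fun _ => 3) with hQdef
  have hQc : IsCompact Q := isCompact_Icc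
  have hmemQ : ∀ u : Fin d → ℝ, (∀ i, -1 ≤ u i ∧ u i ≤ 3) → u ∈ Q := by
    intro u hu
    rw [hQdef, Set.mem_Icc]
    exact ⟨fun i => (hu i).1, fun i => (hu i).2⟩
  obtain ⟨M0, hM0⟩ := hQc.exists_bound_of_continuousOn hgc.continuousOn
  set M := max M0 1 with hMdef
  have hM1 : (1:ℝ) ≤ M := le_max_right _ _
  have hMpos : (0:ℝ) < M := lt_of_lt_of_le one_pos hM1
  have hgbd : ∀ u ∈ Q, |g u| ≤ M := fun u hu =>
    le_trans (by simpa [Real.norm_eq_abs] using hM0 u hu) (le_max_left _ _)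
  have hguc : UniformContinuousOn g Q := hQc.uniformContinuousOn_of_continuous hgc.continuousOn
  rw [Metric.tendstoUniformlyOn_iff]
  intro ε hε
  obtain ⟨δ, hδpos, hδ⟩ := (Metric.uniformContinuousOn_iff_le.1 hguc) (ε/4) (by positivity)
  set C := 8*M/δ^2 with hCdef
  have hCpos : (0:ℝ) < C := by positivity
  -- eventual conditions
  have hev1 : ∀ᶠ n : ℕ in Filter.atTop,
      |((n.descFactorial l.length : ℕ):ℝ)/(n:ℝ)^l.length - 1| ≤ ε/(4*M) := by
    have h := Metric.tendsto_nhds.1 (SB.tendsto_coeff l.length) (ε/(4*M)) (by positivity)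
    filter_upwards [h] with n hn
    rw [Real.dist_eq] at hn
    exact hn.le
  have hev2 : ∀ᶠ n : ℕ in Filter.atTop, l.length + 1 ≤ n := Filter.eventually_ge_atTop _
  have hev3 : ∀ᶠ n : ℕ in Filter.atTop, (2*(l.length:ℝ))/n ≤ δ/2 := by
    have h := Metric.tendsto_nhds.1
      (tendsto_const_div_atTop_nhds_zero_nat (2*(l.length:ℝ))) (δ/2) (by positivity)
    filter_upwards [h] with n hn
    rw [Real.dist_eq, sub_zero] at hn
    exact (le_abs_self _).trans hn.le
  have hev4 : ∀ᶠ n : ℕ in Filter.atTop, C * d / ((n - l.length : ℕ):ℝ) ≤ ε/4 := by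
    have hsub : Filter.Tendsto (fun n : ℕ => n - l.length) Filter.atTop Filter.atTop :=
      Filter.tendsto_sub_atTop_nat l.length
    have h := Metric.tendsto_nhds.1
      ((tendsto_const_div_atTop_nhds_zero_nat (C * d)).comp hsub) (ε/4) (by positivity)
    filter_upwards [h] with n hn
    rw [Function.comp_apply, Real.dist_eq, sub_zero] at hn
    exact (le_abs_self _).trans hn.le
  filter_upwards [hev1, hev2, hev3, hev4] with n h1 h2 h3 h4
  intro x hx
  set m := n - l.length with hm
  have hmn : m + l.length = n := Nat.sub_add_cancel (by omega)
  have hm1 : 1 ≤ m := by omega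
  have hn0 : (n:ℝ) ≠ 0 := Nat.cast_ne_zero.2 (by omega)
  have hnpos : (0:ℝ) < n := by
    have : (0:ℕ) < n := by omega
    exact_mod_cast this
  have hmpos : (0:ℝ) < m := by
    have : (0:ℕ) < m := by omega
    exact_mod_cast this
  have hncast : (n:ℝ) = (m:ℝ) + (l.length:ℝ) := by exact_mod_cast congrArg (Nat.cast : ℕ → ℝ) hmn.symm
  -- the amplified node values
  set a : (Fin d → ℕ) → ℝ :=
    fun j => (n:ℝ)^l.length * SB.diffReal l (1/(n:ℝ)) f (fun i => (j i : ℝ)/n) with ha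
  -- representation of the mixed partial derivative
  have hrep : mixedPartial k (simplexBernstein d n f) x
      = (((n.descFactorial l.length : ℕ):ℝ)/(n:ℝ)^l.length) * SB.bsum d m a x := by
    have hsf : simplexBernstein d n f
        = SB.bsum d n (fun j => f (fun i => (j i : ℝ)/n)) :=
      funext fun y => SB.simplexBernstein_eq n f y
    have hbs : SB.bsum d n (fun j => f (fun i => (j i : ℝ)/n))
        = SB.bsum d (m + l.length) (fun j => f (fun i => (j i : ℝ)/n)) := by rw [hmn]
    have hstep := congrFun (SB.applyList_bsum l m (fun j => f (fun i => (j i : ℝ)/n))) x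
    have e1 : mixedPartial k (simplexBernstein d n f) x
        = (((m + l.length).descFactorial l.length : ℕ):ℝ)
            * SB.bsum d m (SB.diffOp l (fun j => f (fun i => (j i : ℝ)/n))) x := by
      rw [hsf, hbs, SB.mixedPartial_eq_applyList]
      exact hstep
    rw [e1, SB.diffOp_eq_diffReal l n (by omega) f]
    have e2 : SB.bsum d m (fun j => SB.diffReal l (1/(n:ℝ)) f (fun i => (j i : ℝ)/n)) x
        = ((n:ℝ)^l.length)⁻¹ * SB.bsum d m a x := by
      rw [ha]
      rw [SB.bsum_smul m ((n:ℝ)^l.length)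
        (fun j => SB.diffReal l (1/(n:ℝ)) f (fun i => (j i : ℝ)/n)) x]
      have hpow : ((n:ℝ)^l.length) ≠ 0 := pow_ne_zero _ hn0
      field_simp
    rw [e2, hmn]
    field_simp
  -- per-node mean value representation
  have hjfacts : ∀ j ∈ SB.idx d m, ∃ ξ : Fin d → ℝ, a j = g ξ ∧ ξ ∈ Q ∧
      (∀ r, |ξ r - (j r : ℝ)/m| ≤ (l.length:ℝ)/n) := by
    intro j hj
    obtain ⟨ξ, hb, he⟩ := SB.diffReal_mvt l f g hg (1/(n:ℝ)) (by positivity)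
      (fun i => (j i : ℝ)/n)
    have hjr : ∀ r, (j r : ℝ) ≤ m := fun r => Nat.cast_le.2 (SB.mem_idx_le hj r)
    have hKn : (l.length:ℝ) ≤ n := by rw [hncast]; linarith [hmpos.le]
    have hlow : ∀ r, (0:ℝ) ≤ (j r : ℝ)/n := fun r => by positivity
    have hup : ∀ r, (j r : ℝ)/n ≤ 1 := by
      intro r
      rw [div_le_one hnpos]
      calc (j r : ℝ) ≤ m := hjr r
        _ ≤ n := by rw [hncast]; simp [Nat.cast_nonneg]
    have hstep : (1/(n:ℝ)) * l.length ≤ 1 := by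
      rw [one_div, inv_mul_le_iff₀ hnpos, mul_one]
      exact hKn
    refine ⟨ξ, ?_, ?_, ?_⟩
    · have haj : a j = (n:ℝ)^l.length * SB.diffReal l (1/(n:ℝ)) f (fun i => (j i : ℝ)/n) := rfl
      rw [haj, he]
      have hpow : ((n:ℝ)^l.length) ≠ 0 := pow_ne_zero _ hn0
      field_simp
      rw [← mul_pow, mul_one_div_cancel hn0, one_pow, one_mul]
    · refine hmemQ ξ fun r => ?_
      obtain ⟨hbl, hbu⟩ := hb r
      constructor
      · linarith [hlow r]
      · have := hup r
        linarith
    · intro r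
      obtain ⟨hbl, hbu⟩ := hb r
      have hmn' : (m:ℝ) ≤ n := by
        rw [hncast]
        have : (0:ℝ) ≤ (l.length:ℝ) := Nat.cast_nonneg _
        linarith
      have hmono : (j r : ℝ)/n ≤ (j r : ℝ)/m := by gcongr
      have hgap : (j r : ℝ)/m - (j r : ℝ)/n ≤ (l.length:ℝ)/n := by
        rw [div_sub_div _ _ (ne_of_gt hmpos) hn0, div_le_div_iff₀ (by positivity) hnpos]
        have h5 : (j r : ℝ) * (l.length:ℝ) ≤ (m:ℝ) * (l.length:ℝ) :=
          mul_le_mul_of_nonneg_right (hjr r) (Nat.cast_nonneg _)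
        rw [hncast]
        have h6 : (0:ℝ) ≤ (m:ℝ) + (l.length:ℝ) := by positivity
        nlinarith [mul_le_mul_of_nonneg_right h5 h6]
      have hone : (1/(n:ℝ)) * (l.length:ℝ) = (l.length:ℝ)/n := by ring
      rw [hone] at hbu
      rw [abs_le]
      constructor
      · linarith
      · linarith
  -- x lies in the box
  have hxQ : x ∈ Q := by
    refine hmemQ x fun i => ?_
    have := hx.1 i
    have := SB.stdSimplex'_coord_le_one hx i
    constructor <;> linarith
  -- pointwise bound for the estimate
  have hbound : ∀ j ∈ SB.idx d m, |a j - g x| ≤ ε/4 + C * ∑ i, ((j i : ℝ)/m - x i)^2 := by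
    intro j hj
    obtain ⟨ξ, haj, hξQ, hnear⟩ := hjfacts j hj
    have hKn2 : (l.length:ℝ)/n ≤ δ/4 := by
      have : (2*(l.length:ℝ))/n = 2 * ((l.length:ℝ)/n) := by ring
      rw [this] at h3
      linarith
    have hsq_nonneg : (0:ℝ) ≤ ∑ i, ((j i : ℝ)/m - x i)^2 :=
      Finset.sum_nonneg fun i _ => sq_nonneg _
    by_cases hcase : ∀ i, |(j i : ℝ)/m - x i| ≤ δ/2
    · -- near case
      have hdist : dist ξ x ≤ δ := by
        rw [dist_pi_le_iff hδpos.le]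
        intro i
        rw [Real.dist_eq]
        have t1 := hnear i
        have t2 := hcase i
        have : |ξ i - x i| ≤ |ξ i - (j i : ℝ)/m| + |(j i : ℝ)/m - x i| := abs_sub_le _ _ _
        linarith [hKn2, hδpos]
      have hgg : |g ξ - g x| ≤ ε/4 := by
        have := hδ ξ hξQ x hxQ hdist
        rwa [Real.dist_eq] at this
      rw [haj]
      have : (0:ℝ) ≤ C * ∑ i, ((j i : ℝ)/m - x i)^2 := mul_nonneg hCpos.le hsq_nonneg
      linarith
    · -- far case
      push_neg at hcase
      obtain ⟨i0, hi0⟩ := hcase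
      have hsq_lb : (δ/2)^2 ≤ ∑ i, ((j i : ℝ)/m - x i)^2 := by
        refine le_trans ?_ (Finset.single_le_sum (f := fun i => ((j i : ℝ)/m - x i)^2)
          (fun i _ => sq_nonneg _) (Finset.mem_univ i0))
        have h7 : (δ/2) ≤ |(j i0 : ℝ)/m - x i0| := hi0.le
        calc (δ/2)^2 ≤ |(j i0 : ℝ)/m - x i0|^2 :=
              pow_le_pow_left₀ (by positivity) h7 2
          _ = ((j i0 : ℝ)/m - x i0)^2 := sq_abs _
      have h2M : |a j - g x| ≤ 2*M := by
        rw [haj]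
        have b1 := hgbd ξ hξQ
        have b2 := hgbd x hxQ
        calc |g ξ - g x| ≤ |g ξ| + |g x| := abs_sub _ _
          _ ≤ 2*M := by linarith
      have hCM : 2*M = C * (δ/2)^2 := by
        rw [hCdef]
        field_simp
        ring
      calc |a j - g x| ≤ 2*M := h2M
        _ = C * (δ/2)^2 := hCM
        _ ≤ C * ∑ i, ((j i : ℝ)/m - x i)^2 := mul_le_mul_of_nonneg_left hsq_lb hCpos.le
        _ ≤ ε/4 + C * ∑ i, ((j i : ℝ)/m - x i)^2 := by linarith
  -- the main estimate
  have hmain : |SB.bsum d m a x - g x| ≤ ε/4 + C * d / m :=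
    SB.bsum_estimate hm1 hCpos.le hx hbound
  have habs : |SB.bsum d m a x| ≤ M := by
    refine SB.bsum_bound hx fun j hj => ?_
    obtain ⟨ξ, haj, hξQ, _⟩ := hjfacts j hj
    rw [haj]
    exact hgbd ξ hξQ
  -- conclusion
  rw [Real.dist_eq, hrep]
  have t1 : |g x - ((n.descFactorial l.length : ℕ):ℝ)/(n:ℝ)^l.length * SB.bsum d m a x|
      ≤ |g x - SB.bsum d m a x|
        + |SB.bsum d m a x - ((n.descFactorial l.length : ℕ):ℝ)/(n:ℝ)^l.length * SB.bsum d m a x| :=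
    abs_sub_le _ _ _
  have t2 : |SB.bsum d m a x - ((n.descFactorial l.length : ℕ):ℝ)/(n:ℝ)^l.length * SB.bsum d m a x|
      = |((n.descFactorial l.length : ℕ):ℝ)/(n:ℝ)^l.length - 1| * |SB.bsum d m a x| := by
    have e : SB.bsum d m a x - ((n.descFactorial l.length : ℕ):ℝ)/(n:ℝ)^l.length * SB.bsum d m a x
        = -((((n.descFactorial l.length : ℕ):ℝ)/(n:ℝ)^l.length - 1) * SB.bsum d m a x) := by ring
    rw [e, abs_neg, abs_mul]
  have t3 : |((n.descFactorial l.length : ℕ):ℝ)/(n:ℝ)^l.length - 1| * |SB.bsum d m a x|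
      ≤ (ε/(4*M)) * M :=
    mul_le_mul h1 habs (abs_nonneg _) (by positivity)
  have t4 : (ε/(4*M)) * M = ε/4 := by
    field_simp
  have t5 : |g x - SB.bsum d m a x| = |SB.bsum d m a x - g x| := abs_sub_comm _ _
  have t6 : C * (d:ℝ) / (m:ℝ) ≤ ε/4 := h4
  calc |g x - ((n.descFactorial l.length : ℕ):ℝ)/(n:ℝ)^l.length * SB.bsum d m a x|
      ≤ |SB.bsum d m a x - g x|
        + |((n.descFactorial l.length : ℕ):ℝ)/(n:ℝ)^l.length - 1| * |SB.bsum d m a x| := by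
        rw [← t2, ← t5]; exact t1
    _ ≤ (ε/4 + C * d / m) + (ε/4) := by
        have := t3.trans (le_of_eq t4)
        linarith
    _ ≤ (ε/4 + ε/4) + ε/4 := by linarith
    _ < ε := by linarith
end

section
/- Let d ≥ 1, n ≥ 1, let k = (k_1,…,k_d) be a multi-index with k_i ≤ n for all i, and let f : ℝ^d → ℝ. Then the mixed partial derivative of the cube Bernstein polynomial satisfies ∂^{|k|}B̃_n(f;x)/∂x_1^{k_1}⋯∂x_d^{k_d} = ∏_{i=1}^{d}(n(n−1)⋯(n−k_i+1)) · ∑_{0 ≤ j_i ≤ n−k_i, i=1,…,d} Δ^k f(j_1/n,…,j_d/n) · ∏_{i=1}^{d} C(n−k_i, j_i) x_i^{j_i} (1−x_i)^{n−k_i−j_i}, where Δ^k = ∏_{i=1}^{d} Δ_{(x_i)}^{k_i} is the composition of iterated coordinate-wise forward differences with step 1/n. -/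
/-- Forward difference of `g : ℝ^d → ℝ` in the `i`-th coordinate with step `z`. -/
def coordFwdDiff {d : ℕ} (i : Fin d) (z : ℝ) (g : (Fin d → ℝ) → ℝ) :
    (Fin d → ℝ) → ℝ :=
  fun x => g (Function.update x i (x i + z)) - g x

/-- The iterated finite difference `Δ^k = Δ_{(x_1)}^{k_1} ∘ ⋯ ∘ Δ_{(x_d)}^{k_d}` with
step `1/n` in each coordinate. -/
noncomputable def multiFwdDiffN {d : ℕ} (n : ℕ) (k : Fin d → ℕ) (g : (Fin d → ℝ) → ℝ) :
    (Fin d → ℝ) → ℝ :=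
  (List.finRange d).foldr (fun i h => (coordFwdDiff i (1 / (n : ℝ)))^[k i] h) g



section Aux
open Finset

noncomputable def bf (m j : ℕ) (t : ℝ) : ℝ := (m.choose j : ℝ) * t ^ j * (1 - t) ^ (m - j)

noncomputable def bf' (m j : ℕ) (t : ℝ) : ℝ :=
  (m.choose j : ℝ) * ((j : ℝ) * t ^ (j - 1) * (1 - t) ^ (m - j)
    - ((m - j : ℕ) : ℝ) * t ^ j * (1 - t) ^ (m - j - 1))

lemma hasDerivAt_bf (m j : ℕ) (t : ℝ) : HasDerivAt (fun s => bf m j s) (bf' m j t) t := by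
  have h1 : HasDerivAt (fun s : ℝ => s ^ j) ((j : ℝ) * t ^ (j - 1)) t := hasDerivAt_pow j t
  have hsub : HasDerivAt (fun s : ℝ => 1 - s) (-1 : ℝ) t := by
    simpa using (hasDerivAt_id' t).const_sub (1 : ℝ)
  have h2 : HasDerivAt (fun s : ℝ => (1 - s) ^ (m - j))
      (((m - j : ℕ) : ℝ) * (1 - t) ^ (m - j - 1) * (-1)) t := hsub.pow _
  have h3 := (h1.fun_mul h2).const_mul ((m.choose j : ℝ))
  have heq : (fun s : ℝ => (m.choose j : ℝ) * (s ^ j * (1 - s) ^ (m - j))) = fun s => bf m j s := by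
    funext s; simp [bf, mul_assoc]
  rw [heq] at h3
  refine h3.congr_deriv ?_
  simp only [bf']; ring

lemma oned (m : ℕ) (hm : 1 ≤ m) (γ : ℕ → ℝ) (t : ℝ) :
    ∑ a ∈ range (m + 1), γ a * bf' m a t
      = (m : ℝ) * ∑ a ∈ range m, (γ (a + 1) - γ a) * bf (m - 1) a t := by
  have key1n : ∀ a : ℕ, m.choose (a + 1) * (a + 1) = m * (m - 1).choose a := by
    intro a
    have h := Nat.add_one_mul_choose_eq (m - 1) a
    simp only [Nat.succ_eq_add_one, Nat.sub_add_cancel hm] at h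
    omega
  have key1 : ∀ a : ℕ, (m.choose (a + 1) : ℝ) * ((a : ℝ) + 1) = (m : ℝ) * ((m - 1).choose a : ℝ) := by
    intro a; exact_mod_cast key1n a
  have key2 : ∀ a : ℕ, (m.choose a : ℝ) * ((m - a : ℕ) : ℝ) = (m : ℝ) * ((m - 1).choose a : ℝ) := by
    intro a
    have h := Nat.choose_succ_right_eq m a
    have : m.choose a * (m - a) = m * (m - 1).choose a := by rw [← h]; exact key1n a
    exact_mod_cast this
  have hsplit : ∀ a, γ a * bf' m a t =
      γ a * ((m.choose a : ℝ) * (a : ℝ) * t ^ (a - 1) * (1 - t) ^ (m - a))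
      - γ a * ((m.choose a : ℝ) * ((m - a : ℕ) : ℝ) * t ^ a * (1 - t) ^ (m - a - 1)) := by
    intro a; simp only [bf']; ring
  calc ∑ a ∈ range (m + 1), γ a * bf' m a t
      = ∑ a ∈ range (m + 1), (γ a * ((m.choose a : ℝ) * (a : ℝ) * t ^ (a - 1) * (1 - t) ^ (m - a))
          - γ a * ((m.choose a : ℝ) * ((m - a : ℕ) : ℝ) * t ^ a * (1 - t) ^ (m - a - 1))) :=
        Finset.sum_congr rfl fun a _ => hsplit a
    _ = (∑ a ∈ range (m + 1), γ a * ((m.choose a : ℝ) * (a : ℝ) * t ^ (a - 1) * (1 - t) ^ (m - a)))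
        - ∑ a ∈ range (m + 1), γ a * ((m.choose a : ℝ) * ((m - a : ℕ) : ℝ) * t ^ a * (1 - t) ^ (m - a - 1)) :=
        Finset.sum_sub_distrib _ _
    _ = (∑ a ∈ range m, γ (a + 1) * ((m : ℝ) * ((m - 1).choose a : ℝ) * t ^ a * (1 - t) ^ (m - 1 - a)))
        - ∑ a ∈ range m, γ a * ((m : ℝ) * ((m - 1).choose a : ℝ) * t ^ a * (1 - t) ^ (m - 1 - a)) := by
        congr 1
        · rw [Finset.sum_range_succ']
          simp only [Nat.cast_zero, mul_zero, zero_mul, add_zero]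
          apply Finset.sum_congr rfl
          intro a _
          have h1 : m - (a + 1) = m - 1 - a := by omega
          have h2 : (a + 1) - 1 = a := by omega
          rw [h1, h2]
          push_cast
          linear_combination (γ (a + 1) * t ^ a * (1 - t) ^ (m - 1 - a)) * key1 a
        · rw [Finset.sum_range_succ]
          simp only [Nat.sub_self, Nat.cast_zero, mul_zero, zero_mul, add_zero]
          apply Finset.sum_congr rfl
          intro a _
          have h1 : m - a - 1 = m - 1 - a := by omega
          rw [h1]
          linear_combination (γ a * t ^ a * (1 - t) ^ (m - 1 - a)) * key2 a
    _ = (m : ℝ) * ∑ a ∈ range m, (γ (a + 1) - γ a) * bf (m - 1) a t := by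
        rw [Finset.mul_sum, ← Finset.sum_sub_distrib]
        apply Finset.sum_congr rfl
        intro a _
        simp only [bf]; ring

/-- General multivariate Bernstein-type sum. -/
noncomputable def SB {d : ℕ} (m : Fin d → ℕ) (c : (Fin d → ℕ) → ℝ) (x : Fin d → ℝ) : ℝ :=
  ∑ j ∈ Fintype.piFinset (fun i : Fin d => Finset.range (m i + 1)),
    c j * ∏ i, bf (m i) (j i) (x i)

/-- One coordinate forward difference on coefficient functions. -/
def dOp {d : ℕ} (i : Fin d) (c : (Fin d → ℕ) → ℝ) : (Fin d → ℕ) → ℝ :=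
  fun j => c (Function.update j i (j i + 1)) - c j

lemma sum_piFinset_split {d : ℕ} {M : Type*} [AddCommMonoid M]
    (r : Fin d → Finset ℕ) (i : Fin d) (g : (Fin d → ℕ) → M) :
    ∑ j ∈ Fintype.piFinset r, g j =
      ∑ p ∈ Fintype.piFinset (Function.update r i {0}), ∑ a ∈ r i, g (Function.update p i a) := by
  rw [← Finset.sum_product']
  apply Finset.sum_nbij' (i := fun j => (Function.update j i 0, j i))
    (j := fun p => Function.update p.1 i p.2)
  · intro j hj
    rw [Finset.mem_product]
    rw [Fintype.mem_piFinset] at hj ⊢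
    constructor
    · intro a
      rcases eq_or_ne a i with rfl | h
      · simp
      · simp [Function.update_of_ne h, hj a]
    · exact hj i
  · intro p hp
    rw [Finset.mem_product] at hp
    rw [Fintype.mem_piFinset] at hp ⊢
    intro a
    rcases eq_or_ne a i with rfl | h
    · simpa using hp.2
    · have := hp.1 a
      simp only [Function.update_of_ne h] at this ⊢
      exact this
  · intro j hj
    simp [Function.update_idem, Function.update_eq_self]
  · intro p hp
    rw [Finset.mem_product, Fintype.mem_piFinset] at hp
    have h0 : p.1 i = 0 := by simpa using hp.1 i
    have h1 : Function.update p.1 i (0 : ℕ) = p.1 := by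
      rw [← h0]; exact Function.update_eq_self i p.1
    simp [Function.update_idem, h1]
  · intro j hj
    simp [Function.update_idem, Function.update_eq_self]

lemma stepSB {d : ℕ} (i : Fin d) (m : Fin d → ℕ) (hm : 1 ≤ m i) (c : (Fin d → ℕ) → ℝ)
    (x : Fin d → ℝ) :
    partialDeriv' i (SB m c) x
      = (m i : ℝ) * SB (Function.update m i (m i - 1)) (dOp i c) x := by
  classical
  set J := Fintype.piFinset (fun i' : Fin d => Finset.range (m i' + 1)) with hJ
  set P : (Fin d → ℕ) → ℝ := fun j => ∏ i' ∈ Finset.univ.erase i, bf (m i') (j i') (x i') with hP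
  have hPup : ∀ (p : Fin d → ℕ) (a : ℕ), P (Function.update p i a) = P p := by
    intro p a
    apply Finset.prod_congr rfl
    intro i' hi'
    rw [Function.update_of_ne (Finset.ne_of_mem_erase hi')]
  have hrepr : ∀ t, SB m c (Function.update x i t) = ∑ j ∈ J, (c j * P j) * bf (m i) (j i) t := by
    intro t
    apply Finset.sum_congr rfl
    intro j _
    rw [← Finset.mul_prod_erase Finset.univ _ (Finset.mem_univ i)]
    have h2 : ∀ i' ∈ Finset.univ.erase i,
        bf (m i') (j i') (Function.update x i t i') = bf (m i') (j i') (x i') := by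
      intro i' hi'; rw [Function.update_of_ne (Finset.ne_of_mem_erase hi')]
    rw [Finset.prod_congr rfl h2, Function.update_self]
    ring
  have hder : HasDerivAt (fun t => SB m c (Function.update x i t))
      (∑ j ∈ J, (c j * P j) * bf' (m i) (j i) (x i)) (x i) := by
    have heq : (fun t => SB m c (Function.update x i t))
        = fun t => ∑ j ∈ J, (c j * P j) * bf (m i) (j i) t := funext hrepr
    rw [heq]
    exact HasDerivAt.fun_sum fun j _ => (hasDerivAt_bf (m i) (j i) (x i)).const_mul _
  have hderiv : partialDeriv' i (SB m c) x
      = ∑ j ∈ J, (c j * P j) * bf' (m i) (j i) (x i) := hder.deriv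
  rw [hderiv, hJ, sum_piFinset_split]
  unfold SB
  rw [sum_piFinset_split (fun i' => Finset.range (Function.update m i (m i - 1) i' + 1)) i]
  have hr : (Function.update (fun i' => Finset.range (Function.update m i (m i - 1) i' + 1)) i
        ({0} : Finset ℕ))
      = Function.update (fun i' => Finset.range (m i' + 1)) i ({0} : Finset ℕ) := by
    funext i'
    rcases eq_or_ne i' i with rfl | h
    · simp
    · simp [Function.update_of_ne h]
  rw [hr, Finset.mul_sum]
  apply Finset.sum_congr rfl
  intro p hp
  have hia : ∀ a : ℕ, Function.update p i a i = a := fun a => Function.update_self ..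
  have hprod : ∀ a : ℕ, ∏ i', bf (Function.update m i (m i - 1) i') (Function.update p i a i') (x i')
      = bf (m i - 1) a (x i) * P p := by
    intro a
    rw [← Finset.mul_prod_erase Finset.univ _ (Finset.mem_univ i)]
    congr 1
    · rw [Function.update_self, Function.update_self]
    · apply Finset.prod_congr rfl
      intro i' hi'
      rw [Function.update_of_ne (Finset.ne_of_mem_erase hi'),
        Function.update_of_ne (Finset.ne_of_mem_erase hi')]
  have hupi : Function.update m i (m i - 1) i = m i - 1 := Function.update_self ..
  calc ∑ a ∈ Finset.range (m i + 1), (c (Function.update p i a) * P (Function.update p i a))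
        * bf' (m i) (Function.update p i a i) (x i)
      = ∑ a ∈ Finset.range (m i + 1), (c (Function.update p i a) * P p) * bf' (m i) a (x i) := by
        apply Finset.sum_congr rfl
        intro a _
        rw [hPup, hia]
    _ = (m i : ℝ) * ∑ a ∈ Finset.range (m i),
          ((c (Function.update p i (a + 1)) * P p) - (c (Function.update p i a) * P p))
            * bf (m i - 1) a (x i) := oned (m i) hm _ (x i)
    _ = (m i : ℝ) * ∑ a ∈ Finset.range (Function.update m i (m i - 1) i + 1),
          dOp i c (Function.update p i a)
            * ∏ i', bf (Function.update m i (m i - 1) i') (Function.update p i a i') (x i') := by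
        rw [hupi, Nat.sub_add_cancel hm]
        congr 1
        apply Finset.sum_congr rfl
        intro a _
        rw [hprod]
        unfold dOp
        rw [Function.update_idem, hia]
        ring

lemma pd_const_mul {d : ℕ} (i : Fin d) (r : ℝ) (g : (Fin d → ℝ) → ℝ) (x : Fin d → ℝ) :
    partialDeriv' i (fun y => r * g y) x = r * partialDeriv' i g x :=
  deriv_const_mul_field r

lemma pd_iter_const_mul {d : ℕ} (i : Fin d) (K : ℕ) (r : ℝ) (g : (Fin d → ℝ) → ℝ) :
    (partialDeriv' i)^[K] (fun y => r * g y) = fun y => r * (partialDeriv' i)^[K] g y := by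
  induction K generalizing g with
  | zero => rfl
  | succ K ih =>
    rw [Function.iterate_succ_apply', Function.iterate_succ_apply', ih g]
    funext x
    exact pd_const_mul i r _ x

lemma iterSB {d : ℕ} (i : Fin d) (K : ℕ) (m : Fin d → ℕ) (hK : K ≤ m i)
    (c : (Fin d → ℕ) → ℝ) :
    (partialDeriv' i)^[K] (SB m c)
      = fun x => ((m i).descFactorial K : ℝ)
          * SB (Function.update m i (m i - K)) ((dOp i)^[K] c) x := by
  induction K with
  | zero =>
    funext x
    simp [Function.update_eq_self]
  | succ K ih =>
    have hK' : K ≤ m i := by omega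
    rw [Function.iterate_succ_apply', ih hK']
    funext x
    rw [pd_const_mul]
    have hm1 : 1 ≤ Function.update m i (m i - K) i := by
      rw [Function.update_self]; omega
    rw [stepSB i _ hm1]
    rw [Function.update_self, Function.update_idem]
    have h2 : m i - K - 1 = m i - (K + 1) := by omega
    rw [h2, ← Function.iterate_succ_apply' (dOp i)]
    have h3 : ((m i).descFactorial (K + 1) : ℝ)
        = ((m i).descFactorial K : ℝ) * ((m i - K : ℕ) : ℝ) := by
      rw [Nat.descFactorial_succ]; push_cast; ring
    rw [h3]; ring

lemma foldSB {d : ℕ} (k : Fin d → ℕ) (L : List (Fin d)) (hL : L.Nodup) (m : Fin d → ℕ)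
    (hm : ∀ i ∈ L, k i ≤ m i) (c : (Fin d → ℕ) → ℝ) :
    L.foldr (fun i h => (partialDeriv' i)^[k i] h) (SB m c)
      = fun x => ((L.map (fun i => ((m i).descFactorial (k i) : ℝ))).prod)
          * SB (fun i' => if i' ∈ L then m i' - k i' else m i')
              (L.foldr (fun i h => (dOp i)^[k i] h) c) x := by
  induction L with
  | nil =>
    funext x
    simp [SB]
  | cons i L' ih =>
    have hnd : L'.Nodup := (List.nodup_cons.mp hL).2
    have hiL' : i ∉ L' := (List.nodup_cons.mp hL).1
    rw [List.foldr_cons, ih hnd (fun i' h => hm i' (List.mem_cons_of_mem _ h))]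
    rw [pd_iter_const_mul]
    have hm1i : (fun i' => if i' ∈ L' then m i' - k i' else m i') i = m i := by
      simp [hiL']
    rw [iterSB i (k i) _ (by simpa [hiL'] using hm i (List.mem_cons_self)) _]
    have hm2 : Function.update (fun i' => if i' ∈ L' then m i' - k i' else m i') i (m i - k i)
        = fun i' => if i' ∈ i :: L' then m i' - k i' else m i' := by
      funext i'
      rcases eq_or_ne i' i with rfl | h
      · simp
      · simp [Function.update_of_ne h, List.mem_cons, h]
    funext x
    simp only [if_neg hiL', hm2, List.map_cons, List.prod_cons, List.foldr_cons]
    ring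

/-- Restriction of a function on `ℝ^d` to the grid `j/n`. -/
noncomputable def Tn {d : ℕ} (n : ℕ) (g : (Fin d → ℝ) → ℝ) : (Fin d → ℕ) → ℝ :=
  fun j => g (fun i => (j i : ℝ) / n)

lemma T_comm {d : ℕ} (n : ℕ) (i : Fin d) (g : (Fin d → ℝ) → ℝ) :
    Tn n (coordFwdDiff i (1 / (n : ℝ)) g) = dOp i (Tn n g) := by
  funext j
  show g (Function.update (fun i' => (j i' : ℝ) / n) i ((j i : ℝ) / n + 1 / n))
        - g (fun i' => (j i' : ℝ) / n)
      = g (fun i' => ((Function.update j i (j i + 1) i' : ℕ) : ℝ) / n)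
        - g (fun i' => (j i' : ℝ) / n)
  congr 1
  congr 1
  funext i'
  rcases eq_or_ne i' i with rfl | h
  · simp only [Function.update_self]
    push_cast
    ring
  · simp [Function.update_of_ne h]

lemma T_comm_iter {d : ℕ} (n : ℕ) (i : Fin d) (K : ℕ) (g : (Fin d → ℝ) → ℝ) :
    Tn n ((coordFwdDiff i (1 / (n : ℝ)))^[K] g) = (dOp i)^[K] (Tn n g) := by
  induction K generalizing g with
  | zero => rfl
  | succ K ih =>
    rw [Function.iterate_succ_apply, Function.iterate_succ_apply, ih, T_comm]

lemma T_comm_fold {d : ℕ} (n : ℕ) (k : Fin d → ℕ) (L : List (Fin d)) (g : (Fin d → ℝ) → ℝ) :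
    Tn n (L.foldr (fun i h => (coordFwdDiff i (1 / (n : ℝ)))^[k i] h) g)
      = L.foldr (fun i h => (dOp i)^[k i] h) (Tn n g) := by
  induction L with
  | nil => rfl
  | cons i L' ih => rw [List.foldr_cons, List.foldr_cons, T_comm_iter, ih]


end Aux

/-- For `d ≥ 1`, `n ≥ 1`, a multi-index `k` with `k_i ≤ n` for all `i`, and any
`f : ℝ^d → ℝ`,
`∂^{|k|}B̃_n(f;x)/∂x^k = ∏_i n(n-1)⋯(n-k_i+1) ·
  ∑_{0 ≤ j_i ≤ n-k_i} Δ^k f(j/n) ∏_i C(n-k_i,j_i) x_i^{j_i} (1-x_i)^{n-k_i-j_i}`. -/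
theorem cubeBernstein_mixedPartial_eq (d n : ℕ) (hd : 1 ≤ d) (hn : 1 ≤ n)
    (k : Fin d → ℕ) (hk : ∀ i, k i ≤ n) (f : (Fin d → ℝ) → ℝ) (x : Fin d → ℝ) :
    mixedPartial k (cubeBernstein d n f) x =
      (∏ i, (n.descFactorial (k i) : ℝ)) *
        ∑ j ∈ Fintype.piFinset (fun i : Fin d => Finset.range (n - k i + 1)),
          multiFwdDiffN n k f (fun i => (j i : ℝ) / n) *
            ∏ i, ((n - k i).choose (j i) : ℝ) * x i ^ (j i) *
              (1 - x i) ^ (n - k i - j i) := by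
  have hcube : cubeBernstein d n f = SB (fun _ : Fin d => n) (Tn n f) := rfl
  have h := foldSB k (List.finRange d) (List.nodup_finRange d) (fun _ => n)
    (fun i _ => hk i) (Tn n f)
  unfold mixedPartial
  rw [hcube, h]
  have hm : (fun i' => if i' ∈ List.finRange d then n - k i' else n) = fun i' => n - k i' := by
    funext i'; simp [List.mem_finRange]
  have hc : (List.finRange d).foldr (fun i h => (dOp i)^[k i] h) (Tn n f)
      = Tn n (multiFwdDiffN n k f) := (T_comm_fold n k _ f).symm
  rw [hm, hc]
  have hprodc : ((List.finRange d).map (fun i => ((n.descFactorial (k i)) : ℝ))).prod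
      = ∏ i, (n.descFactorial (k i) : ℝ) := (Fin.prod_univ_def _).symm
  rw [hprodc]
  rfl
end

section
/- Let d ≥ 1, n ≥ 1, let k = (k_1,…,k_d) be a multi-index with |k| ≤ n, and let f : ℝ^d → ℝ. Then the mixed partial derivative of the simplex Bernstein polynomial satisfies ∂^{|k|}B_n(f;x)/∂x_1^{k_1}⋯∂x_d^{k_d} = (n!/(n−|k|)!) · ∑_{j_1+⋯+j_d ≤ n−|k|, j_i ≥ 0} Δ_{(x_1)}^{k_1}⋯Δ_{(x_d)}^{k_d} f(j_1/n,…,j_d/n) · ((n−|k|)!/(j_1!⋯j_d!(n−|k|−|j|)!)) · x_1^{j_1}⋯x_d^{j_d} (1−‖x‖)^{n−|k|−|j|}. -/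
open Finset
noncomputable def Bn (d n m : ℕ) (g : (Fin d → ℕ) → ℝ) (x : Fin d → ℝ) : ℝ :=
  ∑ j ∈ (Fintype.piFinset (fun _ : Fin d => Finset.range (n + 1))).filter
      (fun j => ∑ i, j i ≤ m),
    g j * ((m.factorial : ℝ) / (((∏ i, (j i).factorial) * (m - ∑ i, j i).factorial : ℕ) : ℝ)) *
      (∏ i, x i ^ (j i)) * (1 - ∑ i, x i) ^ (m - ∑ i, j i)

def natDiff {d : ℕ} (i : Fin d) (g : (Fin d → ℕ) → ℝ) : (Fin d → ℕ) → ℝ :=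
  fun j => g (Function.update j i (j i + 1)) - g j

noncomputable def Cc (d m : ℕ) (j : Fin d → ℕ) : ℝ :=
  (m.factorial : ℝ) / (((∏ i, (j i).factorial) * (m - ∑ i, j i).factorial : ℕ) : ℝ)

lemma prod_comp_update {d : ℕ} {M : Type*} [CommMonoid M] (F : Fin d → ℕ → M)
    (j : Fin d → ℕ) (i : Fin d) (v : ℕ) :
    ∏ i', F i' (Function.update j i v i') = F i v * ∏ i' ∈ univ.erase i, F i' (j i') := by
  rw [← Finset.mul_prod_erase univ (fun i' => F i' (Function.update j i v i')) (mem_univ i),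
    Function.update_self]
  congr 1
  exact Finset.prod_congr rfl fun i' hi' => by
    rw [Function.update_of_ne (Finset.ne_of_mem_erase hi')]

lemma sum_update_nat {d : ℕ} (j : Fin d → ℕ) (i : Fin d) (v : ℕ) :
    ∑ i', Function.update j i v i' = v + ∑ i' ∈ univ.erase i, j i' := by
  rw [Finset.sum_update_of_mem (mem_univ i), Finset.erase_eq]

lemma sum_eq_add_erase {d : ℕ} (j : Fin d → ℕ) (i : Fin d) :
    ∑ i', j i' = j i + ∑ i' ∈ univ.erase i, j i' :=
  (Finset.add_sum_erase univ j (mem_univ i)).symm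

lemma prod_factorial_ne_zero {d : ℕ} (j : Fin d → ℕ) :
    ((∏ i, (j i).factorial : ℕ) : ℝ) ≠ 0 := by
  rw [Nat.cast_ne_zero]
  exact Finset.prod_ne_zero_iff.mpr fun i _ => (Nat.factorial_pos _).ne'

lemma Cc_succ_right {d m : ℕ} (j : Fin d → ℕ) (hj : ∑ i, j i ≤ m) :
    ((m + 1 - ∑ i, j i : ℕ) : ℝ) * Cc d (m + 1) j = ((m : ℝ) + 1) * Cc d m j := by
  unfold Cc
  have h1 : m + 1 - ∑ i, j i = (m - ∑ i, j i) + 1 := by omega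
  rw [h1, Nat.factorial_succ, Nat.factorial_succ]
  have hp := prod_factorial_ne_zero (d := d) j
  generalize m - ∑ i, j i = a at *
  have ha : ((a.factorial : ℕ) : ℝ) ≠ 0 :=
    Nat.cast_ne_zero.mpr (Nat.factorial_pos _).ne'
  have hb : ((a : ℕ) : ℝ) + 1 ≠ 0 := by positivity
  push_cast
  field_simp

lemma Cc_pred_coord {d m : ℕ} (j : Fin d → ℕ) (i : Fin d) (hi : j i ≠ 0)
    (hj : ∑ i', j i' ≤ m + 1) :
    ((j i : ℕ) : ℝ) * Cc d (m + 1) j =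
      ((m : ℝ) + 1) * Cc d m (Function.update j i (j i - 1)) := by
  obtain ⟨a, ha⟩ : ∃ a, j i = a + 1 := ⟨j i - 1, by omega⟩
  have hs : 1 ≤ ∑ i', j i' := by
    have : j i ≤ ∑ i', j i' := Finset.single_le_sum (fun i' _ => Nat.zero_le _) (mem_univ i)
    omega
  unfold Cc
  rw [prod_comp_update (fun _ v => v.factorial), sum_update_nat]
  have h2 : j i - 1 = a := by omega
  rw [h2]
  have h3 : a + ∑ i' ∈ univ.erase i, j i' = ∑ i', j i' - 1 := by
    have := sum_eq_add_erase j i; omega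
  rw [h3]
  have h4 : m - (∑ i', j i' - 1) = m + 1 - ∑ i', j i' := by omega
  rw [h4]
  have h5 : ∏ i', (j i').factorial =
      (j i).factorial * ∏ i' ∈ univ.erase i, (j i').factorial :=
    (Finset.mul_prod_erase univ (fun i' => (j i').factorial) (mem_univ i)).symm
  rw [h5, ha, Nat.factorial_succ, Nat.factorial_succ]
  have hpe : ((∏ i' ∈ univ.erase i, (j i').factorial : ℕ) : ℝ) ≠ 0 := by
    rw [Nat.cast_ne_zero]
    exact Finset.prod_ne_zero_iff.mpr fun i' _ => (Nat.factorial_pos _).ne'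
  have haf : ((a.factorial : ℕ) : ℝ) ≠ 0 := Nat.cast_ne_zero.mpr (Nat.factorial_pos _).ne'
  have hbf : (((m + 1 - ∑ i', j i').factorial : ℕ) : ℝ) ≠ 0 :=
    Nat.cast_ne_zero.mpr (Nat.factorial_pos _).ne'
  push_cast
  field_simp

lemma hasDerivAt_aux (a b : ℕ) (c0 t : ℝ) :
    HasDerivAt (fun t => t ^ a * (c0 - t) ^ b)
      ((a : ℝ) * t ^ (a - 1) * (c0 - t) ^ b - (b : ℝ) * (c0 - t) ^ (b - 1) * t ^ a) t := by
  have h1 : HasDerivAt (fun t : ℝ => t ^ a) ((a : ℝ) * t ^ (a - 1)) t := hasDerivAt_pow a t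
  have h3 : HasDerivAt (fun t : ℝ => c0 - t) (-1) t := by
    simpa using (hasDerivAt_id t).const_sub c0
  have h2 : HasDerivAt (fun t : ℝ => (c0 - t) ^ b)
      (-((b : ℝ) * (c0 - t) ^ (b - 1))) t := by
    exact (h3.pow b).congr_deriv (by ring)
  have h := h1.mul h2
  exact h.congr_deriv (by ring)

lemma hasDerivAt_Bn (d n : ℕ) (i : Fin d) (m : ℕ) (hmn : m + 1 ≤ n)
    (g : (Fin d → ℕ) → ℝ) (x : Fin d → ℝ) :
    HasDerivAt (fun t => Bn d n (m + 1) g (Function.update x i t))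
      (((m : ℝ) + 1) * Bn d n m (natDiff i g) x) (x i) := by
  classical
  set S₁ := (Fintype.piFinset (fun _ : Fin d => Finset.range (n + 1))).filter
      (fun j => ∑ i', j i' ≤ m + 1) with hS₁
  set S₀ := (Fintype.piFinset (fun _ : Fin d => Finset.range (n + 1))).filter
      (fun j => ∑ i', j i' ≤ m) with hS₀
  set c0 : ℝ := 1 - ∑ i' ∈ univ.erase i, x i' with hc0
  set P : (Fin d → ℕ) → ℝ := fun j => ∏ i' ∈ univ.erase i, x i' ^ j i' with hP
  have hc0x : c0 - x i = 1 - ∑ i', x i' := by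
    rw [hc0, ← Finset.add_sum_erase univ x (mem_univ i)]; ring
  have hrw : ∀ t, Bn d n (m + 1) g (Function.update x i t) =
      ∑ j ∈ S₁, (g j * Cc d (m + 1) j * P j) *
        (t ^ j i * (c0 - t) ^ (m + 1 - ∑ i', j i')) := by
    intro t
    unfold Bn
    refine Finset.sum_congr rfl fun j hj => ?_
    have hprod : ∏ i', (Function.update x i t) i' ^ j i' =
        t ^ j i * ∏ i' ∈ univ.erase i, x i' ^ j i' := by
      rw [← Finset.mul_prod_erase univ (fun i' => (Function.update x i t) i' ^ j i')
        (mem_univ i), Function.update_self]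
      congr 1
      exact Finset.prod_congr rfl fun i' hi' => by
        rw [Function.update_of_ne (Finset.ne_of_mem_erase hi')]
    have hsum : ∑ i', Function.update x i t i' = t + ∑ i' ∈ univ.erase i, x i' := by
      rw [Finset.sum_update_of_mem (mem_univ i), Finset.erase_eq]
    rw [hprod, hsum]
    have hb : (1 : ℝ) - (t + ∑ i' ∈ univ.erase i, x i') = c0 - t := by rw [hc0]; ring
    rw [hb]
    show g j * Cc d (m + 1) j * _ * _ = _
    rw [hP]
    ring
  have key : ∀ j ∈ S₁, HasDerivAt
      (fun t => (g j * Cc d (m + 1) j * P j) * (t ^ j i * (c0 - t) ^ (m + 1 - ∑ i', j i')))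
      ((g j * Cc d (m + 1) j * P j) *
        ((j i : ℝ) * (x i) ^ (j i - 1) * (c0 - x i) ^ (m + 1 - ∑ i', j i')
          - ((m + 1 - ∑ i', j i' : ℕ) : ℝ) * (c0 - x i) ^ (m + 1 - ∑ i', j i' - 1)
            * (x i) ^ j i)) (x i) :=
    fun j _ => (hasDerivAt_aux (j i) (m + 1 - ∑ i', j i') c0 (x i)).const_mul _
  have hsum := HasDerivAt.fun_sum key
  have heq1 : (fun t => Bn d n (m + 1) g (Function.update x i t)) =
      fun t => ∑ j ∈ S₁, (g j * Cc d (m + 1) j * P j) *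
        (t ^ j i * (c0 - t) ^ (m + 1 - ∑ i', j i')) := funext hrw
  rw [heq1]
  refine hsum.congr_deriv (Eq.symm ?_)
  -- now prove the value equality
  have hBn : ((m : ℝ) + 1) * Bn d n m (natDiff i g) x =
      (∑ j ∈ S₀, ((m : ℝ) + 1) * (g (Function.update j i (j i + 1)) * Cc d m j *
          (∏ i', x i' ^ j i') * (1 - ∑ i', x i') ^ (m - ∑ i', j i')))
        - ∑ j ∈ S₀, ((m : ℝ) + 1) * (g j * Cc d m j *
          (∏ i', x i' ^ j i') * (1 - ∑ i', x i') ^ (m - ∑ i', j i')) := by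
    rw [← Finset.sum_sub_distrib]
    unfold Bn natDiff
    rw [Finset.mul_sum]
    refine Finset.sum_congr rfl fun j hj => ?_
    show ((m : ℝ) + 1) * ((_ - _) * _ * _ * _) = _
    unfold Cc
    ring
  rw [hBn]
  simp_rw [mul_sub]
  rw [Finset.sum_sub_distrib]
  have hsub : S₀ ⊆ S₁ := by
    intro j hj
    rw [hS₀, mem_filter] at hj
    rw [hS₁, mem_filter]
    exact ⟨hj.1, by omega⟩
  congr 1
  -- Sum A : reindexing
  · have hfilter : ∑ j ∈ S₁, (g j * Cc d (m + 1) j * P j) *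
        ((j i : ℝ) * (x i) ^ (j i - 1) * (c0 - x i) ^ (m + 1 - ∑ i', j i')) =
      ∑ j ∈ S₁.filter (fun j => j i ≠ 0), (g j * Cc d (m + 1) j * P j) *
        ((j i : ℝ) * (x i) ^ (j i - 1) * (c0 - x i) ^ (m + 1 - ∑ i', j i')) := by
      refine (Finset.sum_filter_of_ne ?_).symm
      intro j hj hne h0
      apply hne
      rw [h0]
      simp
    have hbij : ∑ j ∈ S₁.filter (fun j => j i ≠ 0), (g j * Cc d (m + 1) j * P j) *
        ((j i : ℝ) * (x i) ^ (j i - 1) * (c0 - x i) ^ (m + 1 - ∑ i', j i')) =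
      ∑ j ∈ S₀, ((m : ℝ) + 1) * (g (Function.update j i (j i + 1)) * Cc d m j *
          (∏ i', x i' ^ j i') * (1 - ∑ i', x i') ^ (m - ∑ i', j i')) := by
      refine Finset.sum_nbij' (fun j => Function.update j i (j i - 1))
        (fun j => Function.update j i (j i + 1)) ?_ ?_ ?_ ?_ ?_
      · intro j hj
        simp only [hS₁, mem_filter, Fintype.mem_piFinset, mem_range] at hj
        obtain ⟨⟨h1, h2⟩, h3⟩ := hj
        simp only [hS₀, mem_filter, Fintype.mem_piFinset, mem_range]
        refine ⟨fun i' => ?_, ?_⟩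
        · rcases eq_or_ne i' i with rfl | hne
          · rw [Function.update_self]; have := h1 i'; omega
          · rw [Function.update_of_ne hne]; exact h1 i'
        · rw [sum_update_nat]
          have := sum_eq_add_erase j i
          omega
      · intro j hj
        simp only [hS₀, mem_filter, Fintype.mem_piFinset, mem_range] at hj
        obtain ⟨h1, h2⟩ := hj
        have hji : j i ≤ ∑ i', j i' :=
          Finset.single_le_sum (fun i' _ => Nat.zero_le _) (mem_univ i)
        simp only [hS₁, mem_filter, Fintype.mem_piFinset, mem_range]
        refine ⟨⟨fun i' => ?_, ?_⟩, ?_⟩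
        · rcases eq_or_ne i' i with rfl | hne
          · rw [Function.update_self]; omega
          · rw [Function.update_of_ne hne]; exact h1 i'
        · rw [sum_update_nat]
          have := sum_eq_add_erase j i
          omega
        · rw [Function.update_self]; omega
      · intro j hj
        simp only [mem_filter] at hj
        funext i'
        rcases eq_or_ne i' i with rfl | hne
        · simp only [Function.update_self]
          have : j i' ≠ 0 := hj.2
          omega
        · simp [Function.update_of_ne hne]
      · intro j hj
        funext i'
        rcases eq_or_ne i' i with rfl | hne
        · simp only [Function.update_self]; omega
        · simp [Function.update_of_ne hne]
      · intro j hj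
        simp only [mem_filter, hS₁] at hj
        obtain ⟨⟨hj1, hjle⟩, hj0⟩ := hj
        have hs1 : 1 ≤ ∑ i', j i' := by
          have : j i ≤ ∑ i', j i' :=
            Finset.single_le_sum (fun i' _ => Nat.zero_le _) (mem_univ i)
          omega
        have hpsiphi : Function.update (Function.update j i (j i - 1)) i
            (Function.update j i (j i - 1) i + 1) = j := by
          funext i'
          rcases eq_or_ne i' i with rfl | hne
          · simp only [Function.update_self]; omega
          · simp [Function.update_of_ne hne]
        have hPi : ∏ i', x i' ^ (Function.update j i (j i - 1) i') =
            x i ^ (j i - 1) * ∏ i' ∈ univ.erase i, x i' ^ j i' :=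
          prod_comp_update (fun i' v => x i' ^ v) j i (j i - 1)
        have hSg : ∑ i', Function.update j i (j i - 1) i' = ∑ i', j i' - 1 := by
          rw [sum_update_nat]
          have := sum_eq_add_erase j i
          omega
        have hexp : m - (∑ i', j i' - 1) = m + 1 - ∑ i', j i' := by omega
        have hCc := Cc_pred_coord j i hj0 hjle
        rw [hpsiphi, hPi, hSg, hexp, hc0x.symm, hP]
        linear_combination
          (g j * (x i ^ (j i - 1)) * (∏ i' ∈ univ.erase i, x i' ^ j i') *
            (c0 - x i) ^ (m + 1 - ∑ i', j i')) * hCc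
    rw [hfilter, hbij]
  -- Sum B : restriction
  · have hvan : ∀ j ∈ S₁, j ∉ S₀ → (g j * Cc d (m + 1) j * P j) *
        (((m + 1 - ∑ i', j i' : ℕ) : ℝ) * (c0 - x i) ^ (m + 1 - ∑ i', j i' - 1)
          * (x i) ^ j i) = 0 := by
      intro j hj1 hj0
      simp only [hS₁, mem_filter] at hj1
      simp only [hS₀, mem_filter] at hj0
      have : ∑ i', j i' = m + 1 := by
        rcases hj1 with ⟨hj1, hle⟩
        by_contra h
        exact hj0 ⟨hj1, by omega⟩
      rw [this]
      simp
    rw [← Finset.sum_subset hsub hvan]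
    refine Finset.sum_congr rfl fun j hj => ?_
    simp only [hS₀, mem_filter] at hj
    obtain ⟨hj1, hjle⟩ := hj
    have hexp : m + 1 - ∑ i', j i' - 1 = m - ∑ i', j i' := by omega
    have hCc := Cc_succ_right (d := d) j hjle
    have hPi : ∏ i', x i' ^ j i' = x i ^ j i * ∏ i' ∈ univ.erase i, x i' ^ j i' :=
      (Finset.mul_prod_erase univ (fun i' => x i' ^ j i') (mem_univ i)).symm
    rw [hexp, hc0x, hPi, hP]
    linear_combination
      (-(g j * (x i ^ j i) * (∏ i' ∈ univ.erase i, x i' ^ j i') *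
        (1 - ∑ i', x i') ^ (m - ∑ i', j i'))) * hCc

lemma partialDeriv_Bn (d n : ℕ) (i : Fin d) (m : ℕ) (hmn : m + 1 ≤ n) (c : ℝ)
    (g : (Fin d → ℕ) → ℝ) :
    partialDeriv' i (fun x => c * Bn d n (m + 1) g x) =
      fun x => (c * ((m : ℝ) + 1)) * Bn d n m (natDiff i g) x := by
  funext x
  have h := (hasDerivAt_Bn d n i m hmn g x).const_mul c
  show deriv (fun t => c * Bn d n (m + 1) g (Function.update x i t)) (x i) = _
  rw [h.deriv]
  ring

lemma iterate_partialDeriv_Bn (d n : ℕ) (i : Fin d) (r : ℕ) :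
    ∀ (m : ℕ) (c : ℝ) (g : (Fin d → ℕ) → ℝ), r ≤ m → m ≤ n →
    (partialDeriv' i)^[r] (fun x => c * Bn d n m g x) =
      fun x => (c * ((m.factorial : ℝ) / ((m - r).factorial : ℝ))) *
        Bn d n (m - r) ((natDiff i)^[r] g) x := by
  induction r with
  | zero =>
    intro m c g _ _
    funext x
    rw [Function.iterate_zero_apply, Nat.sub_zero, Function.iterate_zero_apply,
      div_self (Nat.cast_ne_zero.mpr (Nat.factorial_pos m).ne'), mul_one]
  | succ r ih =>
    intro m c g hr hm
    obtain ⟨m', rfl⟩ : ∃ m', m = m' + 1 := ⟨m - 1, by omega⟩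
    rw [Function.iterate_succ_apply, partialDeriv_Bn d n i m' hm c g,
      ih m' (c * ((m' : ℝ) + 1)) (natDiff i g) (by omega) (by omega)]
    funext x
    rw [← Function.iterate_succ_apply]
    have h1 : m' + 1 - (r + 1) = m' - r := by omega
    rw [h1]
    have h2 : ((m' + 1).factorial : ℝ) = ((m' : ℝ) + 1) * (m'.factorial : ℝ) := by
      rw [Nat.factorial_succ]; push_cast; ring
    rw [h2]
    ring

lemma foldr_partialDeriv_Bn (d n : ℕ) (k : Fin d → ℕ) :
    ∀ (l : List (Fin d)) (m : ℕ) (c : ℝ) (g : (Fin d → ℕ) → ℝ),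
      (l.map k).sum ≤ m → m ≤ n →
    l.foldr (fun i h => (partialDeriv' i)^[k i] h) (fun x => c * Bn d n m g x) =
      fun x => (c * ((m.factorial : ℝ) / ((m - (l.map k).sum).factorial : ℝ))) *
        Bn d n (m - (l.map k).sum) (l.foldr (fun i h => (natDiff i)^[k i] h) g) x := by
  intro l
  induction l with
  | nil =>
    intro m c g _ _
    simp only [List.foldr_nil, List.map_nil, List.sum_nil, Nat.sub_zero]
    funext x
    rw [div_self (Nat.cast_ne_zero.mpr (Nat.factorial_pos m).ne'), mul_one]
  | cons i l ih =>
    intro m c g h1 h2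
    simp only [List.map_cons, List.sum_cons] at h1 ⊢
    rw [List.foldr_cons, ih m c g (by omega) h2,
      iterate_partialDeriv_Bn d n i (k i) (m - (l.map k).sum) _ _ (by omega) (by omega)]
    funext x
    have h3 : m - (l.map k).sum - k i = m - (k i + (l.map k).sum) := by omega
    rw [h3, List.foldr_cons]
    have h4 : (((m - (l.map k).sum).factorial : ℕ) : ℝ) ≠ 0 :=
      Nat.cast_ne_zero.mpr (Nat.factorial_pos _).ne'
    field_simp

lemma coordFwdDiff_lattice {d : ℕ} (n : ℕ) (hn : n ≠ 0) (i : Fin d)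
    (F : (Fin d → ℝ) → ℝ) :
    (fun j : Fin d → ℕ => coordFwdDiff i (1 / (n : ℝ)) F (fun i' => (j i' : ℝ) / n)) =
      natDiff i (fun j => F (fun i' => (j i' : ℝ) / n)) := by
  funext j
  show F _ - F _ = F _ - F _
  congr 2
  funext i'
  rcases eq_or_ne i' i with rfl | hne
  · simp only [Function.update_self]
    push_cast
    rw [add_div]
  · simp [Function.update_of_ne hne]

lemma iterate_coordFwdDiff_lattice {d : ℕ} (n : ℕ) (hn : n ≠ 0) (i : Fin d) (r : ℕ) :
    ∀ F : (Fin d → ℝ) → ℝ,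
    (fun j : Fin d → ℕ => ((coordFwdDiff i (1 / (n : ℝ)))^[r] F) (fun i' => (j i' : ℝ) / n)) =
      (natDiff i)^[r] (fun j => F (fun i' => (j i' : ℝ) / n)) := by
  induction r with
  | zero => intro F; rfl
  | succ r ih =>
    intro F
    rw [Function.iterate_succ_apply, ih (coordFwdDiff i (1 / (n : ℝ)) F),
      coordFwdDiff_lattice n hn i F, ← Function.iterate_succ_apply]

lemma foldr_fwdDiff_lattice {d : ℕ} (n : ℕ) (hn : n ≠ 0) (k : Fin d → ℕ) :
    ∀ (l : List (Fin d)) (F : (Fin d → ℝ) → ℝ),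
    (fun j : Fin d → ℕ =>
        (l.foldr (fun i h => (coordFwdDiff i (1 / (n : ℝ)))^[k i] h) F)
          (fun i' => (j i' : ℝ) / n)) =
      l.foldr (fun i h => (natDiff i)^[k i] h) (fun j => F (fun i' => (j i' : ℝ) / n)) := by
  intro l
  induction l with
  | nil => intro F; rfl
  | cons i l ih =>
    intro F
    rw [List.foldr_cons, List.foldr_cons, ← ih F,
      iterate_coordFwdDiff_lattice n hn i (k i)]

/-- For `d ≥ 1`, `n ≥ 1`, a multi-index `k` with `|k| ≤ n`, and any `f : ℝ^d → ℝ`,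
`∂^{|k|}B_n(f;x)/∂x^k = (n!/(n-|k|)!) ∑_{|j| ≤ n-|k|} Δ^k f(j/n) ·
  ((n-|k|)!/(j_1!⋯j_d!(n-|k|-|j|)!)) x_1^{j_1}⋯x_d^{j_d} (1-‖x‖)^{n-|k|-|j|}`. -/
theorem simplexBernstein_mixedPartial_eq (d n : ℕ) (hd : 1 ≤ d) (hn : 1 ≤ n)
    (k : Fin d → ℕ) (hk : ∑ i, k i ≤ n) (f : (Fin d → ℝ) → ℝ) (x : Fin d → ℝ) :
    mixedPartial k (simplexBernstein d n f) x =
      (n.factorial : ℝ) / ((n - ∑ i, k i).factorial : ℝ) *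
        ∑ j ∈ (Fintype.piFinset (fun _ : Fin d => Finset.range (n + 1))).filter
            (fun j => ∑ i, j i ≤ n - ∑ i, k i),
          multiFwdDiffN n k f (fun i => (j i : ℝ) / n) *
            (((n - ∑ i, k i).factorial : ℝ) /
              (((∏ i, (j i).factorial) * (n - ∑ i, k i - ∑ i, j i).factorial : ℕ) : ℝ)) *
            (∏ i, x i ^ (j i)) * (1 - ∑ i, x i) ^ (n - ∑ i, k i - ∑ i, j i) := by
  classical
  have hn0 : n ≠ 0 := by omega
  set g0 : (Fin d → ℕ) → ℝ := fun j => f (fun i => (j i : ℝ) / n) with hg0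
  have hsum : ((List.finRange d).map k).sum = ∑ i, k i := by
    rw [Fin.sum_univ_def]
  have hinit : simplexBernstein d n f = fun x => (1 : ℝ) * Bn d n n g0 x := by
    funext y
    rw [one_mul]
    rfl
  have hmain := foldr_partialDeriv_Bn d n k (List.finRange d) n 1 g0
    (by rw [hsum]; exact hk) le_rfl
  have hlatt := foldr_fwdDiff_lattice n hn0 k (List.finRange d) f
  have hMP : mixedPartial k (simplexBernstein d n f) x =
      ((n.factorial : ℝ) / ((n - ∑ i, k i).factorial : ℝ)) *
        Bn d n (n - ∑ i, k i)
          ((List.finRange d).foldr (fun i h => (natDiff i)^[k i] h) g0) x := by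
    show ((List.finRange d).foldr (fun i h => (partialDeriv' i)^[k i] h)
        (simplexBernstein d n f)) x = _
    rw [hinit, hmain, hsum, one_mul]
  rw [hMP]
  congr 1
  unfold Bn
  refine Finset.sum_congr rfl fun j hj => ?_
  have hG : ((List.finRange d).foldr (fun i h => (natDiff i)^[k i] h) g0) j =
      multiFwdDiffN n k f (fun i => (j i : ℝ) / n) := by
    rw [hg0, ← hlatt]
    rfl
  rw [hG]
end

section
/- Let d ≥ 1, let k = (k_1,…,k_d) be a multi-index, and let f : ℝ^d → ℝ possess a continuous mixed partial derivative ∂^{|k|}f/∂x_1^{k_1}⋯∂x_d^{k_d}. Then n^{|k|} · Δ^k f(x) converges to ∂^{|k|}f(x)/∂x_1^{k_1}⋯∂x_d^{k_d} as n → ∞, uniformly for x in the cube K^d = [0,1]^d, where Δ^k is the composition of the k_i-fold iterated forward differences with step 1/n in each coordinate. -/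
noncomputable def listFwdDiff {d : ℕ} (z : ℝ) (l : List (Fin d)) (g : (Fin d → ℝ) → ℝ) :
    (Fin d → ℝ) → ℝ :=
  l.foldr (fun i h => coordFwdDiff i z h) g

lemma coordFwdDiff_comm {d : ℕ} (i j : Fin d) (z : ℝ) (f : (Fin d → ℝ) → ℝ) :
    coordFwdDiff i z (coordFwdDiff j z f) = coordFwdDiff j z (coordFwdDiff i z f) := by
  by_cases hij : i = j
  · subst hij; rfl
  · funext x
    simp only [coordFwdDiff]
    rw [Function.update_of_ne hij, Function.update_of_ne (Ne.symm hij),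
      Function.update_comm hij]
    ring

lemma coordFwdDiff_listFwdDiff {d : ℕ} (i : Fin d) (z : ℝ) (l : List (Fin d))
    (f : (Fin d → ℝ) → ℝ) :
    coordFwdDiff i z (listFwdDiff z l f) = listFwdDiff z l (coordFwdDiff i z f) := by
  induction l generalizing f with
  | nil => rfl
  | cons j l ih =>
    show coordFwdDiff i z (coordFwdDiff j z (listFwdDiff z l f)) = _
    rw [coordFwdDiff_comm, ih]
    rfl

lemma IsPartialAlong.translate {d : ℕ} (i : Fin d) (z : ℝ) :
    ∀ (l : List (Fin d)) (f h : (Fin d → ℝ) → ℝ), IsPartialAlong l f h →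
      IsPartialAlong l (fun x => f (Function.update x i (x i + z)))
        (fun x => h (Function.update x i (x i + z)))
  | [], f, h, hg => by
    simp only [IsPartialAlong] at hg ⊢
    subst hg; rfl
  | (j :: l), f, h, hg => by
    obtain ⟨h', hh', hder⟩ := hg
    refine ⟨fun x => h' (Function.update x i (x i + z)),
      IsPartialAlong.translate i z l f h' hh', ?_⟩
    intro x
    by_cases hij : j = i
    · subst hij
      have h1 := hder (Function.update x j (x j + z))
      simp only [Function.update_idem, Function.update_self] at h1
      have h2 := h1.comp (x j) ((hasDerivAt_id (x j)).add_const z)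
      simp only [mul_one] at h2
      refine h2.congr_of_eventuallyEq (Filter.Eventually.of_forall fun t => ?_)
      simp [Function.update_idem]
    · have h1 := hder (Function.update x i (x i + z))
      rw [Function.update_of_ne hij] at h1
      have hfun : (fun t => h' (Function.update (Function.update x j t) i
          ((Function.update x j t) i + z)))
          = fun t => h' (Function.update (Function.update x i (x i + z)) j t) := by
        funext t
        congr 1
        rw [Function.update_of_ne (fun hc => hij hc.symm), Function.update_comm hij]
      show HasDerivAt (fun t => h' (Function.update (Function.update x j t) i
          ((Function.update x j t) i + z))) (h (Function.update x i (x i + z))) (x j)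
      rw [hfun]
      exact h1

lemma IsPartialAlong.sub {d : ℕ} :
    ∀ (l : List (Fin d)) (f₁ h₁ f₂ h₂ : (Fin d → ℝ) → ℝ),
      IsPartialAlong l f₁ h₁ → IsPartialAlong l f₂ h₂ →
      IsPartialAlong l (fun x => f₁ x - f₂ x) (fun x => h₁ x - h₂ x)
  | [], f₁, h₁, f₂, h₂, hg₁, hg₂ => by
    simp only [IsPartialAlong] at hg₁ hg₂ ⊢
    subst hg₁; subst hg₂; rfl
  | (j :: l), f₁, h₁, f₂, h₂, hg₁, hg₂ => by
    obtain ⟨p₁, hp₁, hd₁⟩ := hg₁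
    obtain ⟨p₂, hp₂, hd₂⟩ := hg₂
    exact ⟨fun x => p₁ x - p₂ x, IsPartialAlong.sub l f₁ p₁ f₂ p₂ hp₁ hp₂,
      fun x => (hd₁ x).sub (hd₂ x)⟩

lemma IsPartialAlong.coordFwdDiff {d : ℕ} (i : Fin d) (z : ℝ) (l : List (Fin d))
    (f h : (Fin d → ℝ) → ℝ) (hg : IsPartialAlong l f h) :
    IsPartialAlong l (coordFwdDiff i z f) (coordFwdDiff i z h) :=
  IsPartialAlong.sub l _ _ _ _ (hg.translate i z l f h) hg

lemma key_mvt {d : ℕ} (z : ℝ) (hz : 0 < z) :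
    ∀ (l : List (Fin d)) (f g : (Fin d → ℝ) → ℝ), IsPartialAlong l f g →
    ∀ x : Fin d → ℝ, ∃ w : Fin d → ℝ,
      (∀ j, x j ≤ w j ∧ w j ≤ x j + l.count j * z) ∧
      listFwdDiff z l f x = z ^ l.length * g w
  | [], f, g, hg, x => by
    simp only [IsPartialAlong] at hg
    subst hg
    exact ⟨x, fun j => ⟨le_refl _, by simp⟩, by simp [listFwdDiff]⟩
  | (i :: l), f, g, hg, x => by
    obtain ⟨h, hh, hder⟩ := hg
    obtain ⟨w, hw, heq⟩ := key_mvt z hz l (coordFwdDiff i z f) (coordFwdDiff i z h)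
      (hh.coordFwdDiff i z l f h) x
    -- derivative of t ↦ h (update w i t)
    have hφ : ∀ t : ℝ, HasDerivAt (fun s => h (Function.update w i s))
        (g (Function.update w i t)) t := by
      intro t
      have h1 := hder (Function.update w i t)
      simpa only [Function.update_idem, Function.update_self] using h1
    have hcont : Continuous (fun s => h (Function.update w i s)) :=
      continuous_iff_continuousAt.2 fun t => (hφ t).continuousAt
    obtain ⟨ξ, hξmem, hξ⟩ := exists_hasDerivAt_eq_slope (fun s => h (Function.update w i s))
      (fun t => g (Function.update w i t)) (by linarith : w i < w i + z)
      hcont.continuousOn (fun t _ => hφ t)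
    refine ⟨Function.update w i ξ, ?_, ?_⟩
    · intro j
      by_cases hji : j = i
      · subst hji
        rw [Function.update_self]
        have h1 := (hw j).1
        have h2 := (hw j).2
        have hc : (List.count j (j :: l) : ℝ) = List.count j l + 1 := by
          rw [List.count_cons]
          simp
        constructor
        · linarith [hξmem.1]
        · rw [hc]; nlinarith [hξmem.2]
      · rw [Function.update_of_ne hji]
        have hc : List.count j (i :: l) = List.count j l := by
          have hij' : ¬ i = j := fun hc => hji hc.symm
          simp [List.count_cons, hij']
        rw [hc]
        exact hw j
    · have hstep : listFwdDiff z (i :: l) f x = listFwdDiff z l (coordFwdDiff i z f) x := by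
        show coordFwdDiff i z (listFwdDiff z l f) x = _
        rw [coordFwdDiff_listFwdDiff]
      rw [hstep, heq]
      have hval : coordFwdDiff i z h w = z * g (Function.update w i ξ) := by
        have : g (Function.update w i ξ)
            = (h (Function.update w i (w i + z)) - h (Function.update w i (w i)))
              / (w i + z - w i) := hξ
        rw [Function.update_eq_self] at this
        rw [add_sub_cancel_left] at this
        show h (Function.update w i (w i + z)) - h w = z * g (Function.update w i ξ)
        rw [this]
        field_simp
      rw [hval]
      simp only [List.length_cons, pow_succ]
      ring

lemma foldr_replicate_s15 {d : ℕ} (z : ℝ) (i : Fin d) (m : ℕ) (g : (Fin d → ℝ) → ℝ) :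
    (List.replicate m i).foldr (fun j h => coordFwdDiff j z h) g = (coordFwdDiff i z)^[m] g := by
  induction m with
  | zero => rfl
  | succ m ih =>
    rw [List.replicate_succ, List.foldr_cons, ih, Function.iterate_succ_apply']

lemma multiFwdDiffN_eq_listFwdDiff {d : ℕ} (n : ℕ) (k : Fin d → ℕ) (f : (Fin d → ℝ) → ℝ) :
    multiFwdDiffN n k f = listFwdDiff (1 / (n : ℝ)) (multiIndexList k) f := by
  unfold multiFwdDiffN multiIndexList listFwdDiff
  generalize (List.finRange d) = L
  induction L with
  | nil => rfl
  | cons a L ih =>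
    rw [List.flatMap_cons, List.foldr_append, List.foldr_cons, ih, foldr_replicate_s15]

lemma multiIndexList_length {d : ℕ} (k : Fin d → ℕ) :
    (multiIndexList k).length = ∑ i, k i := by
  rw [multiIndexList, List.length_flatMap, Fin.sum_univ_def]
  simp [Function.comp_def]

/-- If `d ≥ 1`, `k` is a multi-index and `f : ℝ^d → ℝ` possesses a continuous mixed
partial derivative `g = ∂^{|k|}f/∂x_1^{k_1}⋯∂x_d^{k_d}`, then
`n^{|k|} Δ^k f(x) → g(x)` as `n → ∞`, uniformly on the cube `K^d = [0,1]^d`. -/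
theorem multiFwdDiffN_tendstoUniformlyOn_cube (d : ℕ) (hd : 1 ≤ d) (k : Fin d → ℕ)
    (f g : (Fin d → ℝ) → ℝ) (hg : IsPartialAlong (multiIndexList k) f g)
    (hgc : Continuous g) :
    TendstoUniformlyOn
      (fun (n : ℕ) x => (n : ℝ) ^ (∑ i, k i) * multiFwdDiffN n k f x) g
      Filter.atTop (Set.Icc (0 : Fin d → ℝ) 1) := by
  set M : ℕ := ∑ i, k i with hM
  -- uniform continuity on a big compact box
  set C : Set (Fin d → ℝ) := Set.Icc 0 (fun _ => 1 + M) with hC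
  have hCc : IsCompact C := isCompact_Icc
  have hguc : UniformContinuousOn g C := hCc.uniformContinuousOn_of_continuous
    hgc.continuousOn
  rw [Metric.tendstoUniformlyOn_iff]
  intro ε hε
  rw [Metric.uniformContinuousOn_iff] at hguc
  obtain ⟨δ, hδ, hgδ⟩ := hguc ε hε
  have hten : Filter.Tendsto (fun n : ℕ => (M : ℝ) / n) Filter.atTop (nhds 0) :=
    tendsto_const_div_atTop_nhds_zero_nat (M : ℝ)
  have hev : ∀ᶠ n : ℕ in Filter.atTop, (M : ℝ) / n < δ := by
    exact hten.eventually (eventually_lt_nhds hδ)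
  filter_upwards [hev, Filter.eventually_ge_atTop 1] with n hn hn1
  intro x hx
  have hnpos : (0 : ℝ) < n := by exact_mod_cast hn1
  have hz : (0 : ℝ) < 1 / n := by positivity
  obtain ⟨w, hw, heq⟩ := key_mvt (1 / (n : ℝ)) hz (multiIndexList k) f g hg x
  have hcount : ∀ j, ((multiIndexList k).count j : ℝ) * (1 / n) ≤ M / n := by
    intro j
    have h1 : (multiIndexList k).count j ≤ M := by
      rw [hM, ← multiIndexList_length k]
      exact List.count_le_length
    have h1' : ((multiIndexList k).count j : ℝ) ≤ M := by exact_mod_cast h1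
    calc ((multiIndexList k).count j : ℝ) * (1 / n) ≤ M * (1 / n) :=
          mul_le_mul_of_nonneg_right h1' hz.le
      _ = M / n := by ring
  have hwle : ∀ j, x j ≤ w j ∧ w j ≤ x j + M / n := by
    intro j
    exact ⟨(hw j).1, le_trans (hw j).2 (by linarith [hcount j])⟩
  have hFeq : (n : ℝ) ^ M * multiFwdDiffN n k f x = g w := by
    rw [multiFwdDiffN_eq_listFwdDiff, heq, multiIndexList_length, ← hM]
    rw [one_div, inv_pow, ← mul_assoc, mul_inv_cancel₀ (by positivity), one_mul]
  rw [hFeq]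
  have hMd : (0 : ℝ) ≤ (M : ℝ) / n := by positivity
  have hxC : x ∈ C := by
    constructor
    · exact hx.1
    · intro j
      have := hx.2 j
      simp only [Pi.one_apply] at this
      have : x j ≤ 1 + M := by
        have hM0 : (0:ℝ) ≤ M := Nat.cast_nonneg _
        linarith
      exact this
  have hwC : w ∈ C := by
    constructor
    · intro j
      exact le_trans (hx.1 j) (hwle j).1
    · intro j
      have h1 := (hwle j).2
      have h2 : x j ≤ 1 := hx.2 j
      have h3 : (M : ℝ) / n ≤ M :=
        div_le_self (Nat.cast_nonneg M) (by exact_mod_cast hn1)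
      show w j ≤ 1 + M
      linarith
  have hdist : dist x w ≤ (M : ℝ) / n := by
    rw [dist_pi_le_iff hMd]
    intro j
    rw [Real.dist_eq, abs_le]
    constructor
    · linarith [(hwle j).1, (hwle j).2]
    · linarith [(hwle j).1]
  have : dist x w < δ := lt_of_le_of_lt hdist hn
  exact hgδ x hxC w hwC this
end
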